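/- arXiv:1912.07147 — 3 statements merged into one kernel-verified Lean document; each statement's English description precedes it below -/
import Mathlib

section
/- For every n ≥ 6, the graph G on n vertices obtained from a cycle v₁v₂⋯v_{n−2}v₁ on n − 2 vertices by adding a new vertex x joined to v₁ and v₂ and a new vertex y joined to v₂ and v₃ is 2-connected, has exactly n + 2 edges, and satisfies rc₂(G) ≤ n − 2. -/
open SimpleGraph


/-- A walk is rainbow (w.r.t. an edge-colouring `col`) if its edges receive
pairwise distinct colours. -/
def IsRainbowWalk {V α : Type*} {G : SimpleGraph V} {u v : V} (col : Sym2 V → α)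
    (p : G.Walk u v) : Prop :=
  (p.edges.map col).Nodup

/-- An edge-colouring is rainbow 2-connected if every two distinct vertices are
connected by two internally vertex-disjoint rainbow paths. -/
def RainbowTwoConnectedColouring {V α : Type*} (G : SimpleGraph V) (col : Sym2 V → α) : Prop :=
  ∀ u v : V, u ≠ v → ∃ p q : G.Walk u v, p.IsPath ∧ q.IsPath ∧ p ≠ q ∧
    IsRainbowWalk col p ∧ IsRainbowWalk col q ∧
    ∀ w : V, w ∈ p.support → w ∈ q.support → w = u ∨ w = v

/-- The rainbow 2-connection number: the least number of colours in a rainbow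
2-connected colouring. -/
noncomputable def rc2 {V : Type*} (G : SimpleGraph V) : ℕ :=
  sInf {r : ℕ | ∃ col : Sym2 V → Fin r, RainbowTwoConnectedColouring G col}

/-- A graph is 2-connected if it has at least 3 vertices and deleting any single
vertex leaves a connected graph. -/
def TwoConnected {V : Type*} [Fintype V] (G : SimpleGraph V) : Prop :=
  3 ≤ Fintype.card V ∧ ∀ v : V, (G.induce ({v}ᶜ : Set V)).Connected

/-- `t2 n r`: minimum number of edges of a 2-connected graph on `n` vertices
with rainbow 2-connection number at most `r`. -/
noncomputable def t2 (n r : ℕ) : ℕ :=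
  sInf {m : ℕ | ∃ G : SimpleGraph (Fin n), TwoConnected G ∧ rc2 G ≤ r ∧ G.edgeSet.ncard = m}

/-- `s2 n r`: maximum number of edges of a 2-connected graph on `n` vertices
with rainbow 2-connection number at least `r`. -/
noncomputable def s2 (n r : ℕ) : ℕ :=
  sSup {m : ℕ | ∃ G : SimpleGraph (Fin n), TwoConnected G ∧ r ≤ rc2 G ∧ G.edgeSet.ncard = m}

section AuxLemmas
variable {V : Type*} {G : SimpleGraph V}

lemma arc_exists (f : ℕ → V) (hadj : ∀ i, G.Adj (f i) (f (i+1))) (a k : ℕ) :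
    ∃ p : G.Walk (f a) (f (a+k)),
      p.support = (List.range (k+1)).map (fun j => f (a+j)) ∧
      p.edges = (List.range k).map (fun j => s(f (a+j), f (a+j+1))) := by
  induction k with
  | zero => exact ⟨Walk.nil, by simp [List.range_succ], by simp⟩
  | succ k ih =>
    obtain ⟨p, hs, he⟩ := ih
    refine ⟨p.append (Walk.cons (hadj (a+k)) Walk.nil), ?_, ?_⟩
    · rw [Walk.support_append, hs, List.range_succ (n := k+1)]
      simp only [List.map_append, Walk.support_cons, Walk.support_nil, List.tail_cons,
        List.map_cons, List.map_nil]
      exact congrArg (_ ++ [·]) (congrArg f (by omega))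
    · rw [Walk.edges_append, he, List.range_succ (n := k)]
      simp

lemma mod_small {m t : ℕ} (hm : 0 < m) (h : t < 2*m) :
    t % m = if t < m then t else t - m := by
  split_ifs with h1
  · exact Nat.mod_eq_of_lt h1
  · rw [Nat.mod_eq_sub_mod (by omega), Nat.mod_eq_of_lt (by omega)]

lemma modinj {m s t : ℕ} (h : s % m = t % m) (hst : s ≤ t) (hlt : t < s + m) : s = t := by
  have h2 := (Nat.modEq_iff_dvd' hst).mp h
  have := Nat.eq_zero_of_dvd_of_lt h2 (by omega)
  omega

lemma reach_chain (s : Set V) (f : ℕ → V) (a k : ℕ)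
    (hmem : ∀ t, t ≤ k → f (a+t) ∈ s)
    (hadj : ∀ t, t < k → G.Adj (f (a+t)) (f (a+t+1))) :
    (G.induce s).Reachable ⟨f a, hmem 0 (Nat.zero_le k)⟩ ⟨f (a+k), hmem k le_rfl⟩ := by
  induction k with
  | zero => exact Reachable.refl _
  | succ k ih =>
    have h1 := ih (fun t ht => hmem t (by omega)) (fun t ht => hadj t (by omega))
    exact h1.trans (SimpleGraph.Adj.reachable (by simpa [Nat.add_assoc] using hadj k (by omega)))

lemma walk_ne_of_internal {u w : V} (p q : G.Walk u w)
    (hdisj : ∀ z, z ∈ p.support → z ∈ q.support → z = u ∨ z = w)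
    (hz : ∃ z, (z ∈ p.support ∨ z ∈ q.support) ∧ z ≠ u ∧ z ≠ w) : p ≠ q := by
  rintro rfl
  obtain ⟨z, hz1, hz2, hz3⟩ := hz
  rcases hz1 with h | h <;> rcases hdisj z h h with h' | h' <;> tauto

end AuxLemmas

/-- For n ≥ 6, the graph obtained from a cycle v₀v₁⋯v₍n₋₃₎v₀ on
n − 2 vertices by adding a new vertex x joined to v₀ and v₁ and a new vertex y
joined to v₁ and v₂ is 2-connected, has n + 2 edges, and satisfies rc₂ ≤ n − 2. -/
theorem stmt10 (n : ℕ) (hn : 6 ≤ n) {V : Type*} [Fintype V] (hcard : Fintype.card V = n)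
    (x y : V) (hxy : x ≠ y) (v : ℕ → V)
    (hvinj : ∀ i j, i ≤ n - 3 → j ≤ n - 3 → v i = v j → i = j)
    (hxv : ∀ i, i ≤ n - 3 → x ≠ v i) (hyv : ∀ i, i ≤ n - 3 → y ≠ v i)
    (G : SimpleGraph V)
    (hadj : ∀ a b : V, G.Adj a b ↔
      ((∃ i, i + 1 ≤ n - 3 ∧ ({a, b} : Set V) = {v i, v (i + 1)}) ∨
       ({a, b} : Set V) = {v (n - 3), v 0} ∨
       ({a, b} : Set V) = {x, v 0} ∨ ({a, b} : Set V) = {x, v 1} ∨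
       ({a, b} : Set V) = {y, v 1} ∨ ({a, b} : Set V) = {y, v 2})) :
    TwoConnected G ∧ G.edgeSet.ncard = n + 2 ∧ rc2 G ≤ n - 2 := by
  classical
  have hm0 : 0 < n - 2 := by omega
  -- adjacency facts
  have hadj_cyc : ∀ i, i + 1 ≤ n - 3 → G.Adj (v i) (v (i+1)) :=
    fun i h => (hadj _ _).mpr (Or.inl ⟨i, h, rfl⟩)
  have hadj_wrap : G.Adj (v (n-3)) (v 0) := (hadj _ _).mpr (Or.inr (Or.inl rfl))
  have hadj_x0 : G.Adj x (v 0) := (hadj _ _).mpr (Or.inr (Or.inr (Or.inl rfl)))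
  have hadj_x1 : G.Adj x (v 1) := (hadj _ _).mpr (Or.inr (Or.inr (Or.inr (Or.inl rfl))))
  have hadj_y1 : G.Adj y (v 1) := (hadj _ _).mpr (Or.inr (Or.inr (Or.inr (Or.inr (Or.inl rfl)))))
  have hadj_y2 : G.Adj y (v 2) := (hadj _ _).mpr (Or.inr (Or.inr (Or.inr (Or.inr (Or.inr rfl)))))
  have hmod_lt : ∀ i : ℕ, i % (n-2) ≤ n - 3 := fun i => by
    have := Nat.mod_lt i hm0; omega
  set vv : ℕ → V := fun i => v (i % (n-2)) with hvvdef
  have hvv_eq : ∀ i, i ≤ n - 3 → vv i = v i := fun i h => by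
    simp only [hvvdef]; rw [Nat.mod_eq_of_lt (by omega)]
  have hvv_inj : ∀ i j, vv i = vv j → i % (n-2) = j % (n-2) :=
    fun i j h => hvinj _ _ (hmod_lt i) (hmod_lt j) h
  have hxvv : ∀ i, x ≠ vv i := fun i => hxv _ (hmod_lt i)
  have hyvv : ∀ i, y ≠ vv i := fun i => hyv _ (hmod_lt i)
  have hmod_succ : ∀ i : ℕ, (i+1) % (n-2) = (i % (n-2) + 1) % (n-2) :=
    fun i => (Nat.mod_add_mod i (n-2) 1).symm
  have hvvadj : ∀ i, G.Adj (vv i) (vv (i+1)) := by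
    intro i
    show G.Adj (v (i % (n-2))) (v ((i+1) % (n-2)))
    by_cases h : i % (n-2) = n - 3
    · have h2 : (i+1) % (n-2) = 0 := by
        rw [hmod_succ, h, show n - 3 + 1 = n - 2 from by omega, Nat.mod_self]
      rw [h, h2]; exact hadj_wrap
    · have h2 : (i+1) % (n-2) = i % (n-2) + 1 := by
        rw [hmod_succ, Nat.mod_eq_of_lt (by have := hmod_lt i; omega)]
      rw [h2]; exact hadj_cyc _ (by have := hmod_lt i; omega)
  -- every vertex is x, y or some v i
  have hsurj : ∀ w : V, w = x ∨ w = y ∨ ∃ i, i ≤ n - 3 ∧ w = v i := by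
    have hyim : y ∉ (Finset.range (n-2)).image (fun i => v i) := by
      simp only [Finset.mem_image, Finset.mem_range, not_exists, not_and]
      intro i hi; exact fun h => hyv i (by omega) h.symm
    have hxim : x ∉ insert y ((Finset.range (n-2)).image (fun i => v i)) := by
      simp only [Finset.mem_insert, Finset.mem_image, Finset.mem_range, not_or, not_exists, not_and]
      exact ⟨hxy, fun i hi h => hxv i (by omega) h.symm⟩
    have hS : (insert x (insert y ((Finset.range (n-2)).image (fun i => v i)))) = Finset.univ := by
      apply Finset.eq_univ_of_card
      rw [Finset.card_insert_of_notMem hxim, Finset.card_insert_of_notMem hyim,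
        Finset.card_image_of_injOn, Finset.card_range]
      · rw [hcard]; omega
      · intro i hi j hj hij
        exact hvinj i j (by simp at hi; omega) (by simp at hj; omega) hij
    intro w
    have hw := hS ▸ Finset.mem_univ w
    simp only [Finset.mem_insert, Finset.mem_image, Finset.mem_range] at hw
    rcases hw with h | h | ⟨i, hi, h⟩
    · exact Or.inl h
    · exact Or.inr (Or.inl h)
    · exact Or.inr (Or.inr ⟨i, by omega, h.symm⟩)
  refine ⟨⟨by rw [hcard]; omega, ?_⟩, ?_, ?_⟩
  · -- 2-connectivity: delete any vertex, stays connected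
    intro w
    have chainreach : ∀ (s : Set V) (b0 t : ℕ) (hmem : ∀ j, j ≤ t → vv (b0+j) ∈ s),
        (G.induce s).Reachable ⟨vv b0, hmem 0 (Nat.zero_le t)⟩ ⟨vv (b0+t), hmem t le_rfl⟩ :=
      fun s b0 t hmem => reach_chain s vv b0 t hmem (fun j _ => hvvadj _)
    rw [connected_iff]
    constructor
    · -- preconnected
      rcases hsurj w with hw | hw | ⟨k, hk, hw⟩ <;> rw [hw]
      · -- w = x : hub is v 1
        have hhub : (v 1 : V) ∈ ({x}ᶜ : Set V) :=
          Set.mem_compl_singleton_iff.mpr (hxv 1 (by omega)).symm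
        have key : ∀ a : ↑({x}ᶜ : Set V), (G.induce ({x}ᶜ : Set V)).Reachable a ⟨v 1, hhub⟩ := by
          rintro ⟨az, ha⟩
          have ha' : az ≠ x := Set.mem_compl_singleton_iff.mp ha
          rcases hsurj az with h | h | ⟨i, hi, h⟩
          · exact absurd h ha'
          · have h2 : G.Adj az (v 1) := by rw [h]; exact hadj_y1
            exact Adj.reachable (v := (⟨v 1, hhub⟩ : ↑({x}ᶜ : Set V))) (by simpa using h2)
          · have hmem : ∀ (t : ℕ), ∀ j, j ≤ t → vv (1+j) ∈ ({x}ᶜ : Set V) :=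
              fun t j _ => Set.mem_compl_singleton_iff.mpr (hxvv _).symm
            by_cases h0 : i = 0
            · have hc := chainreach ({x}ᶜ) 1 (n-3) (hmem (n-3))
              have e1 : (⟨vv 1, hmem (n-3) 0 (Nat.zero_le _)⟩ : ↑({x}ᶜ : Set V)) = ⟨v 1, hhub⟩ :=
                Subtype.ext (hvv_eq 1 (by omega))
              have e2 : (⟨vv (1+(n-3)), hmem (n-3) (n-3) le_rfl⟩ : ↑({x}ᶜ : Set V)) = ⟨az, ha⟩ := by
                apply Subtype.ext
                show v ((1+(n-3)) % (n-2)) = az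
                rw [show 1+(n-3) = n-2 from by omega, Nat.mod_self, h, h0]
              rw [e1, e2] at hc
              exact hc.symm
            · have hc := chainreach ({x}ᶜ) 1 (i-1) (hmem (i-1))
              have e1 : (⟨vv 1, hmem (i-1) 0 (Nat.zero_le _)⟩ : ↑({x}ᶜ : Set V)) = ⟨v 1, hhub⟩ :=
                Subtype.ext (hvv_eq 1 (by omega))
              have e2 : (⟨vv (1+(i-1)), hmem (i-1) (i-1) le_rfl⟩ : ↑({x}ᶜ : Set V)) = ⟨az, ha⟩ := by
                apply Subtype.ext
                show v ((1+(i-1)) % (n-2)) = az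
                rw [show 1+(i-1) = i from by omega, Nat.mod_eq_of_lt (by omega), h]
              rw [e1, e2] at hc
              exact hc.symm
        exact fun a b => (key a).trans (key b).symm
      · -- w = y : hub is v 1
        have hhub : (v 1 : V) ∈ ({y}ᶜ : Set V) :=
          Set.mem_compl_singleton_iff.mpr (hyv 1 (by omega)).symm
        have key : ∀ a : ↑({y}ᶜ : Set V), (G.induce ({y}ᶜ : Set V)).Reachable a ⟨v 1, hhub⟩ := by
          rintro ⟨az, ha⟩
          have ha' : az ≠ y := Set.mem_compl_singleton_iff.mp ha
          rcases hsurj az with h | h | ⟨i, hi, h⟩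
          · have h2 : G.Adj az (v 1) := by rw [h]; exact hadj_x1
            exact Adj.reachable (v := (⟨v 1, hhub⟩ : ↑({y}ᶜ : Set V))) (by simpa using h2)
          · exact absurd h ha'
          · have hmem : ∀ (t : ℕ), ∀ j, j ≤ t → vv (1+j) ∈ ({y}ᶜ : Set V) :=
              fun t j _ => Set.mem_compl_singleton_iff.mpr (hyvv _).symm
            by_cases h0 : i = 0
            · have hc := chainreach ({y}ᶜ) 1 (n-3) (hmem (n-3))
              have e1 : (⟨vv 1, hmem (n-3) 0 (Nat.zero_le _)⟩ : ↑({y}ᶜ : Set V)) = ⟨v 1, hhub⟩ :=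
                Subtype.ext (hvv_eq 1 (by omega))
              have e2 : (⟨vv (1+(n-3)), hmem (n-3) (n-3) le_rfl⟩ : ↑({y}ᶜ : Set V)) = ⟨az, ha⟩ := by
                apply Subtype.ext
                show v ((1+(n-3)) % (n-2)) = az
                rw [show 1+(n-3) = n-2 from by omega, Nat.mod_self, h, h0]
              rw [e1, e2] at hc
              exact hc.symm
            · have hc := chainreach ({y}ᶜ) 1 (i-1) (hmem (i-1))
              have e1 : (⟨vv 1, hmem (i-1) 0 (Nat.zero_le _)⟩ : ↑({y}ᶜ : Set V)) = ⟨v 1, hhub⟩ :=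
                Subtype.ext (hvv_eq 1 (by omega))
              have e2 : (⟨vv (1+(i-1)), hmem (i-1) (i-1) le_rfl⟩ : ↑({y}ᶜ : Set V)) = ⟨az, ha⟩ := by
                apply Subtype.ext
                show v ((1+(i-1)) % (n-2)) = az
                rw [show 1+(i-1) = i from by omega, Nat.mod_eq_of_lt (by omega), h]
              rw [e1, e2] at hc
              exact hc.symm
        exact fun a b => (key a).trans (key b).symm
      · -- w = v k : hub is vv (k+1)
        have hvk : ∀ i, i ≤ n - 3 → i ≠ k → (v i : V) ∈ ({v k}ᶜ : Set V) := by
          intro i hi hik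
          exact Set.mem_compl_singleton_iff.mpr (fun h => hik (hvinj i k hi hk h))
        have hvvk : ∀ j, j % (n-2) ≠ k → (vv j : V) ∈ ({v k}ᶜ : Set V) :=
          fun j hj => hvk _ (hmod_lt j) hj
        have hhub : (vv (k+1) : V) ∈ ({v k}ᶜ : Set V) := by
          apply hvvk
          rw [mod_small hm0 (by omega)]
          split_ifs <;> omega
        have hkmem : ∀ (t : ℕ), t ≤ n - 4 → ∀ j, j ≤ t → vv (k+1+j) ∈ ({v k}ᶜ : Set V) := by
          intro t ht j hj
          apply hvvk
          rw [mod_small hm0 (by omega)]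
          split_ifs <;> omega
        have hkv : ∀ i (hi : i ≤ n - 3) (hik : i ≠ k),
            (G.induce ({v k}ᶜ : Set V)).Reachable ⟨v i, hvk i hi hik⟩ ⟨vv (k+1), hhub⟩ := by
          intro i hi hik
          by_cases hki : k < i
          · have hc := chainreach ({v k}ᶜ) (k+1) (i-k-1) (hkmem (i-k-1) (by omega))
            have e2 : (⟨vv (k+1+(i-k-1)), hkmem (i-k-1) (by omega) (i-k-1) le_rfl⟩ :
                ↑({v k}ᶜ : Set V)) = ⟨v i, hvk i hi hik⟩ := by
              apply Subtype.ext
              show v ((k+1+(i-k-1)) % (n-2)) = v i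
              rw [show k+1+(i-k-1) = i from by omega, Nat.mod_eq_of_lt (by omega)]
            rw [e2] at hc
            exact hc.symm
          · have hc := chainreach ({v k}ᶜ) (k+1) (n-2-k-1+i) (hkmem (n-2-k-1+i) (by omega))
            have e2 : (⟨vv (k+1+(n-2-k-1+i)), hkmem (n-2-k-1+i) (by omega) _ le_rfl⟩ :
                ↑({v k}ᶜ : Set V)) = ⟨v i, hvk i hi hik⟩ := by
              apply Subtype.ext
              show v ((k+1+(n-2-k-1+i)) % (n-2)) = v i
              rw [show k+1+(n-2-k-1+i) = n-2+i from by omega, mod_small hm0 (by omega)]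
              split_ifs with h1
              · omega
              · congr 1; omega
            rw [e2] at hc
            exact hc.symm
        have key : ∀ a : ↑({v k}ᶜ : Set V),
            (G.induce ({v k}ᶜ : Set V)).Reachable a ⟨vv (k+1), hhub⟩ := by
          rintro ⟨az, ha⟩
          have ha' : az ≠ v k := Set.mem_compl_singleton_iff.mp ha
          rcases hsurj az with h | h | ⟨i, hi, h⟩
          · -- az = x
            by_cases h0 : k = 0
            · have h2 : G.Adj az (v 1) := by rw [h]; exact hadj_x1
              exact (Adj.reachable (v := (⟨v 1, hvk 1 (by omega) (by omega)⟩ :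
                ↑({v k}ᶜ : Set V))) (by simpa using h2)).trans (hkv 1 (by omega) (by omega))
            · have h2 : G.Adj az (v 0) := by rw [h]; exact hadj_x0
              exact (Adj.reachable (v := (⟨v 0, hvk 0 (by omega) (Ne.symm h0)⟩ :
                ↑({v k}ᶜ : Set V))) (by simpa using h2)).trans (hkv 0 (by omega) (Ne.symm h0))
          · -- az = y
            by_cases h1 : k = 1
            · have h2 : G.Adj az (v 2) := by rw [h]; exact hadj_y2
              exact (Adj.reachable (v := (⟨v 2, hvk 2 (by omega) (by omega)⟩ :
                ↑({v k}ᶜ : Set V))) (by simpa using h2)).trans (hkv 2 (by omega) (by omega))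
            · have h2 : G.Adj az (v 1) := by rw [h]; exact hadj_y1
              exact (Adj.reachable (v := (⟨v 1, hvk 1 (by omega) (Ne.symm h1)⟩ :
                ↑({v k}ᶜ : Set V))) (by simpa using h2)).trans (hkv 1 (by omega) (Ne.symm h1))
          · -- az = v i
            have hik : i ≠ k := fun he => ha' (by rw [h, he])
            have e : (⟨az, ha⟩ : ↑({v k}ᶜ : Set V)) = ⟨v i, hvk i hi hik⟩ := Subtype.ext h
            rw [e]
            exact hkv i hi hik
        exact fun a b => (key a).trans (key b).symm
    · -- nonempty
      by_cases hw : w = x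
      · exact ⟨⟨y, Set.mem_compl_singleton_iff.mpr (by rw [hw]; exact hxy.symm)⟩⟩
      · exact ⟨⟨x, Set.mem_compl_singleton_iff.mpr (fun h => hw h.symm)⟩⟩
  · -- edge count
    have hvne : ∀ i j, i ≤ n-3 → j ≤ n-3 → i ≠ j → v i ≠ v j :=
      fun i j hi hj h he => h (hvinj i j hi hj he)
    have hbridge : ∀ a b c d : V, (({a,b} : Set V) = {c,d}) ↔ s(a,b) = s(c,d) := by
      intro a b c d; rw [Set.pair_eq_pair_iff, Sym2.eq_iff]
    have hadj' : ∀ a b : V, G.Adj a b ↔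
        ((∃ i, i + 1 ≤ n - 3 ∧ s(a,b) = s(v i, v (i + 1))) ∨ s(a,b) = s(v (n-3), v 0) ∨
          s(a,b) = s(x, v 0) ∨ s(a,b) = s(x, v 1) ∨ s(a,b) = s(y, v 1) ∨ s(a,b) = s(y, v 2)) := by
      intro a b; rw [hadj a b]; simp only [hbridge]
    have hceinj : ∀ i j, i < n-2 → j < n-2 →
        s(v i, v ((i+1) % (n-2))) = s(v j, v ((j+1) % (n-2))) → i = j := by
      intro i j hi hj h
      rw [Sym2.eq_iff] at h
      rcases h with ⟨h1, h2⟩ | ⟨h1, h2⟩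
      · exact hvinj i j (by omega) (by omega) h1
      · have e1 : i = (j+1) % (n-2) := hvinj _ _ (by omega) (hmod_lt _) h1
        have e2 : (i+1) % (n-2) = j := hvinj _ _ (hmod_lt _) (by omega) h2
        rw [mod_small hm0 (by omega)] at e1
        rw [mod_small hm0 (by omega)] at e2
        split_ifs at e1 e2 <;> omega
    have hedge : G.edgeSet = ↑(((Finset.range (n-2)).image
        (fun i => s(v i, v ((i+1) % (n-2))))) ∪
        {s(x, v 0), s(x, v 1), s(y, v 1), s(y, v 2)}) := by
      ext e
      induction e using Sym2.ind with
      | _ a b =>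
        rw [mem_edgeSet, hadj' a b, Finset.mem_coe, Finset.mem_union, Finset.mem_image]
        simp only [Finset.mem_range, Finset.mem_insert, Finset.mem_singleton]
        constructor
        · rintro (⟨i, hi, h⟩ | h | h | h | h | h)
          · refine Or.inl ⟨i, by omega, ?_⟩
            rw [Nat.mod_eq_of_lt (by omega)]
            exact h.symm
          · refine Or.inl ⟨n-3, by omega, ?_⟩
            rw [show n-3+1 = n-2 from by omega, Nat.mod_self]
            exact h.symm
          · exact Or.inr (Or.inl h)
          · exact Or.inr (Or.inr (Or.inl h))
          · exact Or.inr (Or.inr (Or.inr (Or.inl h)))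
          · exact Or.inr (Or.inr (Or.inr (Or.inr h)))
        · rintro (⟨i, hi, h⟩ | h | h | h | h)
          · by_cases hi3 : i = n-3
            · refine Or.inr (Or.inl ?_)
              rw [← h, hi3, show n-3+1 = n-2 from by omega, Nat.mod_self]
            · refine Or.inl ⟨i, by omega, ?_⟩
              rw [← h, Nat.mod_eq_of_lt (by omega)]
          · exact Or.inr (Or.inr (Or.inl h))
          · exact Or.inr (Or.inr (Or.inr (Or.inl h)))
          · exact Or.inr (Or.inr (Or.inr (Or.inr (Or.inl h))))
          · exact Or.inr (Or.inr (Or.inr (Or.inr (Or.inr h))))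
    rw [hedge, Set.ncard_coe_finset]
    have hnotin : ∀ e ∈ ({s(x, v 0), s(x, v 1), s(y, v 1), s(y, v 2)} : Finset (Sym2 V)),
        e ∉ (Finset.range (n-2)).image (fun i => s(v i, v ((i+1) % (n-2)))) := by
      intro e he hmem
      rw [Finset.mem_image] at hmem
      obtain ⟨i, hi, hei⟩ := hmem
      rw [Finset.mem_range] at hi
      simp only [Finset.mem_insert, Finset.mem_singleton] at he
      rcases he with h | h | h | h <;> rw [h] at hei <;> rw [Sym2.eq_iff] at hei <;>
        rcases hei with ⟨h1, h2⟩ | ⟨h1, h2⟩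
      · exact hxv i (by omega) h1.symm
      · exact hxv _ (hmod_lt _) h2.symm
      · exact hxv i (by omega) h1.symm
      · exact hxv _ (hmod_lt _) h2.symm
      · exact hyv i (by omega) h1.symm
      · exact hyv _ (hmod_lt _) h2.symm
      · exact hyv i (by omega) h1.symm
      · exact hyv _ (hmod_lt _) h2.symm
    have hdisj : Disjoint ((Finset.range (n-2)).image (fun i => s(v i, v ((i+1) % (n-2)))))
        ({s(x, v 0), s(x, v 1), s(y, v 1), s(y, v 2)} : Finset (Sym2 V)) := by
      rw [Finset.disjoint_right]
      exact fun e he => hnotin e he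
    rw [Finset.card_union_of_disjoint hdisj,
      Finset.card_image_of_injOn (fun i hi j hj h =>
        hceinj i j (Finset.mem_range.mp hi) (Finset.mem_range.mp hj) h),
      Finset.card_range]
    have hextra : ({s(x, v 0), s(x, v 1), s(y, v 1), s(y, v 2)} : Finset (Sym2 V)).card = 4 := by
      have h12 : s(x, (v 1 : V)) ≠ s(y, v 1) := by
        intro hh
        rw [Sym2.eq_iff] at hh
        rcases hh with ⟨h1, h2⟩ | ⟨h1, h2⟩
        · exact hxy h1
        · exact hxv 1 (by omega) h1
      have h13 : s(x, (v 1 : V)) ≠ s(y, v 2) := by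
        intro hh
        rw [Sym2.eq_iff] at hh
        rcases hh with ⟨h1, h2⟩ | ⟨h1, h2⟩
        · exact hxy h1
        · exact hxv 2 (by omega) h1
      have h23 : s(y, (v 1 : V)) ≠ s(y, v 2) := by
        intro hh
        rw [Sym2.eq_iff] at hh
        rcases hh with ⟨h1, h2⟩ | ⟨h1, h2⟩
        · exact hvne 1 2 (by omega) (by omega) (by omega) h2
        · exact hyv 1 (by omega) h2.symm
      have h01 : s(x, (v 0 : V)) ≠ s(x, v 1) := by
        intro hh
        rw [Sym2.eq_iff] at hh
        rcases hh with ⟨h1, h2⟩ | ⟨h1, h2⟩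
        · exact hvne 0 1 (by omega) (by omega) (by omega) h2
        · exact hxv 1 (by omega) h1
      have h02 : s(x, (v 0 : V)) ≠ s(y, v 1) := by
        intro hh
        rw [Sym2.eq_iff] at hh
        rcases hh with ⟨h1, h2⟩ | ⟨h1, h2⟩
        · exact hxy h1
        · exact hxv 1 (by omega) h1
      have h03 : s(x, (v 0 : V)) ≠ s(y, v 2) := by
        intro hh
        rw [Sym2.eq_iff] at hh
        rcases hh with ⟨h1, h2⟩ | ⟨h1, h2⟩
        · exact hxy h1
        · exact hxv 2 (by omega) h1
      rw [Finset.card_insert_of_notMem (by simp [h01, h02, h03]),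
        Finset.card_insert_of_notMem (by simp [h12, h13]),
        Finset.card_insert_of_notMem (by simp [h23]),
        Finset.card_singleton]
    rw [hextra]
    omega
  · -- rc2 bound
    have hvne : ∀ i j, i ≤ n-3 → j ≤ n-3 → i ≠ j → v i ≠ v j :=
      fun i j hi hj h he => h (hvinj i j hi hj he)
    set ce : ℕ → Sym2 V := fun i => s(v i, v ((i+1) % (n-2))) with hce
    have hceinj : ∀ i j, i < n-2 → j < n-2 → ce i = ce j → i = j := by
      intro i j hi hj h
      rw [hce] at h
      simp only at h
      rw [Sym2.eq_iff] at h
      rcases h with ⟨h1, h2⟩ | ⟨h1, h2⟩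
      · exact hvinj i j (by omega) (by omega) h1
      · have e1 : i = (j+1) % (n-2) := hvinj _ _ (by omega) (hmod_lt _) h1
        have e2 : (i+1) % (n-2) = j := hvinj _ _ (hmod_lt _) (by omega) h2
        rw [mod_small hm0 (by omega)] at e1
        rw [mod_small hm0 (by omega)] at e2
        split_ifs at e1 e2 <;> omega
    set cnat : Sym2 V → ℕ := fun e =>
      if e = s(y, v 1) ∨ e = s(y, v 2) then 1
      else ((Finset.range (n-2)).filter (fun i => e = ce i)).sum id with hcnat
    set col : Sym2 V → Fin (n-2) := fun e => ⟨cnat e % (n-2), Nat.mod_lt _ hm0⟩ with hcol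
    have hcv : ∀ e, (col e).1 = cnat e % (n-2) := fun e => rfl
    have hcenoty : ∀ i, i < n-2 → ¬(ce i = s(y, v 1) ∨ ce i = s(y, v 2)) := by
      intro i hi h
      rcases h with h | h <;> (rw [hce] at h; simp only at h; rw [Sym2.eq_iff] at h) <;>
        rcases h with ⟨h1, h2⟩ | ⟨h1, h2⟩
      · exact hyv i (by omega) h1.symm
      · exact hyv _ (hmod_lt _) h2.symm
      · exact hyv i (by omega) h1.symm
      · exact hyv _ (hmod_lt _) h2.symm
    have hcnat_ce : ∀ i, i < n-2 → cnat (ce i) = i := by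
      intro i hi
      rw [hcnat]
      simp only [if_neg (hcenoty i hi)]
      have hfil : (Finset.range (n-2)).filter (fun j => ce i = ce j) = {i} := by
        ext j
        simp only [Finset.mem_filter, Finset.mem_range, Finset.mem_singleton]
        constructor
        · rintro ⟨hj, he⟩
          exact (hceinj i j hi hj he).symm
        · rintro rfl
          exact ⟨hi, rfl⟩
      rw [hfil, Finset.sum_singleton]
      rfl
    have hcol_ce : ∀ i, i < n-2 → (col (ce i)).1 = i := by
      intro i hi
      rw [hcv, hcnat_ce i hi, Nat.mod_eq_of_lt hi]
    have hcol_vv : ∀ i, (col s(vv i, vv (i+1))).1 = i % (n-2) := by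
      intro i
      have he : s(vv i, vv (i+1)) = ce (i % (n-2)) := by
        rw [hce]
        show s(v (i % (n-2)), v ((i+1) % (n-2))) = s(v (i % (n-2)), v ((i % (n-2)+1) % (n-2)))
        rw [Nat.mod_add_mod]
      rw [he]
      exact hcol_ce _ (Nat.mod_lt _ hm0)
    have hnotce_x : ∀ (b : V) (hb : b = v 0 ∨ b = v 1), cnat s(x, b) = 0 := by
      intro b hb
      rw [hcnat]
      have hny : ¬(s(x, b) = s(y, v 1) ∨ s(x, b) = s(y, v 2)) := by
        rintro (h | h) <;> rw [Sym2.eq_iff] at h <;>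
          rcases h with ⟨h1, h2⟩ | ⟨h1, h2⟩
        · exact hxy h1
        · exact hxv 1 (by omega) h1
        · exact hxy h1
        · exact hxv 2 (by omega) h1
      simp only [if_neg hny]
      have hfil : (Finset.range (n-2)).filter (fun j => s(x, b) = ce j) = ∅ := by
        ext j
        simp only [Finset.mem_filter, Finset.mem_range, Finset.notMem_empty, iff_false, not_and]
        intro hj h
        rw [hce] at h; simp only at h; rw [Sym2.eq_iff] at h
        rcases h with ⟨h1, h2⟩ | ⟨h1, h2⟩
        · exact hxv j (by omega) h1
        · exact hxv _ (hmod_lt _) h1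
      rw [hfil, Finset.sum_empty]
    have hcol_x0 : (col s(x, v 0)).1 = 0 := by
      rw [hcv, hnotce_x (v 0) (Or.inl rfl), Nat.zero_mod]
    have hcol_x1 : (col s(x, v 1)).1 = 0 := by
      rw [hcv, hnotce_x (v 1) (Or.inr rfl), Nat.zero_mod]
    have hcol_y1 : (col s(y, v 1)).1 = 1 := by
      rw [hcv]; simp only [hcnat]
      rw [if_pos (Or.inl trivial : (True ∨ s(y, (v 1:V)) = s(y, v 2)))]
      exact Nat.mod_eq_of_lt (by omega)
    have hcol_y2 : (col s(y, v 2)).1 = 1 := by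
      rw [hcv]; simp only [hcnat]
      rw [if_pos (Or.inr trivial : (s(y, (v 2:V)) = s(y, v 1) ∨ True))]
      exact Nat.mod_eq_of_lt (by omega)
    -- generic list facts
    have hmodinj2 : ∀ a j1 j2, j1 ≤ j2 → j2 < j1 + (n-2) →
        (a+j1) % (n-2) = (a+j2) % (n-2) → j1 = j2 := by
      intro a j1 j2 h1 h2 h
      have := modinj (m := n-2) (s := a+j1) (t := a+j2) h (by omega) (by omega)
      omega
    have hsupnodup : ∀ a k, k < n-2 → ((List.range (k+1)).map (fun j => vv (a+j))).Nodup := by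
      intro a k hk
      refine List.Nodup.map_on ?_ List.nodup_range
      intro j1 hj1 j2 hj2 he
      rw [List.mem_range] at hj1 hj2
      have hje := hvv_inj _ _ he
      rcases Nat.le_total j1 j2 with h | h
      · exact hmodinj2 a j1 j2 h (by omega) hje
      · exact (hmodinj2 a j2 j1 h (by omega) hje.symm).symm
    have hsupmem : ∀ a k (z : V), z ∈ (List.range k).map (fun j => vv (a+j)) ↔
        ∃ j, j < k ∧ z = vv (a+j) := by
      intro a k z
      simp only [List.mem_map, List.mem_range]
      constructor
      · rintro ⟨j, hj, h⟩; exact ⟨j, hj, h.symm⟩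
      · rintro ⟨j, hj, h⟩; exact ⟨j, hj, h.symm⟩
    have hcolnodup : ∀ a k, k ≤ n-2 → ((List.range k).map (fun j => (a+j) % (n-2))).Nodup := by
      intro a k hk
      refine List.Nodup.map_on ?_ List.nodup_range
      intro j1 hj1 j2 hj2 he
      rw [List.mem_range] at hj1 hj2
      rcases Nat.le_total j1 j2 with h | h
      · exact hmodinj2 a j1 j2 h (by omega) he
      · exact (hmodinj2 a j2 j1 h (by omega) he.symm).symm
    have harc := arc_exists (G := G) vv hvvadj
    -- the pair property
    apply Nat.sInf_le
    refine ⟨col, ?_⟩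
    have pairSymm : ∀ u w : V, (∃ p q : G.Walk u w, p.IsPath ∧ q.IsPath ∧ p ≠ q ∧
        IsRainbowWalk col p ∧ IsRainbowWalk col q ∧
        ∀ z : V, z ∈ p.support → z ∈ q.support → z = u ∨ z = w) →
        (∃ p q : G.Walk w u, p.IsPath ∧ q.IsPath ∧ p ≠ q ∧
        IsRainbowWalk col p ∧ IsRainbowWalk col q ∧
        ∀ z : V, z ∈ p.support → z ∈ q.support → z = w ∨ z = u) := by
      rintro u w ⟨p, q, hp, hq, hpq, hrp, hrq, hd⟩
      refine ⟨p.reverse, q.reverse, hp.reverse, hq.reverse, ?_, ?_, ?_, ?_⟩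
      · intro h
        exact hpq (by rw [← Walk.reverse_reverse p, h, Walk.reverse_reverse])
      · show ((p.reverse.edges).map col).Nodup
        rw [Walk.edges_reverse, List.map_reverse, List.nodup_reverse]
        exact hrp
      · show ((q.reverse.edges).map col).Nodup
        rw [Walk.edges_reverse, List.map_reverse, List.nodup_reverse]
        exact hrq
      · intro z hz1 hz2
        rw [Walk.support_reverse, List.mem_reverse] at hz1 hz2
        exact (hd z hz1 hz2).symm
    have hvalmap : ∀ (u' w' : V) (p : G.Walk u' w'),
        List.map Fin.val (p.edges.map col) = p.edges.map (fun e => (col e).1) := by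
      intro u' w' p; rw [List.map_map]; rfl
    have hmodne : ∀ s t, s ≤ t → t < s + (n-2) → s ≠ t → vv s ≠ vv t :=
      fun s t h1 h2 h3 he => h3 (modinj (hvv_inj _ _ he) h1 h2)
    have hattach : ∀ (z : V) (sft : ℕ), sft + 1 ≤ n - 3 →
        G.Adj z (vv sft) → G.Adj z (vv (sft+1)) → (∀ i, z ≠ vv i) →
        (col s(z, vv sft)).1 = sft → (col s(z, vv (sft+1))).1 = sft →
        ∀ b, b ≤ n - 3 → ∃ p q : G.Walk z (v b), p.IsPath ∧ q.IsPath ∧ p ≠ q ∧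
          IsRainbowWalk col p ∧ IsRainbowWalk col q ∧
          ∀ zz : V, zz ∈ p.support → zz ∈ q.support → zz = z ∨ zz = v b := by
      intro z sft hsft hz1 hz2 hzvv hc1 hc2 b hb
      by_cases hbs : b = sft
      · -- b = sft : P is the single edge, Q goes all the way around
        have hvb : vv sft = v b := by rw [hbs]; exact hvv_eq sft (by omega)
        obtain ⟨q1, hq1s, hq1e⟩ := harc (sft+1) (n-3)
        have heq : vv (sft+1+(n-3)) = v b := by
          rw [← hvb]
          show v ((sft+1+(n-3)) % (n-2)) = v (sft % (n-2))
          congr 1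
          rw [show sft+1+(n-3) = sft+(n-2) from by omega, Nat.add_mod_right]
        set P : G.Walk z (v b) := (Walk.cons hz1 Walk.nil).copy rfl hvb with hP
        set Q : G.Walk z (v b) := Walk.cons hz2 (q1.copy rfl heq) with hQ
        have hPs : P.support = [z, vv sft] := by
          rw [hP, Walk.support_copy, Walk.support_cons, Walk.support_nil]
        have hPe : P.edges = [s(z, vv sft)] := by
          rw [hP, Walk.edges_copy, Walk.edges_cons, Walk.edges_nil]
        have hQs : Q.support = z :: (List.range (n-3+1)).map (fun j => vv (sft+1+j)) := by
          rw [hQ, Walk.support_cons, Walk.support_copy, hq1s]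
        have hQe : Q.edges = s(z, vv (sft+1)) ::
            (List.range (n-3)).map (fun j => s(vv (sft+1+j), vv (sft+1+j+1))) := by
          rw [hQ, Walk.edges_cons, Walk.edges_copy, hq1e]
        have hdisj : ∀ zz : V, zz ∈ P.support → zz ∈ Q.support → zz = z ∨ zz = v b := by
          intro zz hzp hzq
          rw [hPs, List.mem_cons, List.mem_singleton] at hzp
          rcases hzp with h | h
          · exact Or.inl h
          · rw [h, hvb]; exact Or.inr rfl
        refine ⟨P, Q, ?_, ?_, ?_, ?_, ?_, hdisj⟩
        · rw [Walk.isPath_def, hPs]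
          simp [Ne.symm (hzvv sft), hzvv sft]
        · rw [Walk.isPath_def, hQs, List.nodup_cons]
          constructor
          · rw [hsupmem]
            rintro ⟨j, hj, h⟩
            exact hzvv _ h
          · exact hsupnodup (sft+1) (n-3) (by omega)
        · apply walk_ne_of_internal P Q hdisj
          refine ⟨vv (sft+1), Or.inr ?_, Ne.symm (hzvv _), ?_⟩
          · rw [hQs]
            refine List.mem_cons_of_mem _ ((hsupmem _ _ _).mpr ⟨0, by omega, by rw [Nat.add_zero]⟩)
          · rw [← hvb]
            exact (hmodne sft (sft+1) (by omega) (by omega) (by omega)).symm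
        · show (P.edges.map col).Nodup
          rw [hPe]
          exact List.nodup_singleton _
        · show (Q.edges.map col).Nodup
          apply List.Nodup.of_map Fin.val
          rw [hvalmap, hQe, List.map_cons, List.map_map]
          have ht : List.map ((fun e => (col e).1) ∘ (fun j => s(vv (sft+1+j), vv (sft+1+j+1))))
              (List.range (n-3)) = List.map (fun j => (sft+1+j) % (n-2)) (List.range (n-3)) :=
            List.map_congr_left (fun j _ => hcol_vv _)
          rw [ht, hc2, List.nodup_cons]
          refine ⟨?_, hcolnodup (sft+1) (n-3) (by omega)⟩
          intro hmem
          rw [List.mem_map] at hmem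
          obtain ⟨j, hj, hje⟩ := hmem
          rw [List.mem_range] at hj
          have : sft % (n-2) = (sft+1+j) % (n-2) := by
            rw [Nat.mod_eq_of_lt (by omega)]; exact hje.symm
          have := modinj this (by omega) (by omega)
          omega
      · -- general case: b ≠ sft
        obtain ⟨d, hd1, hd2, hdb⟩ : ∃ d, 1 ≤ d ∧ d ≤ n-3 ∧ (sft + d) % (n-2) = b := by
          refine ⟨if sft < b then b - sft else n-2-sft+b, by split_ifs <;> omega,
            by split_ifs <;> omega, ?_⟩
          split_ifs with h
          · rw [show sft+(b-sft) = b from by omega, Nat.mod_eq_of_lt (by omega)]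
          · rw [show sft+(n-2-sft+b) = (n-2)+b from by omega, mod_small hm0 (by omega)]
            split_ifs <;> omega
        obtain ⟨p1, hp1s, hp1e⟩ := harc (sft+1) (d-1)
        have he1 : vv (sft+1+(d-1)) = v b := by
          show v ((sft+1+(d-1)) % (n-2)) = v b
          rw [show sft+1+(d-1) = sft+d from by omega, hdb]
        obtain ⟨q1, hq1s, hq1e⟩ := harc (sft+d) (n-2-d)
        have he3 : vv (sft+d) = v b := by show v _ = v b; rw [hdb]
        have he2 : vv (sft+d+(n-2-d)) = z → False := fun h => hzvv _ h.symm
        have he4 : vv (sft+d+(n-2-d)) = vv sft := by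
          show v _ = v _
          congr 1
          rw [show sft+d+(n-2-d) = sft+(n-2) from by omega, Nat.add_mod_right]
        set P : G.Walk z (v b) := Walk.cons hz2 (p1.copy rfl he1) with hP
        set Q1 : G.Walk (v b) z :=
          (q1.copy he3 he4).append (Walk.cons hz1.symm Walk.nil) with hQ1
        set Q : G.Walk z (v b) := Q1.reverse with hQ
        have hPs : P.support = z :: (List.range (d-1+1)).map (fun j => vv (sft+1+j)) := by
          rw [hP, Walk.support_cons, Walk.support_copy, hp1s]
        have hPe : P.edges = s(z, vv (sft+1)) ::
            (List.range (d-1)).map (fun j => s(vv (sft+1+j), vv (sft+1+j+1))) := by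
          rw [hP, Walk.edges_cons, Walk.edges_copy, hp1e]
        have hQ1s : Q1.support =
            ((List.range (n-2-d+1)).map (fun j => vv (sft+d+j))) ++ [z] := by
          rw [hQ1, Walk.support_append, Walk.support_copy, hq1s, Walk.support_cons,
            Walk.support_nil, List.tail_cons]
        have hQ1e : Q1.edges =
            ((List.range (n-2-d)).map (fun j => s(vv (sft+d+j), vv (sft+d+j+1)))) ++
              [s(vv sft, z)] := by
          rw [hQ1, Walk.edges_append, Walk.edges_copy, hq1e, Walk.edges_cons, Walk.edges_nil]
        have hQmem : ∀ zz : V, zz ∈ Q.support ↔ zz ∈ Q1.support := by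
          intro zz; rw [hQ, Walk.support_reverse, List.mem_reverse]
        have hdisj : ∀ zz : V, zz ∈ P.support → zz ∈ Q.support → zz = z ∨ zz = v b := by
          intro zz hzp hzq
          rw [hQmem, hQ1s, List.mem_append] at hzq
          rw [hPs, List.mem_cons] at hzp
          rcases hzp with h | h
          · exact Or.inl h
          · rw [hsupmem] at h
            obtain ⟨j, hj, rfl⟩ := h
            rcases hzq with h2 | h2
            · rw [hsupmem] at h2
              obtain ⟨j2, hj2, he⟩ := h2
              have hres := hvv_inj _ _ he
              have : sft+1+j = sft+d+j2 := modinj hres (by omega) (by omega)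
              have hj0 : j = d - 1 := by omega
              refine Or.inr ?_
              rw [← he3]
              congr 1
              omega
            · simp only [List.mem_singleton] at h2
              exact absurd h2 (Ne.symm (hzvv _))
        refine ⟨P, Q, ?_, ?_, ?_, ?_, ?_, hdisj⟩
        · rw [Walk.isPath_def, hPs, List.nodup_cons]
          constructor
          · rw [hsupmem]
            rintro ⟨j, hj, h⟩
            exact hzvv _ h
          · exact hsupnodup (sft+1) (d-1) (by omega)
        · rw [hQ]
          apply Walk.IsPath.reverse
          rw [Walk.isPath_def, hQ1s]
          refine List.Nodup.append (hsupnodup (sft+d) (n-2-d) (by omega))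
            (List.nodup_singleton _) ?_
          intro a ha hb2
          rw [List.mem_singleton] at hb2
          rw [hsupmem] at ha
          obtain ⟨j, hj, rfl⟩ := ha
          exact hzvv _ hb2.symm
        · apply walk_ne_of_internal P Q hdisj
          refine ⟨vv (sft+d+(n-2-d)), Or.inr ?_, Ne.symm (hzvv _), ?_⟩
          · rw [hQmem, hQ1s, List.mem_append]
            exact Or.inl ((hsupmem _ _ _).mpr ⟨n-2-d, by omega, rfl⟩)
          · rw [← he3]
            exact (hmodne (sft+d) (sft+d+(n-2-d)) (by omega) (by omega) (by omega)).symm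
        · show (P.edges.map col).Nodup
          apply List.Nodup.of_map Fin.val
          rw [hvalmap, hPe, List.map_cons, List.map_map]
          have ht : List.map ((fun e => (col e).1) ∘ (fun j => s(vv (sft+1+j), vv (sft+1+j+1))))
              (List.range (d-1)) = List.map (fun j => (sft+1+j) % (n-2)) (List.range (d-1)) :=
            List.map_congr_left (fun j _ => hcol_vv _)
          rw [ht, hc2, List.nodup_cons]
          refine ⟨?_, hcolnodup (sft+1) (d-1) (by omega)⟩
          intro hmem
          rw [List.mem_map] at hmem
          obtain ⟨j, hj, hje⟩ := hmem
          rw [List.mem_range] at hj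
          have : sft % (n-2) = (sft+1+j) % (n-2) := by
            rw [Nat.mod_eq_of_lt (by omega)]; exact hje.symm
          have := modinj this (by omega) (by omega)
          omega
        · show (Q.edges.map col).Nodup
          rw [hQ, Walk.edges_reverse, List.map_reverse, List.nodup_reverse]
          apply List.Nodup.of_map Fin.val
          rw [hvalmap, hQ1e, List.map_append, List.map_map, List.nodup_append_comm]
          show ((List.map _ [s(vv sft, z)]) ++ _).Nodup
          rw [List.map_singleton, List.singleton_append]
          have hswap : (col s(vv sft, z)).1 = sft := by
            rw [show s(vv sft, z) = s(z, vv sft) from Sym2.eq_swap]; exact hc1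
          have ht : List.map ((fun e => (col e).1) ∘ (fun j => s(vv (sft+d+j), vv (sft+d+j+1))))
              (List.range (n-2-d)) =
              List.map (fun j => (sft+d+j) % (n-2)) (List.range (n-2-d)) :=
            List.map_congr_left (fun j _ => hcol_vv _)
          rw [ht, hswap, List.nodup_cons]
          refine ⟨?_, hcolnodup (sft+d) (n-2-d) (by omega)⟩
          intro hmem
          rw [List.mem_map] at hmem
          obtain ⟨j, hj, hje⟩ := hmem
          rw [List.mem_range] at hj
          have : sft % (n-2) = (sft+d+j) % (n-2) := by
            rw [Nat.mod_eq_of_lt (by omega)]; exact hje.symm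
          have := modinj this (by omega) (by omega)
          omega
    have caseA : ∀ a b, a ≤ n-3 → b ≤ n-3 → a ≠ b →
        ∃ p q : G.Walk (v a) (v b), p.IsPath ∧ q.IsPath ∧ p ≠ q ∧
          IsRainbowWalk col p ∧ IsRainbowWalk col q ∧
          ∀ zz : V, zz ∈ p.support → zz ∈ q.support → zz = v a ∨ zz = v b := by
      intro a b ha hb hab
      obtain ⟨d, hd1, hd2, hdb⟩ : ∃ d, 1 ≤ d ∧ d ≤ n-3 ∧ (a + d) % (n-2) = b := by
        refine ⟨if a < b then b - a else n-2-a+b, by split_ifs <;> omega,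
          by split_ifs <;> omega, ?_⟩
        split_ifs with h
        · rw [show a+(b-a) = b from by omega, Nat.mod_eq_of_lt (by omega)]
        · rw [show a+(n-2-a+b) = (n-2)+b from by omega, mod_small hm0 (by omega)]
          split_ifs <;> omega
      obtain ⟨p1, hp1s, hp1e⟩ := harc a d
      have hea : vv a = v a := hvv_eq a ha
      have heb : vv (a+d) = v b := by show v _ = v b; rw [hdb]
      obtain ⟨q1, hq1s, hq1e⟩ := harc (a+d) (n-2-d)
      have hez : vv (a+d+(n-2-d)) = v a := by
        rw [← hea]
        show v _ = v _
        congr 1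
        rw [show a+d+(n-2-d) = a+(n-2) from by omega, Nat.add_mod_right]
      set P : G.Walk (v a) (v b) := p1.copy hea heb with hP
      set Q1 : G.Walk (v b) (v a) := q1.copy heb hez with hQ1
      set Q : G.Walk (v a) (v b) := Q1.reverse with hQ
      have hPs : P.support = (List.range (d+1)).map (fun j => vv (a+j)) := by
        rw [hP, Walk.support_copy, hp1s]
      have hPe : P.edges = (List.range d).map (fun j => s(vv (a+j), vv (a+j+1))) := by
        rw [hP, Walk.edges_copy, hp1e]
      have hQ1s : Q1.support = (List.range (n-2-d+1)).map (fun j => vv (a+d+j)) := by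
        rw [hQ1, Walk.support_copy, hq1s]
      have hQ1e : Q1.edges = (List.range (n-2-d)).map (fun j => s(vv (a+d+j), vv (a+d+j+1))) := by
        rw [hQ1, Walk.edges_copy, hq1e]
      have hQmem : ∀ zz : V, zz ∈ Q.support ↔ zz ∈ Q1.support := by
        intro zz; rw [hQ, Walk.support_reverse, List.mem_reverse]
      have hdisj : ∀ zz : V, zz ∈ P.support → zz ∈ Q.support → zz = v a ∨ zz = v b := by
        intro zz hzp hzq
        rw [hQmem, hQ1s, hsupmem] at hzq
        rw [hPs, hsupmem] at hzp
        obtain ⟨j, hj, rfl⟩ := hzp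
        obtain ⟨j2, hj2, he⟩ := hzq
        have hres := hvv_inj _ _ he
        have hsplit : a+j = a+d+j2 ∨ (j = 0 ∧ j2 = n-2-d) := by
          by_cases hc : a+d+j2 < a+j+(n-2)
          · exact Or.inl (modinj hres (by omega) hc)
          · right; omega
        rcases hsplit with h | ⟨h1, h2⟩
        · right
          rw [← heb]
          congr 1
          omega
        · left
          rw [← hea]
          congr 1
          omega
      refine ⟨P, Q, ?_, ?_, ?_, ?_, ?_, hdisj⟩
      · rw [Walk.isPath_def, hPs]
        exact hsupnodup a d (by omega)
      · rw [hQ]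
        apply Walk.IsPath.reverse
        rw [Walk.isPath_def, hQ1s]
        exact hsupnodup (a+d) (n-2-d) (by omega)
      · apply walk_ne_of_internal P Q hdisj
        by_cases hd2' : 2 ≤ d
        · refine ⟨vv (a+1), Or.inl ?_, ?_, ?_⟩
          · rw [hPs, hsupmem]
            exact ⟨1, by omega, rfl⟩
          · rw [← hea]
            exact (hmodne a (a+1) (by omega) (by omega) (by omega)).symm
          · rw [← heb]
            exact hmodne (a+1) (a+d) (by omega) (by omega) (by omega)
        · refine ⟨vv (a+d+1), Or.inr ?_, ?_, ?_⟩
          · rw [hQmem, hQ1s, hsupmem]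
            exact ⟨1, by omega, rfl⟩
          · rw [← hea]
            exact (hmodne a (a+d+1) (by omega) (by omega) (by omega)).symm
          · rw [← heb]
            exact (hmodne (a+d) (a+d+1) (by omega) (by omega) (by omega)).symm
      · show (P.edges.map col).Nodup
        apply List.Nodup.of_map Fin.val
        rw [hvalmap, hPe, List.map_map]
        have ht : List.map ((fun e => (col e).1) ∘ (fun j => s(vv (a+j), vv (a+j+1))))
            (List.range d) = List.map (fun j => (a+j) % (n-2)) (List.range d) :=
          List.map_congr_left (fun j _ => hcol_vv _)
        rw [ht]
        exact hcolnodup a d (by omega)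
      · show (Q.edges.map col).Nodup
        rw [hQ, Walk.edges_reverse, List.map_reverse, List.nodup_reverse]
        apply List.Nodup.of_map Fin.val
        rw [hvalmap, hQ1e, List.map_map]
        have ht : List.map ((fun e => (col e).1) ∘ (fun j => s(vv (a+d+j), vv (a+d+j+1))))
            (List.range (n-2-d)) = List.map (fun j => (a+d+j) % (n-2)) (List.range (n-2-d)) :=
          List.map_congr_left (fun j _ => hcol_vv _)
        rw [ht]
        exact hcolnodup (a+d) (n-2-d) (by omega)
    have caseD : ∃ p q : G.Walk x y, p.IsPath ∧ q.IsPath ∧ p ≠ q ∧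
        IsRainbowWalk col p ∧ IsRainbowWalk col q ∧
        ∀ zz : V, zz ∈ p.support → zz ∈ q.support → zz = x ∨ zz = y := by
      have he2 : vv 2 = v 2 := hvv_eq 2 (by omega)
      obtain ⟨q1, hq1s, hq1e⟩ := harc 2 (n-4)
      have he0 : vv (2+(n-4)) = v 0 := by
        show v _ = v 0
        rw [show 2+(n-4) = n-2 from by omega, Nat.mod_self]
      set P : G.Walk x y := Walk.cons hadj_x1 (Walk.cons hadj_y1.symm Walk.nil) with hP
      set Q1 : G.Walk y x := Walk.cons hadj_y2
        ((q1.copy he2 he0).append (Walk.cons hadj_x0.symm Walk.nil)) with hQ1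
      set Q : G.Walk x y := Q1.reverse with hQ
      have hPs : P.support = [x, v 1, y] := by
        rw [hP, Walk.support_cons, Walk.support_cons, Walk.support_nil]
      have hPe : P.edges = [s(x, v 1), s(v 1, y)] := by
        rw [hP, Walk.edges_cons, Walk.edges_cons, Walk.edges_nil]
      have hQ1s : Q1.support =
          y :: (((List.range (n-4+1)).map (fun j => vv (2+j))) ++ [x]) := by
        rw [hQ1, Walk.support_cons, Walk.support_append, Walk.support_copy, hq1s,
          Walk.support_cons, Walk.support_nil, List.tail_cons]
      have hQ1e : Q1.edges = s(y, v 2) ::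
          (((List.range (n-4)).map (fun j => s(vv (2+j), vv (2+j+1)))) ++ [s(v 0, x)]) := by
        rw [hQ1, Walk.edges_cons, Walk.edges_append, Walk.edges_copy, hq1e,
          Walk.edges_cons, Walk.edges_nil]
      have hQmem : ∀ zz : V, zz ∈ Q.support ↔ zz ∈ Q1.support := by
        intro zz; rw [hQ, Walk.support_reverse, List.mem_reverse]
      have hv1Q : (v 1 : V) ∉ Q1.support := by
        rw [hQ1s, List.mem_cons, List.mem_append, List.mem_singleton]
        rintro (h | h | h)
        · exact hyv 1 (by omega) h.symm
        · rw [hsupmem] at h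
          obtain ⟨j, hj, he⟩ := h
          rw [← hvv_eq 1 (by omega)] at he
          exact hmodne 1 (2+j) (by omega) (by omega) (by omega) he
        · exact hxv 1 (by omega) h.symm
      have hdisj : ∀ zz : V, zz ∈ P.support → zz ∈ Q.support → zz = x ∨ zz = y := by
        intro zz hzp hzq
        rw [hPs, List.mem_cons, List.mem_cons, List.mem_singleton] at hzp
        rcases hzp with h | h | h
        · exact Or.inl h
        · rw [hQmem] at hzq
          rw [h] at hzq
          exact absurd hzq hv1Q
        · exact Or.inr h
      refine ⟨P, Q, ?_, ?_, ?_, ?_, ?_, hdisj⟩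
      · rw [Walk.isPath_def, hPs]
        have h1 : x ∉ [v 1, y] := by
          rw [List.mem_cons, List.mem_singleton]
          rintro (h | h)
          · exact hxv 1 (by omega) h
          · exact hxy h
        have h2 : (v 1:V) ∉ [y] := by
          rw [List.mem_singleton]
          intro h
          exact hyv 1 (by omega) h.symm
        rw [List.nodup_cons, List.nodup_cons]
        exact ⟨h1, h2, List.nodup_singleton _⟩
      · rw [hQ]
        apply Walk.IsPath.reverse
        rw [Walk.isPath_def, hQ1s, List.nodup_cons]
        constructor
        · rw [List.mem_append, List.mem_singleton]
          rintro (h | h)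
          · rw [hsupmem] at h
            obtain ⟨j, hj, he⟩ := h
            exact hyvv _ he
          · exact hxy h.symm
        · refine List.Nodup.append (hsupnodup 2 (n-4) (by omega)) (List.nodup_singleton _) ?_
          intro e he1 he2
          rw [List.mem_singleton] at he2
          rw [hsupmem] at he1
          obtain ⟨j, hj, rfl⟩ := he1
          exact hxvv _ he2.symm
      · apply walk_ne_of_internal P Q hdisj
        refine ⟨v 1, Or.inl ?_, fun h => hxv 1 (by omega) h.symm, fun h => hyv 1 (by omega) h.symm⟩
        rw [hPs]
        exact List.mem_cons_of_mem _ List.mem_cons_self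
      · show (P.edges.map col).Nodup
        apply List.Nodup.of_map Fin.val
        rw [hvalmap, hPe]
        have h1 : (col s(v 1, y)).1 = 1 := by
          rw [show s((v 1 : V), y) = s(y, v 1) from Sym2.eq_swap]; exact hcol_y1
        rw [List.map_cons, List.map_cons, List.map_nil, hcol_x1, h1]
        simp
      · show (Q.edges.map col).Nodup
        rw [hQ, Walk.edges_reverse, List.map_reverse, List.nodup_reverse]
        apply List.Nodup.of_map Fin.val
        rw [hvalmap, hQ1e, List.map_cons, List.map_append, List.map_map, List.map_singleton]
        have h0 : (col s(v 0, x)).1 = 0 := by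
          rw [show s((v 0 : V), x) = s(x, v 0) from Sym2.eq_swap]; exact hcol_x0
        have ht : List.map ((fun e => (col e).1) ∘ (fun j => s(vv (2+j), vv (2+j+1))))
            (List.range (n-4)) = List.map (fun j => (2+j) % (n-2)) (List.range (n-4)) :=
          List.map_congr_left (fun j _ => hcol_vv _)
        rw [ht, h0, hcol_y2, List.nodup_cons]
        constructor
        · rw [List.mem_append, List.mem_singleton]
          rintro (h | h)
          · rw [List.mem_map] at h
            obtain ⟨j, hj, hje⟩ := h
            rw [List.mem_range] at hj
            rw [Nat.mod_eq_of_lt (by omega)] at hje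
            omega
          · omega
        · refine List.Nodup.append (hcolnodup 2 (n-4) (by omega)) (List.nodup_singleton _) ?_
          intro e he1 he2
          rw [List.mem_singleton] at he2
          rw [List.mem_map] at he1
          obtain ⟨j, hj, rfl⟩ := he1
          rw [List.mem_range] at hj
          rw [Nat.mod_eq_of_lt (by omega)] at he2
          omega
    intro u w huw
    rcases hsurj u with hu | hu | ⟨a, ha, hu⟩ <;> rcases hsurj w with hw | hw | ⟨b, hb, hw⟩
    · exact absurd (hu.trans hw.symm) huw
    · rw [hu, hw]; exact caseD
    · rw [hu, hw]
      exact hattach x 0 (by omega) (by rw [hvv_eq 0 (by omega)]; exact hadj_x0)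
        (by rw [hvv_eq 1 (by omega)]; exact hadj_x1) hxvv
        (by rw [hvv_eq 0 (by omega)]; exact hcol_x0)
        (by rw [hvv_eq 1 (by omega)]; exact hcol_x1) b hb
    · rw [hu, hw]; exact pairSymm x y caseD
    · exact absurd (hu.trans hw.symm) huw
    · rw [hu, hw]
      exact hattach y 1 (by omega) (by rw [hvv_eq 1 (by omega)]; exact hadj_y1)
        (by rw [hvv_eq 2 (by omega)]; exact hadj_y2) hyvv
        (by rw [hvv_eq 1 (by omega)]; exact hcol_y1)
        (by rw [hvv_eq 2 (by omega)]; exact hcol_y2) b hb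
    · rw [hu, hw]
      exact pairSymm x (v a) (hattach x 0 (by omega)
        (by rw [hvv_eq 0 (by omega)]; exact hadj_x0)
        (by rw [hvv_eq 1 (by omega)]; exact hadj_x1) hxvv
        (by rw [hvv_eq 0 (by omega)]; exact hcol_x0)
        (by rw [hvv_eq 1 (by omega)]; exact hcol_x1) a ha)
    · rw [hu, hw]
      exact pairSymm y (v a) (hattach y 1 (by omega)
        (by rw [hvv_eq 1 (by omega)]; exact hadj_y1)
        (by rw [hvv_eq 2 (by omega)]; exact hadj_y2) hyvv
        (by rw [hvv_eq 1 (by omega)]; exact hcol_y1)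
        (by rw [hvv_eq 2 (by omega)]; exact hcol_y2) a ha)
    · rw [hu, hw]
      exact caseA a b ha hb (fun h => huw (by rw [hu, hw, h]))
end

section
/- Let 3 ≤ r ≤ n − 1, and let G be the graph on n vertices obtained from the complete graph K_{n−r+2} by attaching an (r−1)-ear (a path with r − 1 new edges and r − 2 new internal vertices) at two of its vertices. Then G is 2-connected, |E(G)| = C(n−r+2, 2) + r − 1, and rc₂(G) ≥ r. Consequently s₂(n,r) ≥ C(n−r+2, 2) + r − 1. -/
open SimpleGraph

open SimpleGraph

namespace Stmt14

structure Setup (n r : ℕ) {V : Type*} [Fintype V] (K : Set V) (v : ℕ → V)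
    (G : SimpleGraph V) : Prop where
  hr : 3 ≤ r
  hrn : r ≤ n - 1
  hcard : Fintype.card V = n
  hK : K.ncard = n - r + 2
  hvinj : ∀ i j, i ≤ r - 1 → j ≤ r - 1 → v i = v j → i = j
  hv0 : v 0 ∈ K
  hvlast : v (r - 1) ∈ K
  hvint : ∀ i, 0 < i → i < r - 1 → v i ∉ K
  hadj : ∀ a b : V, G.Adj a b ↔
      ((a ∈ K ∧ b ∈ K ∧ a ≠ b) ∨
       ∃ i, i + 1 ≤ r - 1 ∧ ({a, b} : Set V) = {v i, v (i + 1)})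

variable {n r : ℕ} {V : Type*} [Fintype V] {K : Set V} {v : ℕ → V} {G : SimpleGraph V}

namespace Setup

lemma hs (S : Setup n r K v G) : 2 ≤ r - 1 := by have := S.hr; omega

lemma hn (S : Setup n r K v G) : r + 1 ≤ n := by have := S.hr; have := S.hrn; omega

lemma hK3 (S : Setup n r K v G) : 3 ≤ K.ncard := by
  have h1 := S.hn; have h2 := S.hr; rw [S.hK]; omega

lemma vne (S : Setup n r K v G) {i j : ℕ} (hi : i ≤ r - 1) (hj : j ≤ r - 1)
    (h : i ≠ j) : v i ≠ v j := fun he => h (S.hvinj i j hi hj he)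

lemma adjK (S : Setup n r K v G) {a b : V} (ha : a ∈ K) (hb : b ∈ K) (hab : a ≠ b) :
    G.Adj a b := (S.hadj a b).2 (Or.inl ⟨ha, hb, hab⟩)

lemma adjEar (S : Setup n r K v G) {i : ℕ} (h : i + 1 ≤ r - 1) :
    G.Adj (v i) (v (i + 1)) := (S.hadj _ _).2 (Or.inr ⟨i, h, rfl⟩)

/-- Neighbours of an internal ear vertex. -/
lemma nbr (S : Setup n r K v G) {k : ℕ} {b : V} (h1 : 0 < k) (h2 : k < r - 1)
    (h : G.Adj (v k) b) : b = v (k - 1) ∨ b = v (k + 1) := by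
  rcases (S.hadj _ _).1 h with ⟨hk, _, _⟩ | ⟨i, hi, hset⟩
  · exact absurd hk (S.hvint k h1 h2)
  · have hvk : v k ∈ ({v i, v (i+1)} : Set V) := by rw [← hset]; left; rfl
    have hvi : v i ∈ ({v k, b} : Set V) := by rw [hset]; left; rfl
    have hvi1 : v (i+1) ∈ ({v k, b} : Set V) := by rw [hset]; right; rfl
    rcases hvk with hk1 | hk2
    · -- v k = v i
      have hki : k = i := S.hvinj k i (by omega) (by omega) hk1
      rcases hvi1 with h' | h'
      · exact absurd (S.hvinj (i+1) k (by omega) (by omega) h') (by omega)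
      · right; rw [← h', hki]
    · -- v k = v (i+1)
      have hki : k = i + 1 := S.hvinj k (i+1) (by omega) (by omega) hk2
      rcases hvi with h' | h'
      · exact absurd (S.hvinj i k (by omega) (by omega) h') (by omega)
      · left; have h'' : i + 1 - 1 = i := by omega
        rw [hki, h'', ← h']

/-- Every vertex is in `K` or an internal ear vertex. -/
lemma partition (S : Setup n r K v G) (x : V) :
    x ∈ K ∨ ∃ i, 0 < i ∧ i < r - 1 ∧ x = v i := by
  classical
  have hdisj : Disjoint K.toFinset ((Finset.Ioo 0 (r-1)).image v) := by
    rw [Finset.disjoint_right]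
    intro a ha ha'
    obtain ⟨i, hi, rfl⟩ := Finset.mem_image.1 ha
    rw [Finset.mem_Ioo] at hi
    exact S.hvint i hi.1 hi.2 (Set.mem_toFinset.1 ha')
  have hinj : Set.InjOn v ↑(Finset.Ioo 0 (r-1)) := by
    intro i hi j hj hij
    simp only [Finset.coe_Ioo, Set.mem_Ioo] at hi hj
    exact S.hvinj i j (by omega) (by omega) hij
  have hcardim : ((Finset.Ioo 0 (r-1)).image v).card = r - 2 := by
    rw [Finset.card_image_of_injOn hinj, Nat.card_Ioo]
    omega
  have hT : (K.toFinset ∪ (Finset.Ioo 0 (r-1)).image v).card = Fintype.card V := by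
    rw [Finset.card_union_of_disjoint hdisj, hcardim, ← Set.ncard_eq_toFinset_card',
      S.hK, S.hcard]
    have := S.hn; have := S.hr; omega
  have := Finset.eq_univ_of_card _ hT
  have hx : x ∈ K.toFinset ∪ (Finset.Ioo 0 (r-1)).image v := by
    rw [this]; exact Finset.mem_univ x
  rcases Finset.mem_union.1 hx with h | h
  · exact Or.inl (Set.mem_toFinset.1 h)
  · obtain ⟨i, hi, rfl⟩ := Finset.mem_image.1 h
    rw [Finset.mem_Ioo] at hi
    exact Or.inr ⟨i, hi.1, hi.2, rfl⟩

/-- The ascending ear walk from `v i` to `v (i+d)`. -/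
def earWalk (S : Setup n r K v G) : ∀ (d i : ℕ), i + d ≤ r - 1 → G.Walk (v i) (v (i + d))
  | 0, _, _ => Walk.nil
  | (d+1), i, h =>
      Walk.cons (S.adjEar (by omega))
        ((S.earWalk d (i+1) (by omega)).copy rfl (congrArg v (by omega)))

lemma earWalk_support (S : Setup n r K v G) (d i : ℕ) (h : i + d ≤ r - 1) :
    (S.earWalk d i h).support = (List.range' i (d+1)).map v := by
  induction d generalizing i with
  | zero => simp [earWalk]
  | succ d ih =>
      rw [earWalk, Walk.support_cons, Walk.support_copy, ih (i+1) (by omega)]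
      simp [List.range'_succ]
lemma earWalk_edges (S : Setup n r K v G) (d i : ℕ) (h : i + d ≤ r - 1) :
    (S.earWalk d i h).edges = (List.range' i d).map (fun t => s(v t, v (t+1))) := by
  induction d generalizing i with
  | zero => simp [earWalk]
  | succ d ih =>
      rw [earWalk, Walk.edges_cons, Walk.edges_copy, ih (i+1) (by omega)]
      simp [List.range'_succ]

lemma earWalk_isPath (S : Setup n r K v G) (d i : ℕ) (h : i + d ≤ r - 1) :
    (S.earWalk d i h).IsPath := by
  rw [Walk.isPath_def, S.earWalk_support d i h]
  refine ((List.nodup_range' (s := i) (n := d+1)).map_on ?_ : ((List.range' i (d+1)).map v).Nodup)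
  intro a ha b hb hab
  rw [List.mem_range'_1] at ha hb
  exact S.hvinj a b (by omega) (by omega) hab

end Setup
end Stmt14


namespace Stmt14
namespace Setup
variable {n r : ℕ} {V : Type*} [Fintype V] {K : Set V} {v : ℕ → V} {G : SimpleGraph V}

lemma v0ne (S : Setup n r K v G) : v 0 ≠ v (r - 1) :=
  S.vne (by omega) (le_refl _) (by have := S.hs; omega)

/-- ear walk between two given indices -/
def earW (S : Setup n r K v G) (i j : ℕ) (hij : i ≤ j) (hj : j ≤ r - 1) :
    G.Walk (v i) (v j) :=
  (S.earWalk (j - i) i (by omega)).copy rfl (congrArg v (by omega))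

lemma earW_support (S : Setup n r K v G) (i j : ℕ) (hij : i ≤ j) (hj : j ≤ r - 1) :
    (S.earW i j hij hj).support = (List.range' i (j - i + 1)).map v := by
  rw [earW, Walk.support_copy, S.earWalk_support]

lemma earW_edges (S : Setup n r K v G) (i j : ℕ) (hij : i ≤ j) (hj : j ≤ r - 1) :
    (S.earW i j hij hj).edges = (List.range' i (j - i)).map (fun t => s(v t, v (t+1))) := by
  rw [earW, Walk.edges_copy, S.earWalk_edges]

lemma earW_isPath (S : Setup n r K v G) (i j : ℕ) (hij : i ≤ j) (hj : j ≤ r - 1) :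
    (S.earW i j hij hj).IsPath := by
  rw [earW]
  simpa using S.earWalk_isPath (j - i) i (by omega)

lemma mem_earW_support (S : Setup n r K v G) {i j : ℕ} {x : V} (hij : i ≤ j)
    (hj : j ≤ r - 1) :
    x ∈ (S.earW i j hij hj).support ↔ ∃ t, i ≤ t ∧ t ≤ j ∧ x = v t := by
  rw [S.earW_support]
  simp only [List.mem_map, List.mem_range'_1]
  constructor
  · rintro ⟨t, ⟨h1, h2⟩, rfl⟩; exact ⟨t, h1, by omega, rfl⟩
  · rintro ⟨t, h1, h2, rfl⟩; exact ⟨t, ⟨h1, by omega⟩, rfl⟩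

/-- vertex of `K`, not an internal ear vertex -/
lemma not_int_of_memK (S : Setup n r K v G) {x : V} (hx : x ∈ K) {t : ℕ}
    (h1 : 0 < t) (h2 : t < r - 1) : x ≠ v t :=
  fun h => S.hvint t h1 h2 (h ▸ hx)

lemma exists_third (S : Setup n r K v G) (a b : V) :
    ∃ x ∈ K, x ≠ a ∧ x ≠ b := by
  by_contra hcon
  push_neg at hcon
  have hsub : K ⊆ {a, b} := by
    intro x hx
    by_cases h : x = a
    · exact Or.inl h
    · exact Or.inr (hcon x hx h)
  have h2 : K.ncard ≤ ({a, b} : Set V).ncard := Set.ncard_le_ncard hsub (Set.toFinite _)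
  have h3 : ({a, b} : Set V).ncard ≤ 2 := by
    apply le_trans (Set.ncard_insert_le _ _)
    simp
  have := S.hK3
  omega

/-- Two internally vertex-disjoint paths between any two distinct vertices. -/
lemma twoPaths (S : Setup n r K v G) (u w : V) (huw : u ≠ w) :
    ∃ p q : G.Walk u w, p.IsPath ∧ q.IsPath ∧ p ≠ q ∧
      ∀ x ∈ p.support, x ∈ q.support → x = u ∨ x = w := by
  have flip : ∀ (a b : V), (∃ p q : G.Walk a b, p.IsPath ∧ q.IsPath ∧ p ≠ q ∧
      ∀ x ∈ p.support, x ∈ q.support → x = a ∨ x = b) →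
      ∃ p q : G.Walk b a, p.IsPath ∧ q.IsPath ∧ p ≠ q ∧
      ∀ x ∈ p.support, x ∈ q.support → x = b ∨ x = a := by
    rintro a b ⟨p, q, hp, hq, hpq, hd⟩
    refine ⟨p.reverse, q.reverse, hp.reverse, hq.reverse, ?_, ?_⟩
    · intro h
      exact hpq (by rw [← Walk.reverse_reverse p, h, Walk.reverse_reverse])
    · intro x hxp hxq
      rw [Walk.support_reverse, List.mem_reverse] at hxp hxq
      exact (hd x hxp hxq).symm
  -- Case A : both in K
  have caseA : ∀ (a b : V), a ∈ K → b ∈ K → a ≠ b →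
      ∃ p q : G.Walk a b, p.IsPath ∧ q.IsPath ∧ p ≠ q ∧
      ∀ x ∈ p.support, x ∈ q.support → x = a ∨ x = b := by
    intro a b ha hb hab
    obtain ⟨x, hx, hxa, hxb⟩ := S.exists_third a b
    refine ⟨Walk.cons (S.adjK ha hb hab) Walk.nil,
      Walk.cons (S.adjK ha hx hxa.symm) (Walk.cons (S.adjK hx hb hxb) Walk.nil),
      ?_, ?_, ?_, ?_⟩
    · simp [Walk.isPath_def, hab]
    · simp [Walk.isPath_def, hab, hxa.symm, hxb]
    · intro h
      have := congrArg Walk.length h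
      simp at this
    · intro y hy _
      simp only [Walk.support_cons, Walk.support_nil, List.mem_cons,
        List.not_mem_nil, or_false] at hy
      simpa using hy
  -- Case B2 : internal ear vertex to a vertex of K
  have caseB2 : ∀ (i : ℕ) (b : V), 0 < i → i < r - 1 → b ∈ K →
      ∃ p q : G.Walk (v i) b, p.IsPath ∧ q.IsPath ∧ p ≠ q ∧
      ∀ x ∈ p.support, x ∈ q.support → x = v i ∨ x = b := by
    intro i b hi0 hir hb
    have hir' : i ≤ r - 1 := by omega
    by_cases hb0 : b = v 0
    · subst hb0
      refine ⟨(S.earW 0 i (by omega) hir').reverse,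
        (S.earW i (r-1) hir' (le_refl _)).append
          (Walk.cons (S.adjK S.hvlast S.hv0 S.v0ne.symm) Walk.nil), ?_, ?_, ?_, ?_⟩
      · exact (S.earW_isPath _ _ _ _).reverse
      · rw [Walk.isPath_def, Walk.support_append, S.earW_support]
        simp only [Walk.support_cons, Walk.support_nil, List.tail_cons]
        rw [List.nodup_append]
        refine ⟨?_, by simp, ?_⟩
        · refine (List.nodup_range').map_on ?_
          intro t ht t' ht' h
          rw [List.mem_range'_1] at ht ht'
          exact S.hvinj t t' (by omega) (by omega) h
        · rintro y hy _ hy' rfl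
          simp only [List.mem_map, List.mem_range'_1] at hy
          obtain ⟨t, ht, rfl⟩ := hy
          simp only [List.mem_singleton] at hy'
          exact S.vne (by omega) (by omega) (by omega) hy'
      · intro h
        have hmem : v (r-1) ∈ ((S.earW 0 i (by omega) hir').reverse).support := by
          rw [h, Walk.support_append]
          simp
        rw [Walk.support_reverse, List.mem_reverse, S.mem_earW_support] at hmem
        obtain ⟨t, ht0, hti, ht⟩ := hmem
        have := S.hvinj (r-1) t (le_refl _) (by omega) ht
        omega
      · intro x hx hx'
        rw [Walk.support_reverse, List.mem_reverse, S.mem_earW_support] at hx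
        obtain ⟨t, ht0, hti, rfl⟩ := hx
        rw [Walk.support_append] at hx'
        simp only [Walk.support_cons, Walk.support_nil, List.tail_cons,
          List.mem_append, List.mem_singleton] at hx'
        rcases hx' with hx' | hx'
        · rw [S.mem_earW_support] at hx'
          obtain ⟨t', ht1, ht2, he⟩ := hx'
          have := S.hvinj t t' (by omega) (by omega) he
          left; congr 1; omega
        · right; exact hx'
    · by_cases hbl : b = v (r - 1)
      · subst hbl
        refine ⟨S.earW i (r-1) hir' (le_refl _),
          ((S.earW 0 i (by omega) hir').reverse).append
            (Walk.cons (S.adjK S.hv0 S.hvlast S.v0ne) Walk.nil), ?_, ?_, ?_, ?_⟩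
        · exact S.earW_isPath _ _ _ _
        · rw [Walk.isPath_def, Walk.support_append, Walk.support_reverse, S.earW_support]
          simp only [Walk.support_cons, Walk.support_nil, List.tail_cons]
          rw [List.nodup_append]
          refine ⟨?_, by simp, ?_⟩
          · rw [List.nodup_reverse]
            refine (List.nodup_range').map_on ?_
            intro t ht t' ht' h
            rw [List.mem_range'_1] at ht ht'
            exact S.hvinj t t' (by omega) (by omega) h
          · rintro y hy _ hy' rfl
            rw [List.mem_reverse] at hy
            simp only [List.mem_map, List.mem_range'_1] at hy
            obtain ⟨t, ht, rfl⟩ := hy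
            simp only [List.mem_singleton] at hy'
            exact S.vne (by omega) (le_refl _) (by omega) hy'
        · intro h
          have hmem : v 0 ∈ (S.earW i (r-1) hir' (le_refl _)).support := by
            rw [h, Walk.support_append, Walk.support_reverse]
            simp [S.earW_support]
            exact Or.inl ⟨0, by simp [List.mem_range'_1], rfl⟩
          rw [S.mem_earW_support] at hmem
          obtain ⟨t, ht0, hti, ht⟩ := hmem
          have := S.hvinj 0 t (by omega) (by omega) ht
          omega
        · intro x hx hx'
          rw [S.mem_earW_support] at hx
          obtain ⟨t, ht0, hti, rfl⟩ := hx
          rw [Walk.support_append, Walk.support_reverse] at hx'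
          simp only [Walk.support_cons, Walk.support_nil, List.tail_cons,
            List.mem_append, List.mem_reverse, List.mem_singleton] at hx'
          rcases hx' with hx' | hx'
          · rw [S.mem_earW_support] at hx'
            obtain ⟨t', ht1, ht2, he⟩ := hx'
            have := S.hvinj t t' (by omega) (by omega) he
            left; congr 1; omega
          · right; exact hx'
      · -- b ∈ K, b ≠ v 0, b ≠ v (r-1)
        refine ⟨((S.earW 0 i (by omega) hir').reverse).append
            (Walk.cons (S.adjK S.hv0 hb (fun h => hb0 h.symm)) Walk.nil),
          (S.earW i (r-1) hir' (le_refl _)).append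
            (Walk.cons (S.adjK S.hvlast hb (fun h => hbl h.symm)) Walk.nil),
          ?_, ?_, ?_, ?_⟩
        · rw [Walk.isPath_def, Walk.support_append, Walk.support_reverse, S.earW_support]
          simp only [Walk.support_cons, Walk.support_nil, List.tail_cons]
          rw [List.nodup_append]
          refine ⟨?_, by simp, ?_⟩
          · rw [List.nodup_reverse]
            refine (List.nodup_range').map_on ?_
            intro t ht t' ht' h
            rw [List.mem_range'_1] at ht ht'
            exact S.hvinj t t' (by omega) (by omega) h
          · rintro y hy _ hy' rfl
            rw [List.mem_reverse] at hy
            simp only [List.mem_map, List.mem_range'_1] at hy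
            obtain ⟨t, ht, rfl⟩ := hy
            simp only [List.mem_singleton] at hy'
            rcases Nat.eq_zero_or_pos t with h0 | h0
            · subst h0; exact hb0 hy'.symm
            · exact (S.not_int_of_memK hb (by omega) (by omega)) hy'.symm
        · rw [Walk.isPath_def, Walk.support_append, S.earW_support]
          simp only [Walk.support_cons, Walk.support_nil, List.tail_cons]
          rw [List.nodup_append]
          refine ⟨?_, by simp, ?_⟩
          · refine (List.nodup_range').map_on ?_
            intro t ht t' ht' h
            rw [List.mem_range'_1] at ht ht'
            exact S.hvinj t t' (by omega) (by omega) h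
          · rintro y hy _ hy' rfl
            simp only [List.mem_map, List.mem_range'_1] at hy
            obtain ⟨t, ht, rfl⟩ := hy
            simp only [List.mem_singleton] at hy'
            by_cases hrt : t = r - 1
            · subst hrt; exact hbl hy'.symm
            · exact (S.not_int_of_memK hb (by omega) (by omega)) hy'.symm
        · intro h
          have hmem : v (r-1) ∈ (((S.earW 0 i (by omega) hir').reverse).append
              (Walk.cons (S.adjK S.hv0 hb (fun h => hb0 h.symm)) Walk.nil)).support := by
            rw [h, Walk.support_append]
            simp only [List.mem_append]
            left
            rw [S.mem_earW_support]
            exact ⟨r-1, hir', le_refl _, rfl⟩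
          rw [Walk.support_append, Walk.support_reverse] at hmem
          simp only [Walk.support_cons, Walk.support_nil, List.tail_cons,
            List.mem_append, List.mem_reverse, List.mem_singleton] at hmem
          rcases hmem with hmem | hmem
          · rw [S.mem_earW_support] at hmem
            obtain ⟨t, ht0, hti, ht⟩ := hmem
            have := S.hvinj (r-1) t (le_refl _) (by omega) ht
            omega
          · exact hbl hmem.symm
        · intro x hx hx'
          rw [Walk.support_append, Walk.support_reverse] at hx
          rw [Walk.support_append] at hx'
          simp only [Walk.support_cons, Walk.support_nil, List.tail_cons,
            List.mem_append, List.mem_reverse, List.mem_singleton] at hx hx'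
          rcases hx with hx | hx
          · rw [S.mem_earW_support] at hx
            obtain ⟨t, ht0, hti, rfl⟩ := hx
            rcases hx' with hx' | hx'
            · rw [S.mem_earW_support] at hx'
              obtain ⟨t', ht1, ht2, he⟩ := hx'
              have := S.hvinj t t' (by omega) (by omega) he
              left; congr 1; omega
            · rcases Nat.eq_zero_or_pos t with h0 | h0
              · subst h0; exact absurd hx'.symm hb0
              · exact absurd hx'.symm (S.not_int_of_memK hb (by omega) (by omega))
          · right; exact hx
  -- Case B1 : two internal ear vertices
  have caseB1 : ∀ (i j : ℕ), 0 < i → i < j → j < r - 1 →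
      ∃ p q : G.Walk (v i) (v j), p.IsPath ∧ q.IsPath ∧ p ≠ q ∧
      ∀ x ∈ p.support, x ∈ q.support → x = v i ∨ x = v j := by
    intro i j hi0 hij hjr
    refine ⟨S.earW i j (le_of_lt hij) (by omega),
      ((S.earW 0 i (by omega) (by omega)).reverse).append
        (Walk.cons (S.adjK S.hv0 S.hvlast S.v0ne)
          (S.earW j (r-1) (by omega) (le_refl _)).reverse), ?_, ?_, ?_, ?_⟩
    · exact S.earW_isPath _ _ _ _
    · rw [Walk.isPath_def, Walk.support_append, Walk.support_reverse]
      simp only [Walk.support_cons, Walk.support_reverse, List.tail_cons]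
      rw [List.nodup_append]
      refine ⟨?_, ?_, ?_⟩
      · rw [List.nodup_reverse, S.earW_support]
        refine (List.nodup_range').map_on ?_
        intro t ht t' ht' h
        rw [List.mem_range'_1] at ht ht'
        exact S.hvinj t t' (by omega) (by omega) h
      · rw [List.nodup_reverse, S.earW_support]
        refine (List.nodup_range').map_on ?_
        intro t ht t' ht' h
        rw [List.mem_range'_1] at ht ht'
        exact S.hvinj t t' (by omega) (by omega) h
      · rintro y hy _ hy' rfl
        rw [List.mem_reverse] at hy hy'
        rw [S.earW_support] at hy hy'
        simp only [List.mem_map, List.mem_range'_1] at hy hy'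
        obtain ⟨t, ht, rfl⟩ := hy
        obtain ⟨t', ht', he⟩ := hy'
        have := S.hvinj t' t (by omega) (by omega) he
        omega
    · intro h
      have hmem : v 0 ∈ (S.earW i j (le_of_lt hij) (by omega : j ≤ r - 1)).support := by
        rw [h, Walk.support_append, Walk.support_reverse]
        simp only [List.mem_append, List.mem_reverse]
        left
        rw [S.mem_earW_support]
        exact ⟨0, le_refl _, by omega, rfl⟩
      rw [S.mem_earW_support] at hmem
      obtain ⟨t, ht0, hti, ht⟩ := hmem
      have := S.hvinj 0 t (by omega) (by omega) ht
      omega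
    · intro x hx hx'
      rw [S.mem_earW_support] at hx
      obtain ⟨t, ht0, hti, rfl⟩ := hx
      rw [Walk.support_append, Walk.support_reverse] at hx'
      simp only [Walk.support_cons, Walk.support_reverse, List.tail_cons,
        List.mem_append, List.mem_reverse] at hx'
      rcases hx' with hx' | hx'
      · rw [S.mem_earW_support] at hx'
        obtain ⟨t', ht1, ht2, he⟩ := hx'
        have := S.hvinj t t' (by omega) (by omega) he
        left; congr 1; omega
      · rw [S.mem_earW_support] at hx'
        obtain ⟨t', ht1, ht2, he⟩ := hx'
        have := S.hvinj t t' (by omega) (by omega) he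
        right; congr 1; omega
  -- assembly
  rcases S.partition u with hu | ⟨i, hi0, hir, rfl⟩
  · rcases S.partition w with hw | ⟨j, hj0, hjr, rfl⟩
    · exact caseA u w hu hw huw
    · exact flip _ _ (caseB2 j u hj0 hjr hu)
  · rcases S.partition w with hw | ⟨j, hj0, hjr, rfl⟩
    · exact caseB2 i w hi0 hir hw
    · have hij : i ≠ j := by
        intro h; exact huw (by rw [h])
      rcases lt_or_gt_of_ne hij with h | h
      · exact caseB1 i j hi0 h hjr
      · exact flip _ _ (caseB1 j i hj0 h hir)

end Setup
end Stmt14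


namespace Stmt14

lemma reachable_induce {V : Type*} {G : SimpleGraph V} {A : Set V} :
    ∀ {a b : V} (ha : a ∈ A) (hb : b ∈ A) (p : G.Walk a b),
      (∀ x ∈ p.support, x ∈ A) → (G.induce A).Reachable ⟨a, ha⟩ ⟨b, hb⟩ := by
  intro a b ha hb p
  induction p with
  | nil => intro _; rfl
  | @cons a c b h p ih =>
      intro hs
      have hc : c ∈ A := hs c (by simp)
      have h1 : (G.induce A).Adj ⟨a, ha⟩ ⟨c, hc⟩ := by simpa using h
      exact h1.reachable.trans (ih hc hb (fun x hx => hs x (by simp [hx])))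

namespace Setup
variable {n r : ℕ} {V : Type*} [Fintype V] {K : Set V} {v : ℕ → V} {G : SimpleGraph V}

lemma twoConnected (S : Setup n r K v G) : TwoConnected G := by
  constructor
  · rw [S.hcard]; have := S.hn; have := S.hr; omega
  · intro w
    have hne : Nonempty ({w}ᶜ : Set V) := by
      have hlt : 1 < Fintype.card V := by
        rw [S.hcard]; have := S.hn; have := S.hr; omega
      obtain ⟨u, hu⟩ := Fintype.exists_ne_of_one_lt_card hlt w
      exact ⟨⟨u, by simp [hu]⟩⟩
    rw [connected_iff]
    refine ⟨?_, hne⟩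
    rintro ⟨a, ha⟩ ⟨b, hb⟩
    by_cases hab : a = b
    · subst hab; rfl
    · obtain ⟨p, q, hp, hq, hpq, hd⟩ := S.twoPaths a b hab
      have haw : a ≠ w := by simpa using ha
      have hbw : b ≠ w := by simpa using hb
      have hw : w ∉ p.support ∨ w ∉ q.support := by
        by_contra hc
        push_neg at hc
        rcases hd w hc.1 hc.2 with h | h
        · exact haw h.symm
        · exact hbw h.symm
      rcases hw with hw | hw
      · exact reachable_induce ha hb p (fun x hx => by
          simp only [Set.mem_compl_iff, Set.mem_singleton_iff]
          rintro rfl; exact hw hx)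
      · exact reachable_induce ha hb q (fun x hx => by
          simp only [Set.mem_compl_iff, Set.mem_singleton_iff]
          rintro rfl; exact hw hx)

lemma colExists (S : Setup n r K v G) :
    ∃ N : ℕ, ∃ col : Sym2 V → Fin N, RainbowTwoConnectedColouring G col := by
  classical
  refine ⟨Fintype.card (Sym2 V), fun e => (Fintype.equivFin (Sym2 V)) e, ?_⟩
  intro u w huw
  obtain ⟨p, q, hp, hq, hpq, hd⟩ := S.twoPaths u w huw
  exact ⟨p, q, hp, hq, hpq,
    hp.edges_nodup.map (Equiv.injective _),
    hq.edges_nodup.map (Equiv.injective _), hd⟩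

lemma edgeCount (S : Setup n r K v G) :
    G.edgeSet.ncard = Nat.choose (n - r + 2) 2 + (r - 1) := by
  classical
  set A : Set (Sym2 V) := Sym2.map (Subtype.val : K → V) '' {e : Sym2 ↥K | ¬ e.IsDiag}
    with hA
  set B : Set (Sym2 V) := (fun t => s(v t, v (t+1))) '' ↑(Finset.range (r-1)) with hB
  have memA : ∀ e : Sym2 V, e ∈ A ↔ ∃ a b : V, a ∈ K ∧ b ∈ K ∧ a ≠ b ∧ e = s(a, b) := by
    intro e
    constructor
    · rintro ⟨e', he', rfl⟩
      induction e' using Sym2.ind with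
      | _ x y =>
          refine ⟨x, y, x.2, y.2, ?_, rfl⟩
          intro h
          exact he' (Sym2.mk_isDiag_iff.2 (Subtype.ext h))
    · rintro ⟨a, b, ha, hb, hab, rfl⟩
      refine ⟨s(⟨a, ha⟩, ⟨b, hb⟩), ?_, rfl⟩
      simp only [Set.mem_setOf_eq, Sym2.mk_isDiag_iff]
      exact fun h => hab (congrArg Subtype.val h)
  have hunion : G.edgeSet = A ∪ B := by
    ext e
    induction e using Sym2.ind with
    | _ a b =>
        rw [mem_edgeSet, S.hadj]
        constructor
        · rintro (⟨ha, hb, hab⟩ | ⟨i, hi, hset⟩)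
          · exact Or.inl ((memA _).2 ⟨a, b, ha, hb, hab, rfl⟩)
          · right
            rw [Set.pair_eq_pair_iff] at hset
            refine ⟨i, by simp [Finset.mem_range]; omega, ?_⟩
            rcases hset with ⟨h1, h2⟩ | ⟨h1, h2⟩
            · rw [h1, h2]
            · rw [h1, h2]; exact Sym2.eq_swap
        · rintro (hAmem | hBmem)
          · obtain ⟨a', b', ha, hb, hab, he⟩ := (memA _).1 hAmem
            rw [Sym2.eq_iff] at he
            rcases he with ⟨rfl, rfl⟩ | ⟨rfl, rfl⟩
            · exact Or.inl ⟨ha, hb, hab⟩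
            · exact Or.inl ⟨hb, ha, hab.symm⟩
          · obtain ⟨t, ht, he⟩ := hBmem
            simp only [Finset.coe_range, Set.mem_Iio] at ht
            rw [Sym2.eq_iff] at he
            right
            refine ⟨t, by omega, ?_⟩
            rcases he with ⟨rfl, rfl⟩ | ⟨rfl, rfl⟩
            · rfl
            · rw [Set.pair_comm]
  have hAcard : A.ncard = Nat.choose (n - r + 2) 2 := by
    rw [hA, Set.ncard_image_of_injective _ (Sym2.map.injective Subtype.val_injective)]
    have h1 : ({e : Sym2 ↥K | ¬ e.IsDiag}).ncard
        = Fintype.card {e : Sym2 ↥K // ¬ e.IsDiag} := by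
      rw [← Nat.card_coe_set_eq, Nat.card_eq_fintype_card]
      exact Fintype.card_congr (Equiv.subtypeEquivRight (fun _ => Iff.rfl))
    rw [h1, Sym2.card_subtype_not_diag]
    congr 1
    rw [← Nat.card_coe_set_eq] at *
    rw [← S.hK, ← Nat.card_coe_set_eq, Nat.card_eq_fintype_card]
  have hBcard : B.ncard = r - 1 := by
    rw [hB, Set.ncard_image_of_injOn, Set.ncard_coe_finset, Finset.card_range]
    intro t ht t' ht' h
    simp only [Finset.coe_range, Set.mem_Iio] at ht ht'
    rw [Sym2.eq_iff] at h
    rcases h with ⟨h1, _⟩ | ⟨h1, h2⟩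
    · exact S.hvinj t t' (by omega) (by omega) h1
    · have e1 := S.hvinj t (t'+1) (by omega) (by omega) h1
      have e2 := S.hvinj (t+1) t' (by omega) (by omega) h2
      omega
  have hdisj : Disjoint A B := by
    rw [Set.disjoint_left]
    intro e heA heB
    obtain ⟨a, b, ha, hb, hab, rfl⟩ := (memA _).1 heA
    obtain ⟨t, ht, he⟩ := heB
    simp only [Finset.coe_range, Set.mem_Iio] at ht
    rw [Sym2.eq_iff] at he
    have hint : ∃ m, 0 < m ∧ m < r - 1 ∧ (v m = a ∨ v m = b) := by
      rcases Nat.eq_zero_or_pos t with h0 | h0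
      · subst h0
        rcases he with ⟨h1, h2⟩ | ⟨h1, h2⟩
        · exact ⟨1, by omega, by have := S.hs; omega, Or.inr h2⟩
        · exact ⟨1, by omega, by have := S.hs; omega, Or.inl h2⟩
      · rcases he with ⟨h1, h2⟩ | ⟨h1, h2⟩
        · exact ⟨t, h0, by omega, Or.inl h1⟩
        · exact ⟨t, h0, by omega, Or.inr h1⟩
    obtain ⟨m, hm0, hmr, hma⟩ := hint
    rcases hma with h | h
    · exact S.hvint m hm0 hmr (h ▸ ha)
    · exact S.hvint m hm0 hmr (h ▸ hb)
  rw [hunion, Set.ncard_union_eq hdisj (Set.toFinite _) (Set.toFinite _), hAcard, hBcard]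

end Setup
end Stmt14


namespace Stmt14

section Helpers
variable {V : Type*} {G : SimpleGraph V}

lemma getSecond {u z : V} (p : G.Walk u z) (hne : u ≠ z) :
    ∃ (b : V) (h : G.Adj u b) (q : G.Walk b z), p = Walk.cons h q :=
  Walk.not_nil_iff.1 (Walk.not_nil_of_ne hne)

lemma second_mem {u z b : V} {p : G.Walk u z} {h : G.Adj u b} {q : G.Walk b z}
    (he : p = Walk.cons h q) : b ∈ p.support := by
  rw [he, Walk.support_cons]
  exact List.mem_cons_of_mem _ q.start_mem_support

lemma path_second_eq_end {u z b : V} {p : G.Walk u z} {h : G.Adj u b} {q : G.Walk b z}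
    (hpe : p = Walk.cons h q) (hp : p.IsPath) (hbz : b = z) :
    ∃ h' : G.Adj u z, p = Walk.cons h' Walk.nil := by
  subst hbz
  rw [hpe] at hp
  have hq : q = Walk.nil := (Walk.isPath_iff_eq_nil (p := q)).1 hp.of_cons
  exact ⟨h, by rw [hpe, hq]⟩

lemma length_pos_of_ne {u z : V} (p : G.Walk u z) (h : u ≠ z) : 1 ≤ p.length := by
  by_contra hc
  push_neg at hc
  have h0 : p.length = 0 := by omega
  exact h (Walk.nil_iff_length_eq.2 h0).eq

lemma length_one_struct {u z : V} (p : G.Walk u z) (h1 : p.length = 1) :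
    ∃ h : G.Adj u z, p = Walk.cons h Walk.nil := by
  have hnn : ¬ p.Nil := by
    rw [Walk.nil_iff_length_eq, h1]
    simp
  obtain ⟨b, hb, q, rfl⟩ := Walk.not_nil_iff.1 hnn
  have hq0 : q.length = 0 := by
    rw [Walk.length_cons] at h1; omega
  have hbz : b = z := (Walk.nil_iff_length_eq.2 hq0).eq
  subst hbz
  cases q with
  | nil => exact ⟨hb, rfl⟩
  | cons h' q' => rw [Walk.length_cons] at hq0; omega

lemma length_one_edges {u z : V} (p : G.Walk u z) (h1 : p.length = 1) :
    p.edges = [s(u, z)] := by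
  obtain ⟨h, rfl⟩ := length_one_struct p h1
  simp

lemma rainbow_length_le {t : ℕ} (col : Sym2 V → Fin t) {u z : V} {p : G.Walk u z}
    (h : (p.edges.map col).Nodup) : p.length ≤ t := by
  have := h.length_le_card
  simpa [Walk.length_edges] using this

lemma pigeon2 {t : ℕ} (ht : t ≤ 2) (a b x : Fin t) (ha : a ≠ x) (hb : b ≠ x) :
    a = b := by
  by_contra hab
  have hnd : [a, b, x].Nodup := by simp [ha, hb, hab]
  have := hnd.length_le_card
  simp [Fintype.card_fin] at this
  omega

end Helpers

namespace Setup
variable {n r : ℕ} {V : Type*} [Fintype V] {K : Set V} {v : ℕ → V} {G : SimpleGraph V}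

lemma earForce (S : Setup n r K v G) :
    ∀ (m k : ℕ), k + m = r - 1 → 1 ≤ k → ∀ z, z ∈ K →
    ∀ (p : G.Walk (v k) z), p.IsPath →
    (k < r - 1 → ∃ (h : G.Adj (v k) (v (k+1))) (q : G.Walk (v (k+1)) z),
        p = Walk.cons h q) →
    ∃ q : G.Walk (v (r-1)) z, q.IsPath ∧
      p.edges = (List.range' k m).map (fun i => s(v i, v (i+1))) ++ q.edges := by
  intro m
  induction m with
  | zero =>
      intro k hk _ z _ p hp _
      have hk' : k = r - 1 := by omega
      subst hk'
      exact ⟨p, hp, by simp⟩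
  | succ m ih =>
      intro k hk hk1 z hz p hp hsec
      have hks : k < r - 1 := by omega
      obtain ⟨h, q, rfl⟩ := hsec hks
      have hq : q.IsPath := hp.of_cons
      have hknot : v k ∉ q.support := ((Walk.cons_isPath_iff h q).1 hp).2
      have hsec' : k + 1 < r - 1 → ∃ (h' : G.Adj (v (k+1)) (v (k+1+1)))
          (q' : G.Walk (v (k+1+1)) z), q = Walk.cons h' q' := by
        intro hlt
        have hne : v (k+1) ≠ z := fun he => S.hvint (k+1) (by omega) hlt (he ▸ hz)
        obtain ⟨b, hb, q', he'⟩ := getSecond q hne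
        rcases S.nbr (by omega) hlt hb with hb' | hb'
        · exfalso
          have hbk : b = v k := by rw [hb']; congr 1
          subst hbk
          exact hknot (second_mem he')
        · subst hb'
          exact ⟨hb, q', he'⟩
      obtain ⟨q', hq', he⟩ := ih (k+1) (by omega) (by omega) z hz q hq hsec'
      refine ⟨q', hq', ?_⟩
      rw [Walk.edges_cons, he, List.range'_succ]
      simp

lemma forcedShape (S : Setup n r K v G) {k : ℕ} (hk1 : 1 ≤ k) (hk2 : k ≤ r - 1)
    {z : V} (hz : z ∈ K) (hzs : z ≠ v (r-1)) (p : G.Walk (v k) z) (hp : p.IsPath)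
    (hsec : k < r - 1 → ∃ (h : G.Adj (v k) (v (k+1))) (q : G.Walk (v (k+1)) z),
        p = Walk.cons h q)
    (hlen : p.length ≤ r - k) :
    p.edges = (List.range' k (r-1-k)).map (fun i => s(v i, v (i+1)))
      ++ [s(v (r-1), z)] := by
  obtain ⟨q, hq, he⟩ := S.earForce (r-1-k) k (by omega) hk1 z hz p hp hsec
  have hlq : q.length = 1 := by
    have h1 : p.edges.length = (r-1-k) + q.edges.length := by
      rw [he]; simp
    rw [Walk.length_edges, Walk.length_edges] at h1
    have h2 : 1 ≤ q.length := length_pos_of_ne q (fun hh => hzs hh.symm)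
    omega
  rw [he, length_one_edges q hlq]

end Setup
end Stmt14


namespace Stmt14
namespace Setup
variable {n r : ℕ} {V : Type*} [Fintype V] {K : Set V} {v : ℕ → V} {G : SimpleGraph V}

lemma noSmallColouring (S : Setup n r K v G) {t : ℕ} (ht : t ≤ r - 1)
    (col : Sym2 V → Fin t) (H : RainbowTwoConnectedColouring G col) : False := by
  have hs := S.hs
  have hne01 : v 0 ≠ v 1 := S.vne (by omega) (by omega) (by omega)
  have hne12 : v 1 ≠ v 2 := S.vne (by omega) (by omega) (by omega)
  have hne02 : v 0 ≠ v 2 := S.vne (by omega) (by omega) (by omega)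
  -- STEP 1 : from the pair (v 0, v 1)
  have step1 : (((List.range' 1 (r-1-1)).map (fun i => s(v i, v (i+1)))
      ++ [s(v (r-1), v 0)]).map col).Nodup := by
    obtain ⟨P, Q, hP, hQ, hPQ, hrP, hrQ, hdisj⟩ := H (v 0) (v 1) hne01
    have hrP' : (P.reverse.edges.map col).Nodup := by
      rw [Walk.edges_reverse, List.map_reverse, List.nodup_reverse]; exact hrP
    have hrQ' : (Q.reverse.edges.map col).Nodup := by
      rw [Walk.edges_reverse, List.map_reverse, List.nodup_reverse]; exact hrQ
    obtain ⟨W, hWpath, hWrb, hWsec⟩ :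
        ∃ W : G.Walk (v 1) (v 0), W.IsPath ∧ (W.edges.map col).Nodup ∧
          (∃ (h : G.Adj (v 1) (v (1+1))) (q : G.Walk (v (1+1)) (v 0)),
            W = Walk.cons h q) := by
      obtain ⟨bP, hbP, qP, hPe⟩ := getSecond P.reverse hne01.symm
      obtain ⟨bQ, hbQ, qQ, hQe⟩ := getSecond Q.reverse hne01.symm
      rcases S.nbr (k := 1) (by omega) (by omega) hbP with h1 | h1
      · rcases S.nbr (k := 1) (by omega) (by omega) hbQ with h2 | h2
        · exfalso
          have h1' : bP = v 0 := by simpa using h1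
          have h2' : bQ = v 0 := by simpa using h2
          obtain ⟨hP1, eP⟩ := path_second_eq_end hPe hP.reverse h1'
          obtain ⟨hQ1, eQ⟩ := path_second_eq_end hQe hQ.reverse h2'
          apply hPQ
          have hrev : P.reverse = Q.reverse := by rw [eP, eQ]
          have h3 := congrArg Walk.reverse hrev
          rwa [Walk.reverse_reverse, Walk.reverse_reverse] at h3
        · subst h2
          exact ⟨Q.reverse, hQ.reverse, hrQ', hbQ, qQ, hQe⟩
      · subst h1
        exact ⟨P.reverse, hP.reverse, hrP', hbP, qP, hPe⟩
    have hshape := S.forcedShape (k := 1) (by omega) (by omega) S.hv0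
        S.v0ne W hWpath (fun _ => hWsec) (by
          have := rainbow_length_le col hWrb; omega)
    rw [hshape] at hWrb
    exact hWrb
  -- STEP 2 : from the pair (v 1, v 2)
  have step2 : ∀ y ∈ (((List.range' 2 (r-1-2)).map (fun i => s(v i, v (i+1)))
      ++ [s(v (r-1), v 0)]).map col), col s(v 0, v 1) ≠ y := by
    obtain ⟨P, Q, hP, hQ, hPQ, hrP, hrQ, hdisj⟩ := H (v 1) (v 2) hne12
    obtain ⟨W₁, hW1adj, hWpath, hWrb⟩ :
        ∃ (W₁ : G.Walk (v 0) (v 2)) (h : G.Adj (v 1) (v 0)),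
          (Walk.cons h W₁).IsPath ∧ ((Walk.cons h W₁).edges.map col).Nodup := by
      obtain ⟨bP, hbP, qP, hPe⟩ := getSecond P hne12
      obtain ⟨bQ, hbQ, qQ, hQe⟩ := getSecond Q hne12
      rcases S.nbr (k := 1) (by omega) (by omega) hbP with h1 | h1
      · have h1' : bP = v 0 := by simpa using h1
        subst h1'
        exact ⟨qP, hbP, by rw [← hPe]; exact hP, by rw [← hPe]; exact hrP⟩
      · rcases S.nbr (k := 1) (by omega) (by omega) hbQ with h2 | h2
        · have h2' : bQ = v 0 := by simpa using h2
          subst h2'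
          exact ⟨qQ, hbQ, by rw [← hQe]; exact hQ, by rw [← hQe]; exact hrQ⟩
        · exfalso
          have h1' : bP = v 2 := by simpa using h1
          have h2' : bQ = v 2 := by simpa using h2
          obtain ⟨hP1, eP⟩ := path_second_eq_end hPe hP h1'
          obtain ⟨hQ1, eQ⟩ := path_second_eq_end hQe hQ h2'
          exact hPQ (by rw [eP, eQ])
    have hv1not : v 1 ∉ W₁.support := ((Walk.cons_isPath_iff _ _).1 hWpath).2
    have hW1path : W₁.IsPath := hWpath.of_cons
    have hbud : W₁.length ≤ r - 2 := by
      have h1 := rainbow_length_le col hWrb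
      rw [Walk.length_cons] at h1
      omega
    have hsec2 : 2 < r - 1 → ∃ (h : G.Adj (v 2) (v (2+1)))
        (q : G.Walk (v (2+1)) (v 0)), W₁.reverse = Walk.cons h q := by
      intro hlt
      obtain ⟨b, hb, q2, he2⟩ := getSecond W₁.reverse hne02.symm
      rcases S.nbr (k := 2) (by omega) hlt hb with hb' | hb'
      · exfalso
        have hb1 : b = v 1 := by simpa using hb'
        subst hb1
        have hmem := second_mem he2
        rw [Walk.support_reverse, List.mem_reverse] at hmem
        exact hv1not hmem
      · subst hb'
        exact ⟨hb, q2, he2⟩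
    have hshape := S.forcedShape (k := 2) (by omega) (by omega) S.hv0 S.v0ne
        W₁.reverse hW1path.reverse hsec2 (by rw [Walk.length_reverse]; omega)
    intro y hy hcol
    rw [Walk.edges_cons, List.map_cons, List.nodup_cons] at hWrb
    apply hWrb.1
    have hy' : y ∈ W₁.edges.map col := by
      have hEq : W₁.edges = ((List.range' 2 (r-1-2)).map (fun i => s(v i, v (i+1)))
          ++ [s(v (r-1), v 0)]).reverse := by
        have h2 := congrArg List.reverse hshape
        rwa [Walk.edges_reverse, List.reverse_reverse] at h2
      rw [hEq, List.map_reverse, List.mem_reverse]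
      exact hy
    rw [show s(v 1, v 0) = s(v 0, v 1) from Sym2.eq_swap, hcol]
    exact hy'
  rcases Nat.lt_or_ge r 4 with hr4 | hr4
  · -- r = 3
    have hr3 : r = 3 := by have := S.hr; omega
    have ht2 : t ≤ 2 := by omega
    have hc1d : col s(v 1, v 2) ≠ col s(v (r-1), v 0) := by
      have e1 : List.range' 1 (r-1-1) = [1] := by
        rw [show r-1-1 = 1 by omega]
        rfl
      rw [e1] at step1
      simp only [List.map_cons, List.map_nil, List.nil_append, List.cons_append,
        List.nodup_cons] at step1
      have h1 := step1.1
      rw [show v (1+1) = v 2 from congrArg v (by norm_num)] at h1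
      simpa using h1
    have hc0d : col s(v 0, v 1) ≠ col s(v (r-1), v 0) := by
      apply step2
      rw [show r-1-2 = 0 by omega]
      simp
    have hc0c1 : col s(v 0, v 1) = col s(v 1, v 2) :=
      pigeon2 ht2 _ _ _ hc0d hc1d
    have hv2K : v 2 ∈ K := by
      rw [show v 2 = v (r-1) from congrArg v (by omega)]
      exact S.hvlast
    -- STEP 3' : colours of edges at v 0 and v 2 towards other K-vertices
    have step3' : ∀ x₀, x₀ ∈ K → x₀ ≠ v 0 → x₀ ≠ v 2 →
        col s(v 0, x₀) = col s(v (r-1), v 0) ∧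
        col s(v 2, x₀) = col s(v (r-1), v 0) := by
      intro x₀ hx0 hx00 hx02
      have hnex : v 1 ≠ x₀ := fun h =>
        (S.not_int_of_memK hx0 (by omega) (by omega)) h.symm
      obtain ⟨P, Q, hP, hQ, hPQ, hrP, hrQ, hdisj⟩ := H (v 1) x₀ hnex
      obtain ⟨bP, hbP, qP, hPe⟩ := getSecond P hnex
      obtain ⟨bQ, hbQ, qQ, hQe⟩ := getSecond Q hnex
      have hbP'' : bP = v 0 ∨ bP = v 2 := by
        rcases S.nbr (k := 1) (by omega) (by omega) hbP with h | h
        · exact Or.inl (by simpa using h)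
        · exact Or.inr (by simpa using h)
      have hbQ'' : bQ = v 0 ∨ bQ = v 2 := by
        rcases S.nbr (k := 1) (by omega) (by omega) hbQ with h | h
        · exact Or.inl (by simpa using h)
        · exact Or.inr (by simpa using h)
      have extract : ∀ (X : G.Walk (v 1) x₀), X.IsPath → (X.edges.map col).Nodup →
          ∀ (a : V), a ≠ x₀ → ∀ (hbX : G.Adj (v 1) a) (qX : G.Walk a x₀),
          X = Walk.cons hbX qX → col s(a, x₀) ≠ col s(v 1, a) := by
        intro X hXp hXrb a hax hbX qX hXe
        have hql : qX.length = 1 := by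
          have hl := rainbow_length_le col hXrb
          rw [hXe, Walk.length_cons] at hl
          have := length_pos_of_ne qX hax
          omega
        have hqe : qX.edges = [s(a, x₀)] := length_one_edges qX hql
        rw [hXe, Walk.edges_cons, hqe] at hXrb
        simp only [List.map_cons, List.map_nil, List.nodup_cons, List.mem_cons,
          List.not_mem_nil, or_false, List.mem_singleton, List.nodup_nil,
          not_false_eq_true, and_true] at hXrb
        exact fun h => hXrb h.symm
      rcases hbP'' with hbP0 | hbP2
      · rcases hbQ'' with hbQ0 | hbQ2
        · exfalso
          have m1 : v 0 ∈ P.support := hbP0 ▸ second_mem hPe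
          have m2 : v 0 ∈ Q.support := hbQ0 ▸ second_mem hQe
          rcases hdisj (v 0) m1 m2 with h | h
          · exact hne01 h
          · exact hx00 h.symm
        · subst hbP0; subst hbQ2
          have e0 := extract P hP hrP (v 0) (Ne.symm hx00) hbP qP hPe
          have e2 := extract Q hQ hrQ (v 2) (Ne.symm hx02) hbQ qQ hQe
          have k0 : col s(v 0, x₀) ≠ col s(v 0, v 1) := by
            rw [show s(v 0, v 1) = s(v 1, v 0) from Sym2.eq_swap]
            exact e0
          have k2 : col s(v 2, x₀) ≠ col s(v 0, v 1) := by
            rw [hc0c1]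
            exact e2
          exact ⟨pigeon2 ht2 _ _ _ k0 hc0d.symm, pigeon2 ht2 _ _ _ k2 hc0d.symm⟩
      · rcases hbQ'' with hbQ0 | hbQ2
        · subst hbP2; subst hbQ0
          have e2 := extract P hP hrP (v 2) (Ne.symm hx02) hbP qP hPe
          have e0 := extract Q hQ hrQ (v 0) (Ne.symm hx00) hbQ qQ hQe
          have k0 : col s(v 0, x₀) ≠ col s(v 0, v 1) := by
            rw [show s(v 0, v 1) = s(v 1, v 0) from Sym2.eq_swap]
            exact e0
          have k2 : col s(v 2, x₀) ≠ col s(v 0, v 1) := by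
            rw [hc0c1]
            exact e2
          exact ⟨pigeon2 ht2 _ _ _ k0 hc0d.symm, pigeon2 ht2 _ _ _ k2 hc0d.symm⟩
        · exfalso
          have m1 : v 2 ∈ P.support := hbP2 ▸ second_mem hPe
          have m2 : v 2 ∈ Q.support := hbQ2 ▸ second_mem hQe
          rcases hdisj (v 2) m1 m2 with h | h
          · exact hne12 h.symm
          · exact hx02 h.symm
    -- STEP 4' : contradiction from the pair (v 0, v 2)
    obtain ⟨P, Q, hP, hQ, hPQ, hrP, hrQ, hdisj⟩ := H (v 0) (v 2) hne02
    obtain ⟨W, hWp, hWrb, hWl⟩ :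
        ∃ W : G.Walk (v 0) (v 2), W.IsPath ∧ (W.edges.map col).Nodup ∧
          W.length = 2 := by
      have lP := rainbow_length_le col hrP
      have lQ := rainbow_length_le col hrQ
      have lP1 := length_pos_of_ne P hne02
      have lQ1 := length_pos_of_ne Q hne02
      rcases Nat.lt_or_ge P.length 2 with h | h
      · rcases Nat.lt_or_ge Q.length 2 with h' | h'
        · exfalso
          obtain ⟨hP1, eP⟩ := length_one_struct P (by omega)
          obtain ⟨hQ1, eQ⟩ := length_one_struct Q (by omega)
          exact hPQ (by rw [eP, eQ])
        · exact ⟨Q, hQ, hrQ, by omega⟩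
      · exact ⟨P, hP, hrP, by omega⟩
    obtain ⟨m, hm1, q, hWe⟩ := getSecond W hne02
    have hql : q.length = 1 := by
      rw [hWe, Walk.length_cons] at hWl; omega
    obtain ⟨hm2, eq2⟩ := length_one_struct q hql
    have hWed : W.edges = [s(v 0, m), s(m, v 2)] := by
      rw [hWe, Walk.edges_cons, eq2]; simp
    rw [hWed] at hWrb
    simp only [List.map_cons, List.map_nil, List.nodup_cons, List.mem_cons,
      List.not_mem_nil, or_false, List.mem_singleton, List.nodup_nil,
      not_false_eq_true, and_true] at hWrb
    rcases S.partition m with hmK | ⟨i, hi0, hir, rfl⟩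
    · have hm0 : m ≠ v 0 := hm1.ne.symm
      have hm2' : m ≠ v 2 := hm2.ne
      obtain ⟨k0, k2⟩ := step3' m hmK hm0 hm2'
      apply hWrb
      rw [show s(m, v 2) = s(v 2, m) from Sym2.eq_swap, k0, k2]
    · have hi1 : i = 1 := by omega
      subst hi1
      exact hWrb hc0c1
  · -- r ≥ 4
    have step3 : col s(v 0, v 1) ≠ col s(v 1, v 2) := by
      obtain ⟨P, Q, hP, hQ, hPQ, hrP, hrQ, hdisj⟩ := H (v 0) (v 2) hne02
      have hrP' : (P.reverse.edges.map col).Nodup := by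
        rw [Walk.edges_reverse, List.map_reverse, List.nodup_reverse]; exact hrP
      have hrQ' : (Q.reverse.edges.map col).Nodup := by
        rw [Walk.edges_reverse, List.map_reverse, List.nodup_reverse]; exact hrQ
      obtain ⟨W, hWpath, hWrb, hWsec⟩ :
          ∃ W : G.Walk (v 2) (v 0), W.IsPath ∧ (W.edges.map col).Nodup ∧
            ∃ (h : G.Adj (v 2) (v 1)) (q : G.Walk (v 1) (v 0)),
              W = Walk.cons h q := by
        obtain ⟨bP, hbP, qP, hPe⟩ := getSecond P.reverse hne02.symm
        obtain ⟨bQ, hbQ, qQ, hQe⟩ := getSecond Q.reverse hne02.symm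
        rcases S.nbr (k := 2) (by omega) (by omega) hbP with h1 | h1
        · have h1' : bP = v 1 := by simpa using h1
          subst h1'
          exact ⟨P.reverse, hP.reverse, hrP', hbP, qP, hPe⟩
        · rcases S.nbr (k := 2) (by omega) (by omega) hbQ with h2 | h2
          · have h2' : bQ = v 1 := by simpa using h2
            subst h2'
            exact ⟨Q.reverse, hQ.reverse, hrQ', hbQ, qQ, hQe⟩
          · exfalso
            have h1' : bP = v 3 := by simpa using h1
            have h2' : bQ = v 3 := by simpa using h2
            subst h1'; subst h2'
            have m1 := second_mem hPe
            have m2 := second_mem hQe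
            rw [Walk.support_reverse, List.mem_reverse] at m1 m2
            rcases hdisj (v 3) m1 m2 with h | h
            · exact S.vne (i := 3) (by omega) (by omega) (by omega) h
            · exact S.vne (i := 3) (by omega) (by omega) (by omega) h
      obtain ⟨h21, q, hWe⟩ := hWsec
      have hWpath' : (Walk.cons h21 q).IsPath := by rw [← hWe]; exact hWpath
      have hv2not : v 2 ∉ q.support := ((Walk.cons_isPath_iff _ _).1 hWpath').2
      obtain ⟨b, hb, q2, he2⟩ := getSecond q hne01.symm
      rcases S.nbr (k := 1) (by omega) (by omega) hb with hb' | hb'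
      · have hb0 : b = v 0 := by simpa using hb'
        obtain ⟨h10, eq1⟩ := path_second_eq_end he2 hWpath'.of_cons hb0
        have hWed : W.edges = [s(v 2, v 1), s(v 1, v 0)] := by
          rw [hWe, Walk.edges_cons, eq1]; simp
        rw [hWed] at hWrb
        simp only [List.map_cons, List.map_nil, List.nodup_cons, List.mem_cons,
          List.not_mem_nil, or_false, List.mem_singleton, List.nodup_nil,
          not_false_eq_true, and_true] at hWrb
        intro hcc
        apply hWrb
        rw [show s(v 2, v 1) = s(v 1, v 2) from Sym2.eq_swap,
          show s(v 1, v 0) = s(v 0, v 1) from Sym2.eq_swap]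
        exact hcc.symm
      · exfalso
        have hb2 : b = v 2 := by simpa using hb'
        subst hb2
        exact hv2not (second_mem he2)
    -- assembly
    have hsplit : List.range' 1 (r-1-1) = 1 :: List.range' 2 (r-1-2) := by
      rw [show r-1-1 = (r-1-2) + 1 by omega, List.range'_succ]
    rw [hsplit] at step1
    simp only [List.map_cons, List.cons_append] at step1
    rw [show v (1+1) = v 2 from congrArg v (by norm_num)] at step1
    have hbig : (col s(v 0, v 1) :: col s(v 1, v 2) ::
        ((List.range' 2 (r-1-2)).map (fun i => s(v i, v (i+1)))
          ++ [s(v (r-1), v 0)]).map col).Nodup := by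
      rw [List.nodup_cons]
      refine ⟨?_, step1⟩
      intro hmem
      rcases List.mem_cons.1 hmem with h | h
      · exact step3 h
      · exact step2 _ h rfl
    have hlen := hbig.length_le_card
    simp only [List.length_cons, List.length_map, List.length_append,
      List.length_range', Fintype.card_fin, List.length_singleton] at hlen
    omega

lemma rc2_lower (S : Setup n r K v G) : r ≤ rc2 G := by
  obtain ⟨N, colN, hcol⟩ := S.colExists
  have hne : {m : ℕ | ∃ col : Sym2 V → Fin m,
      RainbowTwoConnectedColouring G col}.Nonempty := ⟨N, colN, hcol⟩
  rw [rc2]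
  by_contra hcon
  push_neg at hcon
  have hmem := Nat.sInf_mem hne
  obtain ⟨col, hc⟩ := hmem
  have := S.hr
  exact S.noSmallColouring (by omega) col hc

end Setup
end Stmt14


/-- For 3 ≤ r ≤ n − 1, the graph obtained from a complete graph on
a set K of n − r + 2 vertices by attaching an (r−1)-ear v 0, v 1, …, v (r−1)
(with endpoints v 0, v (r−1) ∈ K) is 2-connected, has C(n−r+2, 2) + (r−1) edges,
and satisfies rc₂ ≥ r; consequently s₂(n,r) ≥ C(n−r+2, 2) + (r−1). -/
theorem stmt14 (n r : ℕ) (hr : 3 ≤ r) (hrn : r ≤ n - 1)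
    {V : Type*} [Fintype V] (hcard : Fintype.card V = n)
    (K : Set V) (hK : K.ncard = n - r + 2)
    (v : ℕ → V)
    (hvinj : ∀ i j, i ≤ r - 1 → j ≤ r - 1 → v i = v j → i = j)
    (hv0 : v 0 ∈ K) (hvlast : v (r - 1) ∈ K)
    (hvint : ∀ i, 0 < i → i < r - 1 → v i ∉ K)
    (G : SimpleGraph V)
    (hadj : ∀ a b : V, G.Adj a b ↔
      ((a ∈ K ∧ b ∈ K ∧ a ≠ b) ∨
       ∃ i, i + 1 ≤ r - 1 ∧ ({a, b} : Set V) = {v i, v (i + 1)})) :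
    TwoConnected G ∧ G.edgeSet.ncard = Nat.choose (n - r + 2) 2 + (r - 1) ∧
      r ≤ rc2 G ∧ Nat.choose (n - r + 2) 2 + (r - 1) ≤ s2 n r := by
  have S : Stmt14.Setup n r K v G := ⟨hr, hrn, hcard, hK, hvinj, hv0, hvlast, hvint, hadj⟩
  have hn : r + 1 ≤ n := S.hn
  refine ⟨S.twoConnected, S.edgeCount, S.rc2_lower, ?_⟩
  -- a concrete copy of the same graph on `Fin n`
  classical
  have hf : ∀ i : ℕ, (if i = 0 then 0 else if i = r - 1 then 1 else
      if i < r - 1 then n - r + 1 + i else 0) < n := by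
    intro i
    split_ifs <;> omega
  set v' : ℕ → Fin n := fun i => ⟨_, hf i⟩ with hv'def
  set K' : Set (Fin n) := {x | (x : ℕ) < n - r + 2} with hK'def
  set G' : SimpleGraph (Fin n) :=
    { Adj := fun a b => (a ∈ K' ∧ b ∈ K' ∧ a ≠ b) ∨
        ∃ i, i + 1 ≤ r - 1 ∧ ({a, b} : Set (Fin n)) = {v' i, v' (i + 1)}
      symm := by
        refine ⟨?_⟩
        rintro a b (⟨ha, hb, hab⟩ | ⟨i, hi, hset⟩)
        · exact Or.inl ⟨hb, ha, hab.symm⟩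
        · exact Or.inr ⟨i, hi, by rw [Set.pair_comm b a]; exact hset⟩
      loopless := by
        have hvinj' : ∀ i j, i ≤ r - 1 → j ≤ r - 1 → v' i = v' j → i = j := by
          intro i j hi hj h
          have hval := congrArg Fin.val h
          simp only [hv'def] at hval
          split_ifs at hval <;> omega
        refine ⟨?_⟩
        rintro a (⟨_, _, hne⟩ | ⟨i, hi, hset⟩)
        · exact hne rfl
        · have h1 : v' i ∈ ({a, a} : Set (Fin n)) := by rw [hset]; left; rfl
          have h2 : v' (i+1) ∈ ({a, a} : Set (Fin n)) := by rw [hset]; right; rfl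
          simp only [Set.mem_insert_iff, Set.mem_singleton_iff, or_self] at h1 h2
          have := hvinj' i (i+1) (by omega) (by omega) (h1.trans h2.symm)
          omega } with hG'def
  have hvinj' : ∀ i j, i ≤ r - 1 → j ≤ r - 1 → v' i = v' j → i = j := by
    intro i j hi hj h
    have hval := congrArg Fin.val h
    simp only [hv'def] at hval
    split_ifs at hval <;> omega
  have hv0' : v' 0 ∈ K' := by
    simp only [hv'def, hK'def, Set.mem_setOf_eq]
    split_ifs <;> omega
  have hvlast' : v' (r-1) ∈ K' := by
    simp only [hv'def, hK'def, Set.mem_setOf_eq]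
    split_ifs <;> omega
  have hvint' : ∀ i, 0 < i → i < r - 1 → v' i ∉ K' := by
    intro i hi0 hir
    simp only [hv'def, hK'def, Set.mem_setOf_eq]
    split_ifs <;> omega
  have hKcard : K'.ncard = n - r + 2 := by
    have hle : n - r + 2 ≤ n := by omega
    have himg : K' = (Fin.castLE hle) '' Set.univ := by
      ext x
      simp only [hK'def, Set.mem_setOf_eq, Set.mem_image, Set.mem_univ, true_and]
      constructor
      · intro hx
        exact ⟨⟨x.val, hx⟩, by ext; simp⟩
      · rintro ⟨y, rfl⟩
        exact y.isLt
    rw [himg, Set.ncard_image_of_injective _ (Fin.castLE_injective hle),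
      Set.ncard_univ, Nat.card_eq_fintype_card, Fintype.card_fin]
  have S' : Stmt14.Setup n r K' v' G' :=
    ⟨hr, hrn, by simp, hKcard, hvinj', hv0', hvlast', hvint', fun a b => Iff.rfl⟩
  have hmem : Nat.choose (n - r + 2) 2 + (r - 1) ∈
      {m : ℕ | ∃ G'' : SimpleGraph (Fin n), TwoConnected G'' ∧ r ≤ rc2 G'' ∧
        G''.edgeSet.ncard = m} :=
    ⟨G', S'.twoConnected, S'.rc2_lower, S'.edgeCount⟩
  have hbdd : BddAbove {m : ℕ | ∃ G'' : SimpleGraph (Fin n), TwoConnected G'' ∧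
      r ≤ rc2 G'' ∧ G''.edgeSet.ncard = m} := by
    refine ⟨Nat.choose n 2, ?_⟩
    rintro m ⟨G'', _, _, rfl⟩
    have hsub : G''.edgeSet ⊆ {e : Sym2 (Fin n) | ¬ e.IsDiag} := by
      intro e he
      induction e using Sym2.ind with
      | _ a b =>
          rw [SimpleGraph.mem_edgeSet] at he
          exact fun hd => he.ne (Sym2.mk_isDiag_iff.1 hd)
    have h1 := Set.ncard_le_ncard hsub (Set.toFinite _)
    have h2 : ({e : Sym2 (Fin n) | ¬ e.IsDiag}).ncard = Nat.choose n 2 := by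
      rw [← Nat.card_coe_set_eq, Nat.card_eq_fintype_card]
      have h3 : Fintype.card ↑{e : Sym2 (Fin n) | ¬ e.IsDiag}
          = Fintype.card {e : Sym2 (Fin n) // ¬ e.IsDiag} :=
        Fintype.card_congr (Equiv.subtypeEquivRight (fun _ => Iff.rfl))
      rw [h3, Sym2.card_subtype_not_diag, Fintype.card_fin]
    omega
  exact le_csSup hbdd hmem
end

section
/- Let n ≥ 6 and n/2 + 2 ≤ r ≤ n − 1, and let G be the graph on n vertices obtained from the complete graph K_{n−r+3} by deleting one edge v₀v_{r−2} and then attaching an (r−2)-ear at v₀ and v_{r−2}. Then G is 2-connected, |E(G)| = C(n−r+3, 2) + r − 3, and rc₂(G) ≥ r. Consequently s₂(n,r) ≥ C(n−r+3, 2) + r − 3. -/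
open SimpleGraph

set_option linter.unusedSectionVars false
set_option maxHeartbeats 1000000

lemma walk_cons_of_ne {W : Type*} {G : SimpleGraph W} {x y : W} (q : G.Walk x y) (h : x ≠ y) :
    ∃ (b : W) (ha : G.Adj x b) (q' : G.Walk b y), q = Walk.cons ha q' := by
  cases q with
  | nil => exact absurd rfl h
  | cons ha q' => exact ⟨_, ha, q', rfl⟩

lemma path_loop_len {W : Type*} {G : SimpleGraph W} {u : W} (p : G.Walk u u) (hp : p.IsPath) :
    p.length = 0 := by
  cases p with
  | nil => rfl
  | cons ha q' =>
    rw [Walk.cons_isPath_iff] at hp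
    exact absurd q'.end_mem_support hp.2



lemma run_lemma {W : Type*} {G : SimpleGraph W} (u : ℕ → W) (L : ℕ)
    (hnbr : ∀ j b, 1 ≤ j → j < L → (G.Adj (u j) b ↔ (b = u (j-1) ∨ b = u (j+1))))
    (hinj : ∀ a b, a ≤ L → b ≤ L → u a = u b → a = b) :
    ∀ d j (y : W) (q : G.Walk (u j) y), q.IsPath → 1 ≤ j → j + d = L →
    u (j-1) ∉ q.support → (∀ m, j ≤ m → m ≤ L → y ≠ u m) →
    ∃ T : G.Walk (u L) y, T.IsPath ∧
      q.length = d + T.length ∧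
      (∀ e ∈ T.edges, e ∈ q.edges) ∧ (∀ x ∈ T.support, x ∈ q.support) ∧
      (∀ m, j - 1 ≤ m → m < L → u m ∉ T.support) ∧
      (∀ m, j ≤ m → m < L → s(u m, u (m+1)) ∈ q.edges) := by
  intro d
  induction d with
  | zero =>
    intro j y q hq hj hjL hprev hy
    obtain rfl : j = L := by omega
    refine ⟨q, hq, by omega, fun e he => he, fun x hx => hx, ?_, by omega⟩
    intro m hm1 hm2
    have hm : m = j - 1 := by omega
    subst hm
    exact hprev
  | succ d ih =>
    intro j y q hq hj hjL hprev hy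
    cases q with
    | nil => exact absurd rfl (hy j le_rfl (by omega))
    | @cons _ b _ h q' =>
      rcases (hnbr j b hj (by omega)).mp h with hb | hb
      · exfalso
        apply hprev
        rw [Walk.support_cons]
        exact List.mem_cons_of_mem _ (hb ▸ q'.start_mem_support)
      · subst hb
        rw [Walk.cons_isPath_iff] at hq
        obtain ⟨T, hT, hlen, hedges, hsupp, havoid, hear⟩ :=
          ih (j+1) y q' hq.1 (by omega) (by omega)
            (by simpa using hq.2)
            (fun m hm1 hm2 => hy m (by omega) hm2)
        refine ⟨T, hT, ?_, ?_, ?_, ?_, ?_⟩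
        · rw [Walk.length_cons]; omega
        · intro e he
          rw [Walk.edges_cons]
          exact List.mem_cons_of_mem _ (hedges e he)
        · intro x hx
          rw [Walk.support_cons]
          exact List.mem_cons_of_mem _ (hsupp x hx)
        · intro m hm1 hm2
          rcases Nat.lt_or_ge m j with hmj | hmj
          · have : m = j - 1 := by omega
            subst this
            intro hmem
            exact hprev (by
              rw [Walk.support_cons]
              exact List.mem_cons_of_mem _ (hsupp _ hmem))
          · exact havoid m (by omega) hm2
        · intro m hm1 hm2
          rcases Nat.eq_or_lt_of_le hm1 with hmj | hmj
          · subst hmj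
            rw [Walk.edges_cons]
            exact List.mem_cons_self
          · rw [Walk.edges_cons]
            exact List.mem_cons_of_mem _ (hear m (by omega) hm2)

lemma reach_induce {W : Type*} {G : SimpleGraph W} (s : Set W) :
    ∀ {x y : W} (p : G.Walk x y) (hp : ∀ z ∈ p.support, z ∈ s),
    (G.induce s).Reachable ⟨x, hp x p.start_mem_support⟩ ⟨y, hp y p.end_mem_support⟩ := by
  intro x y p
  induction p with
  | nil => intro hp; rfl
  | @cons x b y h p ih =>
    intro hp
    have hx : x ∈ s := hp x (by simp [Walk.support_cons])
    have hb : b ∈ s := hp b (by simp [Walk.support_cons, p.start_mem_support])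
    have hstep : (G.induce s).Adj ⟨x, hx⟩ ⟨b, hb⟩ := by
      simp only [comap_adj, Function.Embedding.coe_subtype]
      exact h
    exact (hstep.reachable).trans
      (ih (fun z hz => hp z (by simp [Walk.support_cons, hz])))

lemma isPath_append_aux {W : Type*} {G : SimpleGraph W} {a b c : W}
    {p : G.Walk a b} {q : G.Walk b c} (hp : p.IsPath) (hq : q.IsPath)
    (h : ∀ x, x ∈ p.support → x ∈ q.support → x = b) : (p.append q).IsPath := by
  rw [Walk.isPath_def, Walk.support_append, List.nodup_append]
  refine ⟨hp.support_nodup, ?_, ?_⟩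
  · have := hq.support_nodup
    rw [q.support_eq_cons] at this
    exact this.of_cons
  · intro x hxp y hxq hxy
    subst hxy
    have hxq' : x ∈ q.support := by
      rw [q.support_eq_cons]; exact List.mem_cons_of_mem _ hxq
    have hb : x = b := h x hxp hxq'
    subst hb
    have := hq.support_nodup
    rw [q.support_eq_cons] at this
    exact (List.nodup_cons.mp this).1 hxq


section Main
variable {W : Type*} [Fintype W] {n r : ℕ}
  (hn : 6 ≤ n) (hr : n + 4 ≤ 2 * r) (hrn : r ≤ n - 1)
  (hcard : Fintype.card W = n)
  {K : Set W} (hK : K.ncard = n - r + 3)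
  {v : ℕ → W}
  (hvinj : ∀ i j, i ≤ r - 2 → j ≤ r - 2 → v i = v j → i = j)
  (hv0 : v 0 ∈ K) (hvlast : v (r - 2) ∈ K)
  (hvint : ∀ i, 0 < i → i < r - 2 → v i ∉ K)
  {G : SimpleGraph W}
  (hadj : ∀ a b : W, G.Adj a b ↔
      ((a ∈ K ∧ b ∈ K ∧ a ≠ b ∧ ({a, b} : Set W) ≠ {v 0, v (r - 2)}) ∨
       ∃ i, i + 1 ≤ r - 2 ∧ ({a, b} : Set W) = {v i, v (i + 1)}))


include hn hr hrn in
lemma hr5 : 5 ≤ r := by omega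

include hn hr hrn hvinj in
lemma vne {i j : ℕ} (hi : i ≤ r - 2) (hj : j ≤ r - 2) (hij : i ≠ j) : v i ≠ v j :=
  fun h => hij (hvinj i j hi hj h)

include hn hr hrn hvinj hadj in
lemma adjEar {i : ℕ} (hi : i + 1 ≤ r - 2) : G.Adj (v i) (v (i + 1)) := by
  rw [hadj]
  exact Or.inr ⟨i, hi, rfl⟩

include hadj in
lemma adjK {a b : W} (ha : a ∈ K) (hb : b ∈ K) (hab : a ≠ b)
    (hF : ({a, b} : Set W) ≠ {v 0, v (r - 2)}) : G.Adj a b := by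
  rw [hadj]; exact Or.inl ⟨ha, hb, hab, hF⟩

include hn hr hrn hvinj hadj in
lemma nonadj0 : ¬ G.Adj (v 0) (v (r - 2)) := by
  rw [hadj]
  rintro (⟨-, -, -, h⟩ | ⟨i, hi, h⟩)
  · exact h rfl
  · rw [Set.pair_eq_pair_iff] at h
    rcases h with ⟨h1, h2⟩ | ⟨h1, h2⟩
    · have := hvinj 0 i (by omega) (by omega) h1
      have := hvinj (r-2) (i+1) (by omega) hi h2
      omega
    · have := hvinj 0 (i+1) (by omega) hi h1
      omega

include hn hr hrn hvinj hvint hadj in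
lemma nbr {k : ℕ} (hk1 : 1 ≤ k) (hk2 : k ≤ r - 3) (b : W) :
    G.Adj (v k) b ↔ (b = v (k - 1) ∨ b = v (k + 1)) := by
  have hkr : k < r - 2 := by omega
  constructor
  · rw [hadj]
    rintro (⟨hK1, -⟩ | ⟨i, hi, h⟩)
    · exact absurd hK1 (hvint k hk1 hkr)
    · rw [Set.pair_eq_pair_iff] at h
      rcases h with ⟨h1, h2⟩ | ⟨h1, h2⟩
      · have : k = i := hvinj k i (by omega) (by omega) h1
        right; rw [this]; exact h2
      · have : k = i + 1 := hvinj k (i+1) (by omega) hi h1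
        left
        have : k - 1 = i := by omega
        rw [this]; exact h2.symm ▸ h2
  · rintro (rfl | rfl)
    · have h := adjEar hn hr hrn hvinj hadj (i := k - 1) (by omega)
      have : k - 1 + 1 = k := by omega
      rw [this] at h
      exact h.symm
    · exact adjEar hn hr hrn hvinj hadj (by omega)


include hn hr hrn hcard hK hvinj hv0 hvlast hvint in
lemma coverage : ∀ x : W, x ∈ K ∨ ∃ m, 0 < m ∧ m < r - 2 ∧ x = v m := by
  intro x
  by_contra hx
  push_neg at hx
  obtain ⟨hxK, hxI⟩ := hx
  set I : Set W := v '' ↑(Finset.Ioo 0 (r-2)) with hI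
  have hInc : I.ncard = r - 3 := by
    rw [hI, Set.ncard_image_of_injOn, Set.ncard_coe_finset, Nat.card_Ioo]
    · omega
    · intro i hi j hj hij
      simp only [Finset.coe_Ioo, Set.mem_Ioo] at hi hj
      exact hvinj i j (by omega) (by omega) hij
  have hdisj : Disjoint K I := by
    rw [Set.disjoint_left]
    rintro a haK ⟨m, hm, rfl⟩
    simp only [Finset.coe_Ioo, Set.mem_Ioo] at hm
    exact hvint m hm.1 hm.2 haK
  have hdisj2 : Disjoint (K ∪ I) {x} := by
    rw [Set.disjoint_right]
    rintro a rfl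
    rintro (h | ⟨m, hm, rfl⟩)
    · exact hxK h
    · simp only [Finset.coe_Ioo, Set.mem_Ioo] at hm
      exact hxI m hm.1 hm.2 rfl
  have h1 : (K ∪ I ∪ {x}).ncard = (n - r + 3) + (r - 3) + 1 := by
    rw [Set.ncard_union_eq hdisj2 (Set.toFinite _) (Set.toFinite _),
      Set.ncard_union_eq hdisj (Set.toFinite _) (Set.toFinite _), hK, hInc,
      Set.ncard_singleton]
  have h2 : (K ∪ I ∪ {x}).ncard ≤ n := by
    have := Set.ncard_le_ncard (Set.subset_univ (K ∪ I ∪ {x})) (Set.toFinite _)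
    rwa [Set.ncard_univ, Nat.card_eq_fintype_card, hcard] at this
  omega

include hn hr hrn hcard hK hvinj hv0 hvlast hvint hadj in
lemma earWalk : ∀ d k, k + d ≤ r - 2 → ∃ p : G.Walk (v k) (v (k + d)),
    p.IsPath ∧ p.length = d ∧
    (∀ x, x ∈ p.support ↔ ∃ j, k ≤ j ∧ j ≤ k + d ∧ x = v j) ∧
    (∀ e ∈ p.edges, ∃ j, k ≤ j ∧ j + 1 ≤ k + d ∧ e = s(v j, v (j + 1))) := by
  intro d
  induction d with
  | zero =>
    intro k hk
    refine ⟨Walk.nil, by simp [Walk.isPath_def], by simp, ?_, by simp⟩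
    intro x
    simp only [Walk.support_nil, List.mem_singleton]
    constructor
    · rintro rfl; exact ⟨k, le_rfl, le_rfl, rfl⟩
    · rintro ⟨j, hj1, hj2, rfl⟩
      have : j = k := by omega
      rw [this]
  | succ d ih =>
    intro k hk
    obtain ⟨p', hp', hlen, hsupp, hedg⟩ := ih (k+1) (by omega)
    have hadj1 : G.Adj (v k) (v (k+1)) := by
      rw [hadj]; exact Or.inr ⟨k, by omega, rfl⟩
    have hcast : k + 1 + d = k + (d + 1) := by omega
    refine ⟨(Walk.cons hadj1 p').copy rfl (congrArg v hcast), ?_, ?_, ?_, ?_⟩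
    · rw [Walk.isPath_copy, Walk.cons_isPath_iff]
      refine ⟨hp', ?_⟩
      rw [hsupp]
      rintro ⟨j, hj1, hj2, hj3⟩
      have := hvinj k j (by omega) (by omega) hj3
      omega
    · simp [Walk.length_copy, Walk.length_cons, hlen]
    · intro x
      rw [Walk.support_copy, Walk.support_cons, List.mem_cons, hsupp]
      constructor
      · rintro (rfl | ⟨j, hj1, hj2, rfl⟩)
        · exact ⟨k, le_rfl, by omega, rfl⟩
        · exact ⟨j, by omega, by omega, rfl⟩
      · rintro ⟨j, hj1, hj2, rfl⟩
        rcases Nat.eq_or_lt_of_le hj1 with rfl | hj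
        · exact Or.inl rfl
        · exact Or.inr ⟨j, by omega, by omega, rfl⟩
    · intro e he
      rw [Walk.edges_copy, Walk.edges_cons, List.mem_cons] at he
      rcases he with rfl | he
      · exact ⟨k, le_rfl, by omega, rfl⟩
      · obtain ⟨j, hj1, hj2, rfl⟩ := hedg e he
        exact ⟨j, by omega, by omega, rfl⟩


omit [Fintype W] in
lemma pair_ne_F₂ {a c : W} (hc1 : c ≠ v 0) (hc2 : c ≠ v (r-2)) :
    ({a, c} : Set W) ≠ {v 0, v (r - 2)} := by
  intro hh
  rw [Set.pair_eq_pair_iff] at hh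
  rcases hh with ⟨-, h⟩ | ⟨-, h⟩
  exacts [hc2 h, hc1 h]

omit [Fintype W] in
lemma pair_ne_F₁ {a c : W} (hc1 : a ≠ v 0) (hc2 : a ≠ v (r-2)) :
    ({a, c} : Set W) ≠ {v 0, v (r - 2)} := by
  intro hh
  rw [Set.pair_eq_pair_iff] at hh
  rcases hh with ⟨h, -⟩ | ⟨h, -⟩
  exacts [hc1 h, hc2 h]

include hn hr hrn hK in
lemma pickc3 (x y z : W) : ∃ c, c ∈ K ∧ c ≠ x ∧ c ≠ y ∧ c ≠ z := by
  by_contra hc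
  push_neg at hc
  have hsub : K ⊆ {x, y, z} := by
    intro c hcK
    simp only [Set.mem_insert_iff, Set.mem_singleton_iff]
    by_cases h1 : c = x
    · exact Or.inl h1
    by_cases h2 : c = y
    · exact Or.inr (Or.inl h2)
    exact Or.inr (Or.inr (hc c hcK h1 h2))
  have h1 : K.ncard ≤ ({x, y, z} : Set W).ncard :=
    Set.ncard_le_ncard hsub (Set.toFinite _)
  have h2 : ({x, y, z} : Set W).ncard ≤ 3 := by
    apply le_trans (Set.ncard_insert_le _ _)
    have := Set.ncard_insert_le y ({z} : Set W)
    simp only [Set.ncard_singleton] at this ⊢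
    omega
  omega

include hn hr hrn hcard hK hvinj hv0 hvlast hvint hadj in
lemma earW (k l : ℕ) (hkl : k ≤ l) (hl : l ≤ r - 2) : ∃ p : G.Walk (v k) (v l),
    p.IsPath ∧ p.length = l - k ∧
    (∀ x, x ∈ p.support ↔ ∃ j, k ≤ j ∧ j ≤ l ∧ x = v j) ∧
    (∀ e ∈ p.edges, ∃ j, k ≤ j ∧ j + 1 ≤ l ∧ e = s(v j, v (j + 1))) := by
  obtain ⟨p, h1, h2, h3, h4⟩ := earWalk hn hr hrn hcard hK hvinj hv0 hvlast hvint hadj (l - k) k (by omega)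
  have hcast : k + (l - k) = l := by omega
  refine ⟨p.copy rfl (congrArg v hcast), by rwa [Walk.isPath_copy], by rwa [Walk.length_copy], ?_, ?_⟩
  · intro x
    rw [Walk.support_copy, h3]
    constructor
    · rintro ⟨j, hj1, hj2, rfl⟩; exact ⟨j, hj1, by omega, rfl⟩
    · rintro ⟨j, hj1, hj2, rfl⟩; exact ⟨j, hj1, by omega, rfl⟩
  · intro e he
    rw [Walk.edges_copy] at he
    obtain ⟨j, hj1, hj2, rfl⟩ := h4 e he
    exact ⟨j, hj1, by omega, rfl⟩

omit [Fintype W] in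
lemma twoPathsSwap {a b : W}
    (h : ∃ p q : G.Walk a b, p.IsPath ∧ q.IsPath ∧ p ≠ q ∧
      (∀ w, w ∈ p.support → w ∈ q.support → w = a ∨ w = b)) :
    ∃ p q : G.Walk b a, p.IsPath ∧ q.IsPath ∧ p ≠ q ∧
      (∀ w, w ∈ p.support → w ∈ q.support → w = b ∨ w = a) := by
  obtain ⟨p, q, hp, hq, hpq, hd⟩ := h
  refine ⟨p.reverse, q.reverse, p.isPath_reverse_iff.mpr hp, q.isPath_reverse_iff.mpr hq, ?_, ?_⟩
  · intro he
    apply hpq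
    have := congrArg Walk.reverse he
    rwa [Walk.reverse_reverse, Walk.reverse_reverse] at this
  · intro w hw1 hw2
    rw [Walk.support_reverse, List.mem_reverse] at hw1 hw2
    exact (hd w hw1 hw2).symm


include hn hr hrn hcard hK hvinj hv0 hvlast hvint in
lemma K_ne_ear {c : W} (hcK : c ∈ K) (hc0 : c ≠ v 0) (hcr : c ≠ v (r-2)) :
    ∀ j, j ≤ r - 2 → c ≠ v j := by
  intro j hj h
  rcases Nat.eq_zero_or_pos j with rfl | hj0
  · exact hc0 h
  rcases Nat.lt_or_ge j (r-2) with hjlt | hjge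
  · exact hvint j hj0 hjlt (h ▸ hcK)
  · have : j = r - 2 := by omega
    exact hcr (this ▸ h)

include hn hr hrn hcard hK hvinj hv0 hvlast hvint hadj in
lemma case0R : ∃ p q : G.Walk (v 0) (v (r-2)), p.IsPath ∧ q.IsPath ∧ p ≠ q ∧
    (∀ w, w ∈ p.support → w ∈ q.support → w = v 0 ∨ w = v (r-2)) := by
  obtain ⟨c, hcK, hc0, -, hcr⟩ := pickc3 hn hr hrn hK (v 0) (v 0) (v (r-2))
  have hcear := K_ne_ear hn hr hrn hcard hK hvinj hv0 hvlast hvint hcK hc0 hcr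
  have hvne : v 0 ≠ v (r-2) := vne hn hr hrn hvinj (by omega) le_rfl (by omega)
  have a1 : G.Adj (v 0) c := adjK hadj hv0 hcK (Ne.symm hc0) (pair_ne_F₂ hc0 hcr)
  have a2 : G.Adj c (v (r-2)) := adjK hadj hcK hvlast hcr (pair_ne_F₁ hc0 hcr)
  obtain ⟨q, hqP, hqlen, hqsupp, -⟩ :=
    earW hn hr hrn hcard hK hvinj hv0 hvlast hvint hadj 0 (r-2) (by omega) le_rfl
  refine ⟨Walk.cons a1 (Walk.cons a2 Walk.nil), q, ?_, hqP, ?_, ?_⟩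
  · rw [Walk.cons_isPath_iff, Walk.cons_isPath_iff]
    refine ⟨⟨by simp [Walk.isPath_def], by simp [hcr]⟩, ?_⟩
    intro h
    simp only [Walk.support_cons, Walk.support_nil, List.mem_cons, List.not_mem_nil, or_false] at h
    rcases h with h | h
    · exact hc0 h.symm
    · exact hvne h
  · intro h
    have := congrArg Walk.length h
    simp only [Walk.length_cons, Walk.length_nil, hqlen] at this
    omega
  · intro w hw1 hw2
    rw [hqsupp] at hw2
    obtain ⟨j, -, hj2, rfl⟩ := hw2
    simp only [Walk.support_cons, Walk.support_nil, List.mem_cons, List.not_mem_nil, or_false] at hw1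
    rcases hw1 with h | h | h
    · exact Or.inl h
    · exact absurd h.symm (hcear j hj2)
    · exact Or.inr h

include hn hr hrn hcard hK hvinj hv0 hvlast hvint hadj in
lemma caseIK (m : ℕ) (a : W) (hm1 : 0 < m) (hm2 : m < r - 2) (haK : a ∈ K) :
    ∃ p q : G.Walk (v m) a, p.IsPath ∧ q.IsPath ∧ p ≠ q ∧
    (∀ w, w ∈ p.support → w ∈ q.support → w = v m ∨ w = a) := by
  have hvne : v 0 ≠ v (r-2) := vne hn hr hrn hvinj (by omega) le_rfl (by omega)
  obtain ⟨pl, hplP, hpllen, hplsupp, -⟩ :=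
    earW hn hr hrn hcard hK hvinj hv0 hvlast hvint hadj 0 m (by omega) (by omega)
  obtain ⟨pu, hpuP, hpulen, hpusupp, -⟩ :=
    earW hn hr hrn hcard hK hvinj hv0 hvlast hvint hadj m (r-2) (by omega) le_rfl
  by_cases ha0 : a = v 0
  · subst ha0
    obtain ⟨c, hcK, hc0, -, hcr⟩ := pickc3 hn hr hrn hK (v 0) (v 0) (v (r-2))
    have hcear := K_ne_ear hn hr hrn hcard hK hvinj hv0 hvlast hvint hcK hc0 hcr
    have a1 : G.Adj (v (r-2)) c := adjK hadj hvlast hcK (Ne.symm hcr) (pair_ne_F₂ hc0 hcr)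
    have a2 : G.Adj c (v 0) := adjK hadj hcK hv0 hc0 (pair_ne_F₁ hc0 hcr)
    refine ⟨pl.reverse, pu.append (Walk.cons a1 (Walk.cons a2 Walk.nil)), ?_, ?_, ?_, ?_⟩
    · rwa [Walk.isPath_reverse_iff]
    · apply isPath_append_aux hpuP
      · rw [Walk.cons_isPath_iff, Walk.cons_isPath_iff]
        refine ⟨⟨by simp [Walk.isPath_def], by simp [hc0]⟩, ?_⟩
        intro h
        simp only [Walk.support_cons, Walk.support_nil, List.mem_cons, List.not_mem_nil, or_false] at h
        rcases h with h | h
        · exact hcr h.symm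
        · exact hvne h.symm
      · intro x hx1 hx2
        rw [hpusupp] at hx1
        obtain ⟨j, hj1, hj2, rfl⟩ := hx1
        simp only [Walk.support_cons, Walk.support_nil, List.mem_cons, List.not_mem_nil, or_false] at hx2
        rcases hx2 with h | h | h
        · exact h
        · exact absurd h.symm (hcear j hj2)
        · exact absurd h (vne hn hr hrn hvinj (by omega) (by omega) (by omega))
    · intro h
      have h1 : v (r-2) ∉ pl.reverse.support := by
        rw [Walk.support_reverse, List.mem_reverse, hplsupp]
        rintro ⟨j, -, hj2, hj3⟩
        exact vne hn hr hrn hvinj le_rfl (by omega) (by omega) hj3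
      apply h1
      rw [h, Walk.mem_support_append_iff]
      exact Or.inr (Walk.start_mem_support _)
    · intro w hw1 hw2
      rw [Walk.support_reverse, List.mem_reverse, hplsupp] at hw1
      obtain ⟨j, -, hj2, rfl⟩ := hw1
      rw [Walk.mem_support_append_iff] at hw2
      rcases hw2 with hw2 | hw2
      · rw [hpusupp] at hw2
        obtain ⟨j', hj'1, hj'2, he⟩ := hw2
        have : j = j' := hvinj j j' (by omega) (by omega) he
        have : j = m := by omega
        exact Or.inl (by rw [this])
      · simp only [Walk.support_cons, Walk.support_nil, List.mem_cons, List.not_mem_nil, or_false] at hw2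
        rcases hw2 with h | h | h
        · exact absurd h (vne hn hr hrn hvinj (by omega) le_rfl (by omega))
        · exact absurd h.symm (hcear j (by omega))
        · exact Or.inr h
  · by_cases har : a = v (r-2)
    · subst har
      obtain ⟨c, hcK, hc0, -, hcr⟩ := pickc3 hn hr hrn hK (v 0) (v 0) (v (r-2))
      have hcear := K_ne_ear hn hr hrn hcard hK hvinj hv0 hvlast hvint hcK hc0 hcr
      have a1 : G.Adj (v 0) c := adjK hadj hv0 hcK (Ne.symm hc0) (pair_ne_F₂ hc0 hcr)
      have a2 : G.Adj c (v (r-2)) := adjK hadj hcK hvlast hcr (pair_ne_F₁ hc0 hcr)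
      refine ⟨pu, pl.reverse.append (Walk.cons a1 (Walk.cons a2 Walk.nil)), hpuP, ?_, ?_, ?_⟩
      · apply isPath_append_aux (pl.isPath_reverse_iff.mpr hplP)
        · rw [Walk.cons_isPath_iff, Walk.cons_isPath_iff]
          refine ⟨⟨by simp [Walk.isPath_def], by simp [hcr]⟩, ?_⟩
          intro h
          simp only [Walk.support_cons, Walk.support_nil, List.mem_cons, List.not_mem_nil, or_false] at h
          rcases h with h | h
          · exact hc0 h.symm
          · exact hvne h
        · intro x hx1 hx2
          rw [Walk.support_reverse, List.mem_reverse, hplsupp] at hx1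
          obtain ⟨j, -, hj2, rfl⟩ := hx1
          simp only [Walk.support_cons, Walk.support_nil, List.mem_cons, List.not_mem_nil, or_false] at hx2
          rcases hx2 with h | h | h
          · have : j = 0 := hvinj j 0 (by omega) (by omega) h
            rw [this]
          · exact absurd h.symm (hcear j (by omega))
          · exact absurd h (vne hn hr hrn hvinj (by omega) le_rfl (by omega))
      · intro h
        have h1 : c ∉ pu.support := by
          rw [hpusupp]
          rintro ⟨j, -, hj2, hj3⟩
          exact hcear j hj2 hj3
        apply h1
        rw [h, Walk.mem_support_append_iff]
        right
        simp [Walk.support_cons]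
      · intro w hw1 hw2
        rw [hpusupp] at hw1
        obtain ⟨j, hj1, hj2, rfl⟩ := hw1
        rw [Walk.mem_support_append_iff] at hw2
        rcases hw2 with hw2 | hw2
        · rw [Walk.support_reverse, List.mem_reverse, hplsupp] at hw2
          obtain ⟨j', -, hj'2, he⟩ := hw2
          have : j = j' := hvinj j j' (by omega) (by omega) he
          have hjm : j = m := by omega
          exact Or.inl (by rw [hjm])
        · simp only [Walk.support_cons, Walk.support_nil, List.mem_cons, List.not_mem_nil, or_false] at hw2
          rcases hw2 with h | h | h
          · exact absurd h (vne hn hr hrn hvinj (by omega) (by omega) (by omega))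
          · exact absurd h.symm (hcear j hj2)
          · exact Or.inr h
    · have a1 : G.Adj (v 0) a := adjK hadj hv0 haK (fun h => ha0 h.symm) (pair_ne_F₂ ha0 har)
      have a2 : G.Adj (v (r-2)) a := adjK hadj hvlast haK (fun h => har h.symm) (pair_ne_F₂ ha0 har)
      have haear := K_ne_ear hn hr hrn hcard hK hvinj hv0 hvlast hvint haK ha0 har
      refine ⟨pl.reverse.append (Walk.cons a1 Walk.nil),
        pu.append (Walk.cons a2 Walk.nil), ?_, ?_, ?_, ?_⟩
      · apply isPath_append_aux (pl.isPath_reverse_iff.mpr hplP)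
        · rw [Walk.cons_isPath_iff]
          exact ⟨by simp [Walk.isPath_def], by
            simp only [Walk.support_nil, List.mem_singleton]
            exact fun h => ha0 h.symm⟩
        · intro x hx1 hx2
          rw [Walk.support_reverse, List.mem_reverse, hplsupp] at hx1
          obtain ⟨j, -, hj2, rfl⟩ := hx1
          simp only [Walk.support_cons, Walk.support_nil, List.mem_cons, List.not_mem_nil, or_false] at hx2
          rcases hx2 with h | h
          · have : j = 0 := hvinj j 0 (by omega) (by omega) h
            rw [this]
          · exact absurd h.symm (haear j (by omega))
      · apply isPath_append_aux hpuP
        · rw [Walk.cons_isPath_iff]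
          exact ⟨by simp [Walk.isPath_def], by
            simp only [Walk.support_nil, List.mem_singleton]
            exact fun h => har h.symm⟩
        · intro x hx1 hx2
          rw [hpusupp] at hx1
          obtain ⟨j, hj1, hj2, rfl⟩ := hx1
          simp only [Walk.support_cons, Walk.support_nil, List.mem_cons, List.not_mem_nil, or_false] at hx2
          rcases hx2 with h | h
          · have : j = r - 2 := hvinj j (r-2) (by omega) le_rfl h
            rw [this]
          · exact absurd h.symm (haear j hj2)
      · intro h
        have h1 : v (r-2) ∉ (pl.reverse.append (Walk.cons a1 Walk.nil)).support := by
          rw [Walk.mem_support_append_iff]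
          rintro (hh | hh)
          · rw [Walk.support_reverse, List.mem_reverse, hplsupp] at hh
            obtain ⟨j, -, hj2, hj3⟩ := hh
            exact vne hn hr hrn hvinj le_rfl (by omega) (by omega) hj3
          · simp only [Walk.support_cons, Walk.support_nil, List.mem_cons, List.not_mem_nil, or_false] at hh
            rcases hh with hh | hh
            · exact hvne.symm hh
            · exact har hh.symm
        apply h1
        rw [h, Walk.mem_support_append_iff]
        exact Or.inl (by rw [hpusupp]; exact ⟨r-2, by omega, le_rfl, rfl⟩)
      · intro w hw1 hw2
        rw [Walk.mem_support_append_iff] at hw1 hw2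
        rcases hw1 with hw1 | hw1
        · rw [Walk.support_reverse, List.mem_reverse, hplsupp] at hw1
          obtain ⟨j, -, hj2, rfl⟩ := hw1
          rcases hw2 with hw2 | hw2
          · rw [hpusupp] at hw2
            obtain ⟨j', hj'1, hj'2, he⟩ := hw2
            have : j = j' := hvinj j j' (by omega) (by omega) he
            have hjm : j = m := by omega
            exact Or.inl (by rw [hjm])
          · simp only [Walk.support_cons, Walk.support_nil, List.mem_cons, List.not_mem_nil, or_false] at hw2
            rcases hw2 with h | h
            · exact absurd h (vne hn hr hrn hvinj (by omega) le_rfl (by omega))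
            · exact Or.inr h
        · simp only [Walk.support_cons, Walk.support_nil, List.mem_cons, List.not_mem_nil, or_false] at hw1
          rcases hw1 with rfl | rfl
          · rcases hw2 with hw2 | hw2
            · rw [hpusupp] at hw2
              obtain ⟨j', hj'1, hj'2, he⟩ := hw2
              exact absurd he.symm (vne hn hr hrn hvinj (by omega) (by omega) (by omega))
            · simp only [Walk.support_cons, Walk.support_nil, List.mem_cons, List.not_mem_nil, or_false] at hw2
              rcases hw2 with h | h
              · exact absurd h hvne
              · exact absurd h.symm ha0
          · exact Or.inr rfl

include hn hr hrn hcard hK hvinj hv0 hvlast hvint hadj in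
lemma caseII (m k : ℕ) (hm1 : 0 < m) (hmk : m < k) (hk2 : k < r - 2) :
    ∃ p q : G.Walk (v m) (v k), p.IsPath ∧ q.IsPath ∧ p ≠ q ∧
    (∀ w, w ∈ p.support → w ∈ q.support → w = v m ∨ w = v k) := by
  obtain ⟨c, hcK, hc0, -, hcr⟩ := pickc3 hn hr hrn hK (v 0) (v 0) (v (r-2))
  have hcear := K_ne_ear hn hr hrn hcard hK hvinj hv0 hvlast hvint hcK hc0 hcr
  have a1 : G.Adj (v 0) c := adjK hadj hv0 hcK (Ne.symm hc0) (pair_ne_F₂ hc0 hcr)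
  have a2 : G.Adj c (v (r-2)) := adjK hadj hcK hvlast hcr (pair_ne_F₁ hc0 hcr)
  obtain ⟨pm, hpmP, -, hpmsupp, -⟩ :=
    earW hn hr hrn hcard hK hvinj hv0 hvlast hvint hadj 0 m (by omega) (by omega)
  obtain ⟨pk, hpkP, -, hpksupp, -⟩ :=
    earW hn hr hrn hcard hK hvinj hv0 hvlast hvint hadj m k (by omega) (by omega)
  obtain ⟨pr, hprP, -, hprsupp, -⟩ :=
    earW hn hr hrn hcard hK hvinj hv0 hvlast hvint hadj k (r-2) (by omega) le_rfl
  refine ⟨pk, pm.reverse.append (Walk.cons a1 (Walk.cons a2 pr.reverse)), hpkP, ?_, ?_, ?_⟩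
  · apply isPath_append_aux (pm.isPath_reverse_iff.mpr hpmP)
    · rw [Walk.cons_isPath_iff, Walk.cons_isPath_iff]
      refine ⟨⟨by rwa [Walk.isPath_reverse_iff], ?_⟩, ?_⟩
      · rw [Walk.support_reverse, List.mem_reverse, hprsupp]
        rintro ⟨j, -, hj2, hj3⟩
        exact hcear j hj2 hj3
      · intro h
        rw [Walk.support_cons, List.mem_cons] at h
        rcases h with h | h
        · exact hc0 h.symm
        · rw [Walk.support_reverse, List.mem_reverse, hprsupp] at h
          obtain ⟨j, hj1, hj2, hj3⟩ := h
          exact vne hn hr hrn hvinj (by omega) (by omega) (by omega) hj3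
    · intro x hx1 hx2
      rw [Walk.support_reverse, List.mem_reverse, hpmsupp] at hx1
      obtain ⟨j, -, hj2, rfl⟩ := hx1
      rw [Walk.support_cons, List.mem_cons] at hx2
      rcases hx2 with h | h
      · exact h
      · rw [Walk.support_cons, List.mem_cons] at h
        rcases h with h | h
        · exact absurd h.symm (hcear j (by omega))
        · rw [Walk.support_reverse, List.mem_reverse, hprsupp] at h
          obtain ⟨j', hj'1, hj'2, hj'3⟩ := h
          have := hvinj j j' (by omega) (by omega) hj'3
          omega
  · intro h
    have h1 : c ∉ pk.support := by
      rw [hpksupp]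
      rintro ⟨j, -, hj2, hj3⟩
      exact hcear j (by omega) hj3
    apply h1
    rw [h, Walk.mem_support_append_iff]
    right
    rw [Walk.support_cons, Walk.support_cons]
    exact List.mem_cons_of_mem _ (List.mem_cons_self)
  · intro w hw1 hw2
    rw [hpksupp] at hw1
    obtain ⟨j, hj1, hj2, rfl⟩ := hw1
    rw [Walk.mem_support_append_iff] at hw2
    rcases hw2 with hw2 | hw2
    · rw [Walk.support_reverse, List.mem_reverse, hpmsupp] at hw2
      obtain ⟨j', -, hj'2, he⟩ := hw2
      have : j = j' := hvinj j j' (by omega) (by omega) he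
      have hjm : j = m := by omega
      exact Or.inl (by rw [hjm])
    · rw [Walk.support_cons, List.mem_cons] at hw2
      rcases hw2 with h | h
      · exact absurd h (vne hn hr hrn hvinj (by omega) (by omega) (by omega))
      · rw [Walk.support_cons, List.mem_cons] at h
        rcases h with h | h
        · exact absurd h.symm (hcear j (by omega))
        · rw [Walk.support_reverse, List.mem_reverse, hprsupp] at h
          obtain ⟨j', hj'1, hj'2, he⟩ := h
          have : j = j' := hvinj j j' (by omega) (by omega) he
          have hjk : j = k := by omega
          exact Or.inr (by rw [hjk])

include hn hr hrn hcard hK hvinj hv0 hvlast hvint hadj in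
lemma caseKK (a b : W) (haK : a ∈ K) (hbK : b ∈ K) (hab : a ≠ b)
    (hF : ({a, b} : Set W) ≠ {v 0, v (r-2)}) :
    ∃ p q : G.Walk a b, p.IsPath ∧ q.IsPath ∧ p ≠ q ∧
    (∀ w, w ∈ p.support → w ∈ q.support → w = a ∨ w = b) := by
  have hc : ∃ c, c ∈ K ∧ c ≠ a ∧ c ≠ b ∧ ({a, c} : Set W) ≠ {v 0, v (r-2)} ∧
      ({c, b} : Set W) ≠ {v 0, v (r-2)} := by
    by_cases haF : a = v 0 ∨ a = v (r-2)
    · obtain ⟨c, hcK, h1, h2, h3⟩ := pickc3 hn hr hrn hK b (v 0) (v (r-2))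
      refine ⟨c, hcK, ?_, h1, pair_ne_F₂ h2 h3, pair_ne_F₁ h2 h3⟩
      rcases haF with rfl | rfl
      exacts [h2, h3]
    · by_cases hbF : b = v 0 ∨ b = v (r-2)
      · obtain ⟨c, hcK, h1, h2, h3⟩ := pickc3 hn hr hrn hK a (v 0) (v (r-2))
        refine ⟨c, hcK, h1, ?_, pair_ne_F₂ h2 h3, pair_ne_F₁ h2 h3⟩
        rcases hbF with rfl | rfl
        exacts [h2, h3]
      · push_neg at haF hbF
        exact ⟨v 0, hv0, fun h => haF.1 h.symm, fun h => hbF.1 h.symm,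
          pair_ne_F₁ haF.1 haF.2, pair_ne_F₂ hbF.1 hbF.2⟩
  obtain ⟨c, hcK, hca, hcb, hac, hcb2⟩ := hc
  have a0 : G.Adj a b := adjK hadj haK hbK hab hF
  have a1 : G.Adj a c := adjK hadj haK hcK (Ne.symm hca) hac
  have a2 : G.Adj c b := adjK hadj hcK hbK hcb hcb2
  refine ⟨Walk.cons a0 Walk.nil, Walk.cons a1 (Walk.cons a2 Walk.nil), ?_, ?_, ?_, ?_⟩
  · simp [Walk.isPath_def, hab]
  · rw [Walk.cons_isPath_iff, Walk.cons_isPath_iff]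
    refine ⟨⟨by simp [Walk.isPath_def], by simp [hcb]⟩, ?_⟩
    intro h
    simp only [Walk.support_cons, Walk.support_nil, List.mem_cons, List.not_mem_nil, or_false] at h
    rcases h with h | h
    · exact hca h.symm
    · exact hab h
  · intro h
    have := congrArg Walk.length h
    simp only [Walk.length_cons, Walk.length_nil] at this
    omega
  · intro w hw1 hw2
    simp only [Walk.support_cons, Walk.support_nil, List.mem_cons, List.not_mem_nil, or_false] at hw1
    exact hw1

include hn hr hrn hcard hK hvinj hv0 hvlast hvint hadj in
lemma twoPaths : ∀ a b : W, a ≠ b → ∃ p q : G.Walk a b, p.IsPath ∧ q.IsPath ∧ p ≠ q ∧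
    (∀ w, w ∈ p.support → w ∈ q.support → w = a ∨ w = b) := by
  intro a b hab
  rcases coverage hn hr hrn hcard hK hvinj hv0 hvlast hvint a with haK | ⟨m, hm1, hm2, rfl⟩
  · rcases coverage hn hr hrn hcard hK hvinj hv0 hvlast hvint b with hbK | ⟨k, hk1, hk2, rfl⟩
    · by_cases hF : ({a, b} : Set W) = {v 0, v (r-2)}
      · rw [Set.pair_eq_pair_iff] at hF
        rcases hF with ⟨rfl, rfl⟩ | ⟨rfl, rfl⟩
        · exact case0R hn hr hrn hcard hK hvinj hv0 hvlast hvint hadj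
        · exact twoPathsSwap (case0R hn hr hrn hcard hK hvinj hv0 hvlast hvint hadj)
      · exact caseKK hn hr hrn hcard hK hvinj hv0 hvlast hvint hadj a b haK hbK hab hF
    · exact twoPathsSwap (caseIK hn hr hrn hcard hK hvinj hv0 hvlast hvint hadj k a hk1 hk2 haK)
  · rcases coverage hn hr hrn hcard hK hvinj hv0 hvlast hvint b with hbK | ⟨k, hk1, hk2, rfl⟩
    · exact caseIK hn hr hrn hcard hK hvinj hv0 hvlast hvint hadj m b hm1 hm2 hbK
    · rcases Nat.lt_or_ge m k with h | h
      · exact caseII hn hr hrn hcard hK hvinj hv0 hvlast hvint hadj m k hm1 h hk2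
      · have hmk : m ≠ k := fun he => hab (by rw [he])
        exact twoPathsSwap (caseII hn hr hrn hcard hK hvinj hv0 hvlast hvint hadj k m hk1 (by omega) hm2)

include hn hr hrn hcard hK hvinj hv0 hvlast hvint hadj in
lemma twoconn : TwoConnected G := by
  constructor
  · rw [hcard]; omega
  · intro w
    rw [connected_iff]
    constructor
    · rintro ⟨x, hx⟩ ⟨y, hy⟩
      by_cases hxy : x = y
      · subst hxy
        rfl
      · obtain ⟨p, q, hp, hq, hpq, hd⟩ :=
          twoPaths hn hr hrn hcard hK hvinj hv0 hvlast hvint hadj x y hxy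
        have hx' : x ≠ w := by simpa using hx
        have hy' : y ≠ w := by simpa using hy
        have hone : (w ∉ p.support) ∨ (w ∉ q.support) := by
          by_contra hc
          push_neg at hc
          rcases hd w hc.1 hc.2 with h | h
          · exact hx' h.symm
          · exact hy' h.symm
        rcases hone with h | h
        · exact reach_induce ({w}ᶜ : Set W) p
            (fun z hz => by simp; rintro rfl; exact h hz)
        · exact reach_induce ({w}ᶜ : Set W) q
            (fun z hz => by simp; rintro rfl; exact h hz)
    · obtain ⟨z, hz⟩ := Fintype.exists_ne_of_one_lt_card (by omega : 1 < Fintype.card W) w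
      exact ⟨⟨z, by simpa using hz⟩⟩

include hn hr hrn hcard hK hvinj hv0 hvlast hvint hadj in
lemma colouring_exists :
    ∃ (R : ℕ) (col : Sym2 W → Fin R), RainbowTwoConnectedColouring G col := by
  classical
  refine ⟨Fintype.card (Sym2 W), fun e => Fintype.equivFin (Sym2 W) e, ?_⟩
  intro a b hab
  obtain ⟨p, q, hp, hq, hpq, hd⟩ :=
    twoPaths hn hr hrn hcard hK hvinj hv0 hvlast hvint hadj a b hab
  refine ⟨p, q, hp, hq, hpq, ?_, ?_, hd⟩
  · exact (List.nodup_map_iff (Fintype.equivFin (Sym2 W)).injective).mpr hp.edges_nodup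
  · exact (List.nodup_map_iff (Fintype.equivFin (Sym2 W)).injective).mpr hq.edges_nodup

include hn hr hrn hcard hK hvinj hv0 hvlast hvint hadj in
lemma edgecount : G.edgeSet.ncard = Nat.choose (n - r + 3) 2 + (r - 3) := by
  classical
  have hvne : v 0 ≠ v (r-2) := vne hn hr hrn hvinj (by omega) le_rfl (by omega)
  set f : Sym2 ↥K → Sym2 W := Sym2.map (Subtype.val) with hf
  have hfinj : Function.Injective f := Sym2.map.injective Subtype.val_injective
  set EK : Set (Sym2 W) := f '' (⊤ : SimpleGraph ↥K).edgeSet with hEK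
  set EE : Set (Sym2 W) := (fun i => s(v i, v (i+1))) '' ↑(Finset.range (r-2)) with hEE
  have hKmem : ∀ e ∈ EK, ∀ x ∈ e, x ∈ K := by
    rintro e ⟨e', -, rfl⟩ x hx
    induction e' using Sym2.ind with
    | _ a b =>
      rw [hf, Sym2.map_pair_eq, Sym2.mem_iff] at hx
      rcases hx with rfl | rfl
      exacts [a.2, b.2]
  have hsplit : G.edgeSet = (EK \ {s(v 0, v (r-2))}) ∪ EE := by
    ext e
    induction e using Sym2.ind with
    | _ a b =>
      rw [mem_edgeSet, hadj]
      constructor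
      · rintro (⟨ha, hb, hab, hF⟩ | ⟨i, hi, hpair⟩)
        · left
          refine ⟨⟨s(⟨a, ha⟩, ⟨b, hb⟩), ?_, by rw [hf, Sym2.map_pair_eq]⟩, ?_⟩
          · rw [mem_edgeSet, top_adj]
            exact fun h => hab (congrArg Subtype.val h)
          · intro hmem
            rw [Set.mem_singleton_iff, Sym2.eq_iff] at hmem
            apply hF
            rcases hmem with ⟨rfl, rfl⟩ | ⟨rfl, rfl⟩
            · rfl
            · exact Set.pair_comm _ _
        · right
          rw [Set.pair_eq_pair_iff] at hpair
          refine ⟨i, by simp only [Finset.coe_range, Set.mem_Iio]; omega, ?_⟩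
          rcases hpair with ⟨rfl, rfl⟩ | ⟨rfl, rfl⟩
          · rfl
          · exact Sym2.eq_swap
      · rintro (⟨⟨e', he', heq⟩, hne⟩ | ⟨i, hi, hpair⟩)
        · induction e' using Sym2.ind with
          | _ x y =>
            rw [mem_edgeSet, top_adj] at he'
            rw [hf, Sym2.map_pair_eq, Sym2.eq_iff] at heq
            left
            rcases heq with ⟨h1, h2⟩ | ⟨h1, h2⟩
            · subst h1; subst h2
              refine ⟨x.2, y.2, fun h => he' (Subtype.ext h), ?_⟩
              intro hF
              rw [Set.pair_eq_pair_iff] at hF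
              apply hne
              rw [Set.mem_singleton_iff, Sym2.eq_iff]
              tauto
            · subst h1; subst h2
              refine ⟨y.2, x.2, fun h => he' (Subtype.ext h.symm), ?_⟩
              intro hF
              rw [Set.pair_eq_pair_iff] at hF
              apply hne
              rw [Set.mem_singleton_iff, Sym2.eq_iff]
              tauto
        · simp only [Finset.coe_range, Set.mem_Iio] at hi
          rw [Sym2.eq_iff] at hpair
          right
          refine ⟨i, by omega, ?_⟩
          rcases hpair with ⟨rfl, rfl⟩ | ⟨rfl, rfl⟩
          · rfl
          · exact Set.pair_comm _ _
  have hEKcard : EK.ncard = Nat.choose (n - r + 3) 2 := by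
    rw [hEK, Set.ncard_image_of_injective _ hfinj]
    haveI : Fintype ↥K := (Set.toFinite K).fintype
    have h1 : (⊤ : SimpleGraph ↥K).edgeSet.ncard = (⊤ : SimpleGraph ↥K).edgeFinset.card := by
      rw [← coe_edgeFinset, Set.ncard_coe_finset]
    rw [h1, card_edgeFinset_top_eq_card_choose_two]
    congr 1
    rw [← Set.toFinset_card, ← Set.ncard_eq_toFinset_card', hK]
  have hF_in : s(v 0, v (r-2)) ∈ EK := by
    refine ⟨s(⟨v 0, hv0⟩, ⟨v (r-2), hvlast⟩), ?_, by rw [hf, Sym2.map_pair_eq]⟩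
    rw [mem_edgeSet, top_adj]
    exact fun h => hvne (congrArg Subtype.val h)
  have hEEcard : EE.ncard = r - 2 := by
    rw [hEE, Set.ncard_image_of_injOn, Set.ncard_coe_finset, Finset.card_range]
    intro i hi j hj hij
    simp only [Finset.coe_range, Set.mem_Iio] at hi hj
    rw [Sym2.eq_iff] at hij
    rcases hij with ⟨h1, h2⟩ | ⟨h1, h2⟩
    · exact hvinj i j (by omega) (by omega) h1
    · have e1 := hvinj i (j+1) (by omega) (by omega) h1
      have e2 := hvinj (i+1) j (by omega) (by omega) h2
      omega
  have hdisj : Disjoint (EK \ {s(v 0, v (r-2))}) EE := by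
    rw [Set.disjoint_left]
    rintro e ⟨heEK, -⟩ ⟨i, hi, rfl⟩
    simp only [Finset.coe_range, Set.mem_Iio] at hi
    rcases Nat.eq_zero_or_pos i with rfl | hi0
    · have h1 : v 1 ∈ K := hKmem _ heEK (v 1) (by rw [Sym2.mem_iff]; right; rfl)
      exact hvint 1 (by omega) (by omega) h1
    · have h1 : v i ∈ K := hKmem _ heEK (v i) (by rw [Sym2.mem_iff]; left; rfl)
      exact hvint i hi0 (by omega) h1
  have hchoose : 1 ≤ Nat.choose (n - r + 3) 2 := Nat.choose_pos (by omega)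
  rw [hsplit, Set.ncard_union_eq hdisj (Set.toFinite _) (Set.toFinite _),
    Set.ncard_diff_singleton_of_mem hF_in, hEKcard, hEEcard]
  omega

include hn hr hrn hcard hK hvinj hv0 hvlast hvint hadj in
lemma structP (i : ℕ) (hi1 : 1 ≤ i) (hi2 : i ≤ r - 2)
    (P : G.Walk (v (i-1)) (v i)) (hP : P.IsPath) (hlen : 2 ≤ P.length) :
    ∃ M : G.Walk (v 0) (v (r-2)), M.IsPath ∧
      (∀ x ∈ M.support, x ∈ K) ∧
      (∀ e ∈ M.edges, e ∈ P.edges) ∧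
      P.length = (r - 3) + M.length ∧
      (∀ j, 1 ≤ j → j ≤ r - 2 → j ≠ i → s(v (j-1), v j) ∈ P.edges) := by
  have hnbrv : ∀ j b, 1 ≤ j → j < r - 2 → (G.Adj (v j) b ↔ (b = v (j-1) ∨ b = v (j+1))) :=
    fun j b h1 h2 => nbr hn hr hrn hvinj hvint hadj h1 (by omega) b
  rcases Nat.lt_or_ge i (r-2) with hiA | hiB
  · -- Case A : i ≤ r-3 ; work from the v i end
    have hQlen : P.reverse.length = P.length := Walk.length_reverse _
    have hQP : P.reverse.IsPath := P.isPath_reverse_iff.mpr hP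
    obtain ⟨b, hab, Q', hQeq⟩ := walk_cons_of_ne P.reverse
      (vne hn hr hrn hvinj hi2 (by omega) (by omega))
    have hQ'P : Q'.IsPath ∧ v i ∉ Q'.support := by
      rw [hQeq, Walk.cons_isPath_iff] at hQP; exact hQP
    have hQL : P.length = Q'.length + 1 := by
      have := congrArg Walk.length hQeq
      rwa [hQlen, Walk.length_cons] at this
    rcases (hnbrv i b hi1 hiA).mp hab with hb | hb
    · exfalso
      subst hb
      have h0 := path_loop_len Q' hQ'P.1
      omega
    · subst hb
      obtain ⟨T, hTP, hTlen, hTedges, hTsupp, hTavoid, hTear⟩ :=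
        run_lemma v (r-2) hnbrv hvinj (r-2-(i+1)) (i+1) (v (i-1)) Q' hQ'P.1
          (by omega) (by omega) (by exact hQ'P.2)
          (fun m hm1 hm2 => vne hn hr hrn hvinj (by omega) hm2 (by omega))
      have hPedge : ∀ e ∈ Q'.edges, e ∈ P.edges := by
        intro e he
        have : e ∈ P.reverse.edges := by
          rw [hQeq, Walk.edges_cons]; exact List.mem_cons_of_mem _ he
        rwa [Walk.edges_reverse, List.mem_reverse] at this
      have hfirst : s(v i, v (i+1)) ∈ P.edges := by
        have : s(v i, v (i+1)) ∈ P.reverse.edges := by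
          rw [hQeq, Walk.edges_cons]; exact List.mem_cons_self
        rwa [Walk.edges_reverse, List.mem_reverse] at this
      have hearHigh : ∀ j, i + 1 ≤ j → j ≤ r - 2 → s(v (j-1), v j) ∈ P.edges := by
        intro j hj1 hj2
        rcases Nat.eq_or_lt_of_le hj1 with rfl | hj1'
        · have hidx : i + 1 - 1 = i := by omega
          rw [hidx]
          exact hfirst
        · have h := hTear (j-1) (by omega) (by omega)
          have hidx : j - 1 + 1 = j := by omega
          rw [hidx] at h
          exact hPedge _ h
      rcases Nat.eq_or_lt_of_le hi1 with hi1' | hi1'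
      · -- i = 1
        obtain rfl : i = 1 := hi1'.symm
        refine ⟨T.reverse, by rwa [Walk.isPath_reverse_iff], ?_, ?_, ?_, ?_⟩
        · intro x hx
          rcases coverage hn hr hrn hcard hK hvinj hv0 hvlast hvint x with hK' | ⟨m, hm1, hm2, rfl⟩
          · exact hK'
          · exfalso
            rw [Walk.support_reverse, List.mem_reverse] at hx
            exact hTavoid m (by omega) (by omega) hx
        · intro e he
          rw [Walk.edges_reverse, List.mem_reverse] at he
          exact hPedge _ (hTedges _ he)
        · rw [Walk.length_reverse]
          omega
        · intro j hj1 hj2 hji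
          exact hearHigh j (by omega) hj2
      · -- 2 ≤ i
        have hT'P : T.reverse.IsPath := T.isPath_reverse_iff.mpr hTP
        obtain ⟨c, hac, T'', hT''eq⟩ := walk_cons_of_ne T.reverse
          (vne hn hr hrn hvinj (by omega) le_rfl (by omega))
        have hT''P : T''.IsPath ∧ v (i-1) ∉ T''.support := by
          rw [hT''eq, Walk.cons_isPath_iff] at hT'P; exact hT'P
        have hT'len : T.length = T''.length + 1 := by
          have := congrArg Walk.length hT''eq
          rwa [Walk.length_reverse, Walk.length_cons] at this
      -- identify c
        rcases (hnbrv (i-1) c (by omega) (by omega)).mp hac with hc | hc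
        swap
        · exfalso
          have hidx : i - 1 + 1 = i := by omega
          rw [hidx] at hc
          subst hc
          have : v i ∈ T.support := by
            have h1 : v i ∈ T.reverse.support := by
              rw [hT''eq, Walk.support_cons]
              exact List.mem_cons_of_mem _ T''.start_mem_support
            rwa [Walk.support_reverse, List.mem_reverse] at h1
          exact hTavoid i (by omega) (by omega) this
        · subst hc
          obtain ⟨M0, hM0P, hM0len, hM0edges, hM0supp, hM0avoid, hM0ear⟩ :=
            run_lemma (fun j => v (i-1-j)) (i-1)
              (by
                intro j b h1 h2
                have hk1 : 1 ≤ i-1-j := by omega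
                rw [nbr hn hr hrn hvinj hvint hadj hk1 (by omega) b]
                constructor
                · rintro (h | h)
                  · exact Or.inr h
                  · left
                    have hidx : i - 1 - j + 1 = i - 1 - (j-1) := by omega
                    rwa [hidx] at h
                · rintro (h | h)
                  · right
                    have hidx : i - 1 - (j-1) = i - 1 - j + 1 := by omega
                    rwa [← hidx]
                  · exact Or.inl h)
              (by
                intro a b ha hb h
                have := hvinj _ _ (by omega) (by omega) h
                omega)
              (i-2) 1 (v (r-2)) T'' hT''P.1 le_rfl (by omega)
              (by exact hT''P.2)
              (fun m hm1 hm2 => vne hn hr hrn hvinj le_rfl (by omega) (by omega))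
          have hT''edge : ∀ e ∈ T''.edges, e ∈ P.edges := by
            intro e he
            have h1 : e ∈ T.reverse.edges := by
              rw [hT''eq, Walk.edges_cons]; exact List.mem_cons_of_mem _ he
            rw [Walk.edges_reverse, List.mem_reverse] at h1
            exact hPedge _ (hTedges _ h1)
          have hT'first : s(v (i-1), v (i-1-1)) ∈ P.edges := by
            have h1 : s(v (i-1), v (i-1-1)) ∈ T.reverse.edges := by
              rw [hT''eq, Walk.edges_cons]; exact List.mem_cons_self
            rw [Walk.edges_reverse, List.mem_reverse] at h1
            exact hPedge _ (hTedges _ h1)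
          refine ⟨M0.copy (congrArg v (by omega : i-1-(i-1) = 0)) rfl, ?_, ?_, ?_, ?_, ?_⟩
          · rwa [Walk.isPath_copy]
          · intro x hx
            rw [Walk.support_copy] at hx
            rcases coverage hn hr hrn hcard hK hvinj hv0 hvlast hvint x with hK' | ⟨m, hm1, hm2, rfl⟩
            · exact hK'
            · exfalso
              rcases Nat.lt_or_ge m i with hmi | hmi
              · have h1 := hM0avoid (i-1-m) (by omega) (by omega)
                have hidx : i - 1 - (i-1-m) = m := by omega
                simp only [hidx] at h1
                exact h1 hx
              · have h1 : v m ∈ T''.support := hM0supp _ hx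
                have h2 : v m ∈ T.support := by
                  have h3 : v m ∈ T.reverse.support := by
                    rw [hT''eq, Walk.support_cons]
                    exact List.mem_cons_of_mem _ h1
                  rwa [Walk.support_reverse, List.mem_reverse] at h3
                exact hTavoid m (by omega) (by omega) h2
          · intro e he
            rw [Walk.edges_copy] at he
            exact hT''edge _ (hM0edges _ he)
          · rw [Walk.length_copy]
            omega
          · intro j hj1 hj2 hji
            rcases Nat.lt_or_ge j i with hji' | hji'
            · -- j ≤ i-1 : descent edges
              rcases Nat.eq_or_lt_of_le (by omega : j ≤ i - 1) with hj' | hj'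
              · -- j = i-1 : first edge of T.reverse
                have : s(v (j-1), v j) = s(v (i-1), v (i-1-1)) := by
                  rw [Sym2.eq_swap]
                  rw [hj']
                rw [this]
                exact hT'first
              · -- j ≤ i-2 : from descent run
                have h := hM0ear (i-1-j) (by omega) (by omega)
                have h1 : s(v (i-1-(i-1-j)), v (i-1-(i-1-j+1))) = s(v (j-1), v j) := by
                  rw [Sym2.eq_swap]
                  have e1 : i-1-(i-1-j) = j := by omega
                  have e2 : i-1-(i-1-j+1) = j - 1 := by omega
                  rw [e1, e2]
                rw [h1] at h
                exact hT''edge _ h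
            · exact hearHigh j (by omega) hj2
  · -- Case B : i = r-2 ; work from the v (i-1) end
    obtain rfl : i = r - 2 := by omega
    obtain ⟨b, hab, P₁, hPeq⟩ := walk_cons_of_ne P
      (vne hn hr hrn hvinj (by omega) le_rfl (by omega))
    have hP₁P : P₁.IsPath ∧ v (r-2-1) ∉ P₁.support := by
      rw [hPeq, Walk.cons_isPath_iff] at hP; exact hP
    have hPL : P.length = P₁.length + 1 := by
      have := congrArg Walk.length hPeq
      rwa [Walk.length_cons] at this
    rcases (hnbrv (r-2-1) b (by omega) (by omega)).mp hab with hb | hb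
    swap
    · exfalso
      have hidx : r - 2 - 1 + 1 = r - 2 := by omega
      rw [hidx] at hb
      subst hb
      have h0 := path_loop_len P₁ hP₁P.1
      omega
    · subst hb
      obtain ⟨M0, hM0P, hM0len, hM0edges, hM0supp, hM0avoid, hM0ear⟩ :=
        run_lemma (fun j => v (r-2-1-j)) (r-2-1)
          (by
            intro j b h1 h2
            have hk1 : 1 ≤ r-2-1-j := by omega
            rw [nbr hn hr hrn hvinj hvint hadj hk1 (by omega) b]
            constructor
            · rintro (h | h)
              · exact Or.inr h
              · left
                have hidx : r - 2 - 1 - j + 1 = r - 2 - 1 - (j-1) := by omega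
                rwa [hidx] at h
            · rintro (h | h)
              · right
                have hidx : r - 2 - 1 - (j-1) = r - 2 - 1 - j + 1 := by omega
                rwa [← hidx]
              · exact Or.inl h)
          (by
            intro a b ha hb h
            have := hvinj _ _ (by omega) (by omega) h
            omega)
          (r-2-2) 1 (v (r-2)) P₁ hP₁P.1 le_rfl (by omega)
          (by exact hP₁P.2)
          (fun m hm1 hm2 => vne hn hr hrn hvinj le_rfl (by omega) (by omega))
      have hP₁edge : ∀ e ∈ P₁.edges, e ∈ P.edges := by
        intro e he
        rw [hPeq, Walk.edges_cons]
        exact List.mem_cons_of_mem _ he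
      have hPfirst : s(v (r-2-1), v (r-2-1-1)) ∈ P.edges := by
        rw [hPeq, Walk.edges_cons]
        exact List.mem_cons_self
      refine ⟨M0.copy (congrArg v (by omega : r-2-1-(r-2-1) = 0)) rfl, ?_, ?_, ?_, ?_, ?_⟩
      · rwa [Walk.isPath_copy]
      · intro x hx
        rw [Walk.support_copy] at hx
        rcases coverage hn hr hrn hcard hK hvinj hv0 hvlast hvint x with hK' | ⟨m, hm1, hm2, rfl⟩
        · exact hK'
        · exfalso
          have h1 := hM0avoid (r-2-1-m) (by omega) (by omega)
          have hidx : r - 2 - 1 - (r-2-1-m) = m := by omega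
          simp only [hidx] at h1
          exact h1 hx
      · intro e he
        rw [Walk.edges_copy] at he
        exact hP₁edge _ (hM0edges _ he)
      · rw [Walk.length_copy]
        omega
      · intro j hj1 hj2 hji
        rcases Nat.eq_or_lt_of_le (by omega : j ≤ r - 2 - 1) with hj' | hj'
        · have : s(v (j-1), v j) = s(v (r-2-1), v (r-2-1-1)) := by
            rw [Sym2.eq_swap]
            rw [hj']
          rw [this]
          exact hPfirst
        · have h := hM0ear (r-2-1-j) (by omega) (by omega)
          have h1 : s(v (r-2-1-(r-2-1-j)), v (r-2-1-(r-2-1-j+1))) = s(v (j-1), v j) := by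
            rw [Sym2.eq_swap]
            have e1 : r-2-1-(r-2-1-j) = j := by omega
            have e2 : r-2-1-(r-2-1-j+1) = j - 1 := by omega
            rw [e1, e2]
          rw [h1] at h
          exact hP₁edge _ h

include hn hr hrn hcard hK hvinj hv0 hvlast hvint hadj in
lemma rc2_ge : r ≤ rc2 G := by
  classical
  obtain ⟨R₀, col₀, hcol₀⟩ := colouring_exists hn hr hrn hcard hK hvinj hv0 hvlast hvint hadj
  unfold rc2
  have hne0 : {R : ℕ | ∃ col : Sym2 W → Fin R, RainbowTwoConnectedColouring G col}.Nonempty :=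
    ⟨R₀, ⟨col₀, hcol₀⟩⟩
  refine le_csInf hne0 ?_
  rintro R ⟨col, hcol⟩
  by_contra hRr
  push_neg at hRr
  have hvne0r : v 0 ≠ v (r-2) := vne hn hr hrn hvinj (by omega) le_rfl (by omega)
  -- Step 1: for each ear edge, a rainbow path of length ≥ 2 between its endpoints
  have hstep : ∀ i, 1 ≤ i → i ≤ r - 2 → ∃ P : G.Walk (v (i-1)) (v i),
      P.IsPath ∧ IsRainbowWalk col P ∧ 2 ≤ P.length := by
    intro i h1 h2
    have hne : v (i-1) ≠ v i := vne hn hr hrn hvinj (by omega) h2 (by omega)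
    obtain ⟨p, q, hp, hq, hpq, hrp, hrq, -⟩ := hcol (v (i-1)) (v i) hne
    by_cases h2p : 2 ≤ p.length
    · exact ⟨p, hp, hrp, h2p⟩
    by_cases h2q : 2 ≤ q.length
    · exact ⟨q, hq, hrq, h2q⟩
    exfalso
    apply hpq
    have hlp : p.length = 1 := by
      rcases Nat.eq_zero_or_pos p.length with h | h
      · exact absurd (Walk.eq_of_length_eq_zero h) hne
      · omega
    have hlq : q.length = 1 := by
      rcases Nat.eq_zero_or_pos q.length with h | h
      · exact absurd (Walk.eq_of_length_eq_zero h) hne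
      · omega
    obtain ⟨b, hb, p', hpeq⟩ := walk_cons_of_ne p hne
    obtain ⟨b', hb', q', hqeq⟩ := walk_cons_of_ne q hne
    have hbl : p'.length = 0 := by
      have := congrArg Walk.length hpeq
      rw [Walk.length_cons] at this; omega
    have hbl' : q'.length = 0 := by
      have := congrArg Walk.length hqeq
      rw [Walk.length_cons] at this; omega
    obtain rfl : b = v i := Walk.eq_of_length_eq_zero hbl
    obtain rfl : b' = v i := Walk.eq_of_length_eq_zero hbl'
    rw [hpeq, hqeq]
    congr 1
    · exact (Walk.length_eq_zero_iff.mp hbl).eq_nil.trans (Walk.length_eq_zero_iff.mp hbl').eq_nil.symm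
  -- Step 2: ear colours are pairwise distinct
  have earcols : ∀ j j', 1 ≤ j → j ≤ r-2 → 1 ≤ j' → j' ≤ r-2 → j ≠ j' →
      col s(v (j-1), v j) ≠ col s(v (j'-1), v j') := by
    intro j j' hj1 hj2 hj'1 hj'2 hjj'
    obtain ⟨i'', h1, h2, h3, h4⟩ : ∃ i'', 1 ≤ i'' ∧ i'' ≤ r - 2 ∧ i'' ≠ j ∧ i'' ≠ j' := by
      by_cases c1 : j ≠ 1 ∧ j' ≠ 1
      · exact ⟨1, le_rfl, by omega, Ne.symm c1.1, Ne.symm c1.2⟩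
      · by_cases c2 : j ≠ 2 ∧ j' ≠ 2
        · exact ⟨2, by omega, by omega, Ne.symm c2.1, Ne.symm c2.2⟩
        · rw [not_and_or, not_ne_iff, not_ne_iff] at c1 c2
          rcases c1 with rfl | rfl <;> rcases c2 with h | h <;>
            exact ⟨3, by omega, by omega, by omega, by omega⟩
    obtain ⟨P, hPp, hPr, hPl⟩ := hstep i'' h1 h2
    obtain ⟨M, -, -, -, -, hear⟩ :=
      structP hn hr hrn hcard hK hvinj hv0 hvlast hvint hadj i'' h1 h2 P hPp hPl
    have hj := hear j hj1 hj2 (Ne.symm h3)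
    have hj' := hear j' hj'1 hj'2 (Ne.symm h4)
    have hedne : s(v (j-1), v j) ≠ s(v (j'-1), v j') := by
      intro h
      rw [Sym2.eq_iff] at h
      rcases h with ⟨e1, e2⟩ | ⟨e1, e2⟩
      · exact hjj' (hvinj _ _ hj2 hj'2 e2)
      · have f1 := hvinj _ _ (by omega) hj'2 e1
        have f2 := hvinj _ _ hj2 (by omega) e2
        omega
    intro hcoleq
    have hPr' : (P.edges.map col).Nodup := hPr
    exact hedne (List.inj_on_of_nodup_map hPr' hj hj' hcoleq)
  -- Step 3: the main per-edge witness
  have hmain : ∀ i, 1 ≤ i → i ≤ r - 2 → ∃ w, w ∈ K ∧ w ≠ v 0 ∧ w ≠ v (r-2) ∧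
      (col s(v (i-1), v i) = col s(v 0, w) ∨ col s(v (i-1), v i) = col s(w, v (r-2))) ∧
      (∀ j, 1 ≤ j → j ≤ r - 2 → j ≠ i →
        col s(v 0, w) ≠ col s(v (j-1), v j) ∧ col s(w, v (r-2)) ≠ col s(v (j-1), v j)) := by
    intro i hi1 hi2
    obtain ⟨P, hPp, hPr, hPl⟩ := hstep i hi1 hi2
    obtain ⟨M, hMp, hMK, hMedge, hMlen, hear⟩ :=
      structP hn hr hrn hcard hK hvinj hv0 hvlast hvint hadj i hi1 hi2 P hPp hPl
    have hPlen : P.length ≤ R := by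
      have h1 : (P.edges.map col).length ≤ R := by
        have := List.Nodup.length_le_card (hPr : (P.edges.map col).Nodup)
        rwa [Fintype.card_fin] at this
      rwa [List.length_map, Walk.length_edges] at h1
    have hM2 : M.length = 2 := by
      have hge : 2 ≤ M.length := by
        by_contra hlt
        push_neg at hlt
        interval_cases h : M.length
        · exact hvne0r (Walk.eq_of_length_eq_zero h)
        · exact nonadj0 hn hr hrn hvinj hadj (Walk.adj_of_length_eq_one h)
      omega
    obtain ⟨w, h1adj, M', hMeq⟩ := walk_cons_of_ne M hvne0r
    have hM'P : M'.IsPath ∧ v 0 ∉ M'.support := by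
      rw [hMeq, Walk.cons_isPath_iff] at hMp; exact hMp
    have hM'len : M'.length = 1 := by
      have := congrArg Walk.length hMeq
      rw [Walk.length_cons] at this; omega
    have hwr : w ≠ v (r-2) := by
      rintro rfl
      have := path_loop_len M' hM'P.1; omega
    obtain ⟨c, h2adj, M'', hM''eq⟩ := walk_cons_of_ne M' hwr
    have hM''len : M''.length = 0 := by
      have := congrArg Walk.length hM''eq
      rw [Walk.length_cons] at this; omega
    obtain rfl : c = v (r-2) := Walk.eq_of_length_eq_zero hM''len
    have hwK : w ∈ K := hMK w (by
      rw [hMeq, Walk.support_cons]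
      exact List.mem_cons_of_mem _ M'.start_mem_support)
    have hw0 : w ≠ v 0 := h1adj.ne'
    have he1 : s(v 0, w) ∈ P.edges := hMedge _ (by
      rw [hMeq, Walk.edges_cons]; exact List.mem_cons_self)
    have he2 : s(w, v (r-2)) ∈ P.edges := hMedge _ (by
      rw [hMeq, Walk.edges_cons]
      refine List.mem_cons_of_mem _ ?_
      rw [hM''eq, Walk.edges_cons]
      exact List.mem_cons_self)
    have hKedge_ne : ∀ j, 1 ≤ j → j ≤ r - 2 →
        s(v 0, w) ≠ s(v (j-1), v j) ∧ s(w, v (r-2)) ≠ s(v (j-1), v j) := by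
      intro j hj1 hj2
      constructor
      · intro h
        rw [Sym2.eq_iff] at h
        rcases h with ⟨e1, e2⟩ | ⟨e1, e2⟩
        · rcases Nat.lt_or_ge j (r-2) with hj | hj
          · exact hvint j (by omega) hj (e2 ▸ hwK)
          · apply hwr
            rw [e2]
            congr 1
            omega
        · exact vne hn hr hrn hvinj (by omega) hj2 (by omega) e1
      · intro h
        rw [Sym2.eq_iff] at h
        rcases h with ⟨e1, e2⟩ | ⟨e1, e2⟩
        · rcases Nat.lt_or_ge 1 j with hj | hj
          · exact hvint (j-1) (by omega) (by omega) (e1 ▸ hwK)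
          · apply hw0
            rw [e1]
            congr 1
            omega
        · exact vne hn hr hrn hvinj le_rfl (by omega) (by omega) e2
    have hcolKear : ∀ j, 1 ≤ j → j ≤ r-2 → j ≠ i →
        col s(v 0, w) ≠ col s(v (j-1), v j) ∧ col s(w, v (r-2)) ≠ col s(v (j-1), v j) := by
      intro j hj1 hj2 hji
      have hje := hear j hj1 hj2 hji
      have hPr' : (P.edges.map col).Nodup := hPr
      exact ⟨fun h => (hKedge_ne j hj1 hj2).1 (List.inj_on_of_nodup_map hPr' he1 hje h),
             fun h => (hKedge_ne j hj1 hj2).2 (List.inj_on_of_nodup_map hPr' he2 hje h)⟩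
    have hR : R = r - 1 := by omega
    have hexh : ∃ f ∈ P.edges, col f = col s(v (i-1), v i) := by
      have hlenm : (P.edges.map col).length = r - 1 := by
        rw [List.length_map, Walk.length_edges]; omega
      have h1 : (P.edges.map col).toFinset = Finset.univ := by
        apply Finset.eq_univ_of_card
        rw [List.toFinset_card_of_nodup (hPr : (P.edges.map col).Nodup), hlenm,
          Fintype.card_fin, hR]
      have h2 : col s(v (i-1), v i) ∈ P.edges.map col := by
        rw [← List.mem_toFinset, h1]; exact Finset.mem_univ _
      obtain ⟨f, hf, hfe⟩ := List.mem_map.mp h2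
      exact ⟨f, hf, hfe⟩
    -- P.edges is exactly the known set
    have hknown : ∀ f ∈ P.edges,
        (∃ j, 1 ≤ j ∧ j ≤ r-2 ∧ j ≠ i ∧ f = s(v (j-1), v j)) ∨
        f = s(v 0, w) ∨ f = s(w, v (r-2)) := by
      intro f hf
      set SF : Finset (Sym2 W) :=
        ((Finset.Icc 1 (r-2)).erase i).image (fun j => s(v (j-1), v j)) ∪
          {s(v 0, w), s(w, v (r-2))} with hSF
      have hSFsub : SF ⊆ P.edges.toFinset := by
        intro e he
        rw [List.mem_toFinset]
        rw [hSF, Finset.mem_union] at he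
        rcases he with he | he
        · obtain ⟨j, hjmem, rfl⟩ := Finset.mem_image.mp he
          rw [Finset.mem_erase, Finset.mem_Icc] at hjmem
          exact hear j hjmem.2.1 hjmem.2.2 hjmem.1
        · rw [Finset.mem_insert, Finset.mem_singleton] at he
          rcases he with rfl | rfl
          exacts [he1, he2]
      have hpairne : s(v 0, w) ≠ s(w, v (r-2)) := by
        intro h
        rw [Sym2.eq_iff] at h
        rcases h with ⟨e1, e2⟩ | ⟨e1, e2⟩
        · exact hwr e2
        · exact hvne0r e1
      have hSFcard : SF.card = r - 1 := by
        rw [hSF, Finset.card_union_of_disjoint, Finset.card_image_of_injOn,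
          Finset.card_erase_of_mem (by rw [Finset.mem_Icc]; omega), Nat.card_Icc]
        · have : ({s(v 0, w), s(w, v (r-2))} : Finset (Sym2 W)).card = 2 := by
            rw [Finset.card_insert_of_notMem (by simpa using hpairne), Finset.card_singleton]
          rw [this]; omega
        · intro a ha b hb hab
          rw [Finset.coe_erase, Set.mem_diff, Finset.coe_Icc, Set.mem_Icc] at ha hb
          rw [Sym2.eq_iff] at hab
          rcases hab with ⟨e1, e2⟩ | ⟨e1, e2⟩
          · exact hvinj _ _ (by omega) (by omega) e2
          · have f1 := hvinj _ _ (by omega) (by omega) e1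
            have f2 := hvinj _ _ (by omega) (by omega) e2
            omega
        · rw [Finset.disjoint_left]
          rintro e he hpe
          obtain ⟨j, hjmem, rfl⟩ := Finset.mem_image.mp he
          rw [Finset.mem_erase, Finset.mem_Icc] at hjmem
          rw [Finset.mem_insert, Finset.mem_singleton] at hpe
          rcases hpe with h | h
          · exact (hKedge_ne j hjmem.2.1 hjmem.2.2).1 h.symm
          · exact (hKedge_ne j hjmem.2.1 hjmem.2.2).2 h.symm
      have hPcard : P.edges.toFinset.card = r - 1 := by
        rw [List.toFinset_card_of_nodup hPp.edges_nodup, Walk.length_edges]; omega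
      have hSFeq : SF = P.edges.toFinset :=
        Finset.eq_of_subset_of_card_le hSFsub (by omega)
      have hf2 : f ∈ SF := by rw [hSFeq, List.mem_toFinset]; exact hf
      rw [hSF, Finset.mem_union] at hf2
      rcases hf2 with h | h
      · obtain ⟨j, hjmem, rfl⟩ := Finset.mem_image.mp h
        rw [Finset.mem_erase, Finset.mem_Icc] at hjmem
        exact Or.inl ⟨j, hjmem.2.1, hjmem.2.2, hjmem.1, rfl⟩
      · rw [Finset.mem_insert, Finset.mem_singleton] at h
        exact Or.inr h
    obtain ⟨f, hf, hfe⟩ := hexh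
    rcases hknown f hf with ⟨j, hj1, hj2, hji, rfl⟩ | rfl | rfl
    · exact absurd hfe (earcols j i hj1 hj2 hi1 hi2 hji)
    · exact ⟨w, hwK, hw0, hwr, Or.inl hfe.symm, hcolKear⟩
    · exact ⟨w, hwK, hw0, hwr, Or.inr hfe.symm, hcolKear⟩
  -- Step 4: counting
  haveI : Inhabited W := ⟨v 0⟩
  choose! wf hw1 hw2 hw3 hw4 hw5 using hmain
  have hinjw : Set.InjOn wf (Finset.Icc 1 (r-2) : Set ℕ) := by
    intro a ha b hb hab
    by_contra hne
    simp only [Finset.coe_Icc, Set.mem_Icc] at ha hb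
    rcases hw4 a ha.1 ha.2 with h | h
    · have h2 := (hw5 b hb.1 hb.2 a ha.1 ha.2 hne).1
      rw [← hab] at h2
      exact h2 h.symm
    · have h2 := (hw5 b hb.1 hb.2 a ha.1 ha.2 hne).2
      rw [← hab] at h2
      exact h2 h.symm
  have hcount : (Finset.Icc 1 (r-2)).card ≤ (K \ {v 0, v (r-2)} : Set W).ncard := by
    have himg : wf '' (Finset.Icc 1 (r-2) : Set ℕ) ⊆ K \ {v 0, v (r-2)} := by
      rintro x ⟨a, ha, rfl⟩
      simp only [Finset.coe_Icc, Set.mem_Icc] at ha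
      refine ⟨hw1 a ha.1 ha.2, ?_⟩
      simp only [Set.mem_insert_iff, Set.mem_singleton_iff]
      push_neg
      exact ⟨hw2 a ha.1 ha.2, hw3 a ha.1 ha.2⟩
    calc (Finset.Icc 1 (r-2)).card
        = ((Finset.Icc 1 (r-2) : Set ℕ) : Set ℕ).ncard := (Set.ncard_coe_finset _).symm
      _ = (wf '' (Finset.Icc 1 (r-2) : Set ℕ)).ncard := (Set.ncard_image_of_injOn hinjw).symm
      _ ≤ _ := Set.ncard_le_ncard himg (Set.toFinite _)
  have hsub2 : ({v 0, v (r-2)} : Set W) ⊆ K := by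
    rintro x (rfl | rfl)
    exacts [hv0, hvlast]
  have hdiffcard : (K \ {v 0, v (r-2)} : Set W).ncard = (n - r + 3) - 2 := by
    rw [Set.ncard_diff hsub2 (Set.toFinite _), hK, Set.ncard_pair hvne0r]
  rw [Nat.card_Icc, hdiffcard] at hcount
  omega

end Main


/-- For n ≥ 6 and n/2 + 2 ≤ r ≤ n − 1, the graph obtained from a
complete graph on a set K of n − r + 3 vertices by deleting the edge
{v 0, v (r−2)} and attaching an (r−2)-ear v 0, v 1, …, v (r−2) at v 0 and
v (r−2) is 2-connected, has C(n−r+3, 2) + (r−3) edges, and satisfies rc₂ ≥ r;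
consequently s₂(n,r) ≥ C(n−r+3, 2) + (r−3). -/
theorem stmt15 (n r : ℕ) (hn : 6 ≤ n) (hr : n + 4 ≤ 2 * r) (hrn : r ≤ n - 1)
    {V : Type*} [Fintype V] (hcard : Fintype.card V = n)
    (K : Set V) (hK : K.ncard = n - r + 3)
    (v : ℕ → V)
    (hvinj : ∀ i j, i ≤ r - 2 → j ≤ r - 2 → v i = v j → i = j)
    (hv0 : v 0 ∈ K) (hvlast : v (r - 2) ∈ K)
    (hvint : ∀ i, 0 < i → i < r - 2 → v i ∉ K)
    (G : SimpleGraph V)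
    (hadj : ∀ a b : V, G.Adj a b ↔
      ((a ∈ K ∧ b ∈ K ∧ a ≠ b ∧ ({a, b} : Set V) ≠ {v 0, v (r - 2)}) ∨
       ∃ i, i + 1 ≤ r - 2 ∧ ({a, b} : Set V) = {v i, v (i + 1)})) :
    TwoConnected G ∧ G.edgeSet.ncard = Nat.choose (n - r + 3) 2 + (r - 3) ∧
      r ≤ rc2 G ∧ Nat.choose (n - r + 3) 2 + (r - 3) ≤ s2 n r := by
  classical
  refine ⟨twoconn hn hr hrn hcard hK hvinj hv0 hvlast hvint hadj,
    edgecount hn hr hrn hcard hK hvinj hv0 hvlast hvint hadj,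
    rc2_ge hn hr hrn hcard hK hvinj hv0 hvlast hvint hadj, ?_⟩
  -- transport to Fin n
  have e : V ≃ Fin n := Fintype.equivFinOfCardEq hcard
  set G' : SimpleGraph (Fin n) := SimpleGraph.map e.toEmbedding G with hG'
  have hGmap : ∀ a b : Fin n, G'.Adj a b ↔ G.Adj (e.symm a) (e.symm b) := by
    intro a b
    rw [hG', SimpleGraph.map_adj]
    constructor
    · rintro ⟨a', b', h, rfl, rfl⟩
      simpa using h
    · intro h
      exact ⟨e.symm a, e.symm b, h, by simp, by simp⟩
  have hpair : ∀ (x y : V) (a b : Fin n),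
      (({a, b} : Set (Fin n)) = {e x, e y}) ↔ (({e.symm a, e.symm b} : Set V) = {x, y}) := by
    intro x y a b
    rw [Set.pair_eq_pair_iff, Set.pair_eq_pair_iff]
    constructor
    · rintro (⟨rfl, rfl⟩ | ⟨rfl, rfl⟩)
      · left; exact ⟨by simp, by simp⟩
      · right; exact ⟨by simp, by simp⟩
    · rintro (⟨h1, h2⟩ | ⟨h1, h2⟩)
      · left; exact ⟨(e.symm_apply_eq).mp h1, (e.symm_apply_eq).mp h2⟩
      · right; exact ⟨(e.symm_apply_eq).mp h1, (e.symm_apply_eq).mp h2⟩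
  have hK' : (e '' K).ncard = n - r + 3 := by
    rw [Set.ncard_image_of_injective _ e.injective, hK]
  have hvinj' : ∀ i j, i ≤ r - 2 → j ≤ r - 2 → e (v i) = e (v j) → i = j :=
    fun i j hi hj h => hvinj i j hi hj (e.injective h)
  have hv0' : e (v 0) ∈ e '' K := Set.mem_image_of_mem _ hv0
  have hvlast' : e (v (r-2)) ∈ e '' K := Set.mem_image_of_mem _ hvlast
  have hvint' : ∀ i, 0 < i → i < r - 2 → e (v i) ∉ e '' K := by
    intro i h1 h2 hmem
    rw [Set.mem_image_equiv, Equiv.symm_apply_apply] at hmem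
    exact hvint i h1 h2 hmem
  have hadj' : ∀ a b : Fin n, G'.Adj a b ↔
      ((a ∈ e '' K ∧ b ∈ e '' K ∧ a ≠ b ∧
        ({a, b} : Set (Fin n)) ≠ {e (v 0), e (v (r - 2))}) ∨
       ∃ i, i + 1 ≤ r - 2 ∧ ({a, b} : Set (Fin n)) = {e (v i), e (v (i + 1))}) := by
    intro a b
    rw [hGmap a b, hadj]
    constructor
    · rintro (⟨h1, h2, h3, h4⟩ | ⟨i, hi, h5⟩)
      · left
        exact ⟨Set.mem_image_equiv.mpr h1, Set.mem_image_equiv.mpr h2,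
          fun hh => h3 (by rw [hh]),
          fun hh => h4 ((hpair _ _ a b).mp hh)⟩
      · exact Or.inr ⟨i, hi, (hpair _ _ a b).mpr h5⟩
    · rintro (⟨h1, h2, h3, h4⟩ | ⟨i, hi, h5⟩)
      · left
        exact ⟨Set.mem_image_equiv.mp h1, Set.mem_image_equiv.mp h2,
          fun hh => h3 (e.symm.injective hh),
          fun hh => h4 ((hpair _ _ a b).mpr hh)⟩
      · exact Or.inr ⟨i, hi, (hpair _ _ a b).mp h5⟩
  have hcard' : Fintype.card (Fin n) = n := Fintype.card_fin n
  have h1' := twoconn hn hr hrn hcard' hK' hvinj' hv0' hvlast' hvint' hadj'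
  have h2' := edgecount hn hr hrn hcard' hK' hvinj' hv0' hvlast' hvint' hadj'
  have h3' := rc2_ge hn hr hrn hcard' hK' hvinj' hv0' hvlast' hvint' hadj'
  unfold s2
  apply le_csSup
  · refine ⟨(Set.univ : Set (Sym2 (Fin n))).ncard, ?_⟩
    rintro m ⟨Gm, -, -, rfl⟩
    exact Set.ncard_le_ncard (Set.subset_univ _) (Set.toFinite _)
  · exact ⟨G', h1', h3', h2'⟩
end
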